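/- arXiv:1810.07819 — 4 statements merged into one kernel-verified Lean document; each statement's English description precedes it below -/
import Mathlib

section
/- The operator Wiener class 𝒜(ℓ²(H)) = {A = (T_{kj}) : Σ_{l∈ℤ} sup_k ‖T_{k,k+l}‖ < ∞} is strictly contained in 𝒞(ℓ²(H)), the closure in B(ℓ²(H)) of matrices with finitely many nonzero diagonals and uniformly bounded entries. In particular, for f ∈ C(𝕋) \ A(𝕋) (continuous but with non-absolutely-convergent Fourier series), the Toeplitz matrix M_f = (f̂(j−k)·Id) belongs to 𝒞(ℓ²(H)) but not to 𝒜(ℓ²(H)). -/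
noncomputable section

/-- The Hilbert space `ℓ²(H)` of square-summable `H`-valued sequences. -/
abbrev ellTwo (H : Type) [NormedAddCommGroup H] [InnerProductSpace ℂ H] : Type :=
  lp (fun _ : ℕ => H) 2

variable {H : Type} [NormedAddCommGroup H] [InnerProductSpace ℂ H] [CompleteSpace H]
  [TopologicalSpace.SeparableSpace H]

/-- A bounded operator `A` on `ℓ²(H)` is represented by the matrix `T = (T_{kj})`
(with `T k j ∈ B(H)`) if `(A (x e_j))_k = T_{kj} x` for all `j, k, x`. -/
def Represents (T : ℕ → ℕ → (H →L[ℂ] H))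
    (A : ellTwo H →L[ℂ] ellTwo H) : Prop :=
  ∀ (j : ℕ) (x : H) (k : ℕ), A (lp.single 2 j x) k = T k j x

/-- A "polynomial" matrix: finitely many nonzero diagonals and uniformly bounded entries. -/
def PolyMat (T : ℕ → ℕ → (H →L[ℂ] H)) : Prop :=
  (∃ N : ℕ, ∀ k j : ℕ, (N : ℤ) < |(j : ℤ) - (k : ℤ)| → T k j = 0) ∧
  (∃ M : ℝ, ∀ k j : ℕ, ‖T k j‖ ≤ M)

/-- The class `𝒞(ℓ²(H))`: the closure in `B(ℓ²(H))` of the operators represented by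
polynomial matrices. -/
def ContinuousClass (A : ellTwo H →L[ℂ] ellTwo H) : Prop :=
  A ∈ closure {B : ellTwo H →L[ℂ] ellTwo H | ∃ T, PolyMat T ∧ Represents T B}

/-- The operator Wiener class condition `Σ_{l∈ℤ} sup_k ‖T_{k,k+l}‖ < ∞` for a matrix. -/
def WienerMat (T : ℕ → ℕ → (H →L[ℂ] H)) : Prop :=
  (∀ l : ℤ, BddAbove {r : ℝ | ∃ k j : ℕ, (j : ℤ) = (k : ℤ) + l ∧ r = ‖T k j‖}) ∧
  Summable fun l : ℤ =>
    sSup {r : ℝ | ∃ k j : ℕ, (j : ℤ) = (k : ℤ) + l ∧ r = ‖T k j‖}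

/-- The `l`-th Fourier coefficient of a `2π`-periodic function `f : ℝ → ℂ`. -/
def scalarFourierCoeff (f : ℝ → ℂ) (l : ℤ) : ℂ :=
  (1 / (2 * Real.pi) : ℂ) *
    ∫ t in (0 : ℝ)..(2 * Real.pi), f t * Complex.exp (-Complex.I * l * t)

open scoped ENNReal
open Topology Filter

set_option linter.unusedSectionVars false

namespace WAux

variable {H : Type} [NormedAddCommGroup H] [InnerProductSpace ℂ H] [CompleteSpace H]

lemma two_pi_pos : 0 < 2 * Real.pi := by positivity

lemma rpow_two (x : ℝ) : x ^ (2:ℝ) = x ^ (2:ℕ) := by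
  rw [← Real.rpow_natCast x 2]; norm_num

lemma single_coe (j : ℕ) (a : H) (k : ℕ) :
    (lp.single 2 j a : ∀ _ : ℕ, H) k = if k = j then a else 0 := by
  rcases eq_or_ne k j with h | h
  · subst h; simp [lp.single_apply_self]
  · rw [lp.single_apply_ne (E := fun _ : ℕ => H) 2 j a h]
    exact (if_neg h).symm

def extZero (x : ℕ → H) (m : ℤ) : H := if 0 ≤ m then x m.toNat else 0

lemma extZero_coe (x : ℕ → H) (j : ℕ) : extZero x (j : ℤ) = x j := by
  simp [extZero]

lemma extZero_add (x y : ℕ → H) (m : ℤ) :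
    extZero (x + y) m = extZero x m + extZero y m := by
  unfold extZero; split <;> simp

lemma extZero_smul (a : ℂ) (x : ℕ → H) (m : ℤ) :
    extZero (a • x) m = a • extZero x m := by
  unfold extZero; split <;> simp

lemma extZero_single (j : ℕ) (a : H) (m : ℤ) :
    extZero (lp.single 2 j a : ∀ _ : ℕ, H) m = if ((j : ℤ) = m) then a else 0 := by
  unfold extZero
  rcases lt_or_ge m 0 with h | h
  · rw [if_neg (not_le.mpr h), if_neg (by omega)]
  · rw [if_pos h, single_coe]
    by_cases hj : m.toNat = j
    · rw [if_pos hj, if_pos (by omega)]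
    · rw [if_neg hj, if_neg (by omega)]

def evalCLM (k : ℕ) : ellTwo H →L[ℂ] H :=
  LinearMap.mkContinuous
    { toFun := fun x => x k
      map_add' := fun x y => rfl
      map_smul' := fun a x => rfl }
    1 (fun x => by
      rw [one_mul]
      exact lp.norm_apply_le_norm (by norm_num) x k)

@[simp] lemma evalCLM_apply (k : ℕ) (x : ellTwo H) : evalCLM k x = x k := rfl

lemma summable_extZero_sq (x : ellTwo H) (l : ℤ) :
    Summable (fun k : ℕ => ‖extZero (x : ∀ _ : ℕ, H) ((k : ℤ) + l)‖ ^ 2) ∧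
      (∑' k : ℕ, ‖extZero (x : ∀ _ : ℕ, H) ((k : ℤ) + l)‖ ^ 2) ≤ ‖x‖ ^ 2 := by
  have h2 : (0:ℝ) < (2 : ℝ≥0∞).toReal := by norm_num
  have hx : HasSum (fun n : ℕ => ‖(x : ∀ _ : ℕ, H) n‖ ^ 2) (‖x‖ ^ 2) := by
    simpa [rpow_two, ENNReal.toReal_ofNat] using lp.hasSum_norm h2 x
  set A : ℤ → ℝ := fun m => ‖extZero (x : ∀ _ : ℕ, H) m‖ ^ 2 with hA
  have hAco : ∀ n : ℕ, A n = ‖(x : ∀ _ : ℕ, H) n‖ ^ 2 := fun n => by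
    simp [hA, extZero_coe]
  have hAzero : ∀ m : ℤ, m ∉ Set.range ((↑) : ℕ → ℤ) → A m = 0 := by
    intro m hm
    have hm' : m < 0 := by
      by_contra h
      exact hm ⟨m.toNat, by omega⟩
    simp [hA, extZero, not_le.mpr hm']
  have hinj : Function.Injective ((↑) : ℕ → ℤ) := fun a b h => by omega
  have hAsum : Summable A := by
    rw [← Function.Injective.summable_iff hinj hAzero]
    exact hx.summable.congr (fun n => (hAco n).symm)
  have hsupp : Function.support A ⊆ Set.range ((↑) : ℕ → ℤ) := by
    intro m hm
    by_contra h
    exact hm (hAzero m h)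
  have htsumA : (∑' m : ℤ, A m) = ‖x‖ ^ 2 := by
    calc (∑' m : ℤ, A m) = ∑' n : ℕ, A n := (hinj.tsum_eq hsupp).symm
      _ = ∑' n : ℕ, ‖(x : ∀ _ : ℕ, H) n‖ ^ 2 := tsum_congr hAco
      _ = ‖x‖ ^ 2 := hx.tsum_eq
  have hinj2 : Function.Injective (fun k : ℕ => (k : ℤ) + l) := fun a b h => by
    dsimp at h; omega
  have hAnn : ∀ m, 0 ≤ A m := fun m => pow_nonneg (norm_nonneg _) _
  refine ⟨hAsum.comp_injective hinj2, ?_⟩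
  calc (∑' k : ℕ, A ((k:ℤ)+l)) ≤ ∑' m : ℤ, A m :=
      Summable.tsum_le_tsum_of_inj _ hinj2 (fun m _ => hAnn m) (fun k => le_rfl)
        (hAsum.comp_injective hinj2) hAsum
    _ = ‖x‖ ^ 2 := htsumA

lemma exists_diagOp (l : ℤ) (D : ℕ → H →L[ℂ] H) (s : ℝ) (hs : ∀ k, ‖D k‖ ≤ s) :
    ∃ A : ellTwo H →L[ℂ] ellTwo H, ‖A‖ ≤ s ∧
      ∀ (x : ellTwo H) (k : ℕ),
        (A x : ∀ _ : ℕ, H) k = D k (extZero (x : ∀ _ : ℕ, H) ((k : ℤ) + l)) := by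
  have hs0 : 0 ≤ s := (norm_nonneg _).trans (hs 0)
  have h2 : (0:ℝ) < (2 : ℝ≥0∞).toReal := by norm_num
  have hptw : ∀ (x : ellTwo H) (k : ℕ),
      ‖D k (extZero (x : ∀ _ : ℕ, H) ((k:ℤ)+l))‖ ^ (2:ℕ)
        ≤ s ^ (2:ℕ) * ‖extZero (x : ∀ _ : ℕ, H) ((k:ℤ)+l)‖ ^ (2:ℕ) := by
    intro x k
    rw [← mul_pow]
    refine pow_le_pow_left₀ (norm_nonneg _) ?_ 2
    exact ((D k).le_opNorm _).trans (mul_le_mul_of_nonneg_right (hs k) (norm_nonneg _))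
  have hsum : ∀ x : ellTwo H,
      Summable (fun k : ℕ => ‖D k (extZero (x : ∀ _:ℕ,H) ((k:ℤ)+l))‖ ^ (2:ℕ)) := by
    intro x
    exact Summable.of_nonneg_of_le (fun k => pow_nonneg (norm_nonneg _) _)
      (hptw x) (((summable_extZero_sq x l).1).mul_left _)
  have hmem : ∀ x : ellTwo H,
      Memℓp (fun k : ℕ => D k (extZero (x : ∀ _:ℕ,H) ((k:ℤ)+l))) 2 := by
    intro x
    apply memℓp_gen
    simpa [rpow_two, ENNReal.toReal_ofNat] using hsum x
  set F : ellTwo H →ₗ[ℂ] ellTwo H :=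
    { toFun := fun x => ⟨fun k => D k (extZero (x : ∀ _:ℕ,H) ((k:ℤ)+l)), hmem x⟩
      map_add' := fun x y => by
        ext k
        change D k (extZero ((x + y : ellTwo H) : ∀ _:ℕ,H) ((k:ℤ)+l)) = _
        rw [lp.coeFn_add x y, extZero_add, map_add]
        rfl
      map_smul' := fun a x => by
        ext k
        change D k (extZero ((a • x : ellTwo H) : ∀ _:ℕ,H) ((k:ℤ)+l)) = _
        rw [lp.coeFn_smul a x, extZero_smul, map_smul]
        rfl } with hF
  have hFle : ∀ x : ellTwo H, ‖F x‖ ≤ s * ‖x‖ := by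
    intro x
    have key : (∑' k:ℕ, ‖D k (extZero (x : ∀ _:ℕ,H) ((k:ℤ)+l))‖ ^ (2:ℕ))
        ≤ (s * ‖x‖) ^ (2:ℕ) := by
      calc (∑' k:ℕ, ‖D k (extZero (x : ∀ _:ℕ,H) ((k:ℤ)+l))‖ ^ (2:ℕ))
          ≤ ∑' k:ℕ, s ^ (2:ℕ) * ‖extZero (x : ∀ _:ℕ,H) ((k:ℤ)+l)‖ ^ (2:ℕ) :=
            Summable.tsum_le_tsum (hptw x) (hsum x) (((summable_extZero_sq x l).1).mul_left _)
        _ = s ^ (2:ℕ) * ∑' k:ℕ, ‖extZero (x : ∀ _:ℕ,H) ((k:ℤ)+l)‖ ^ (2:ℕ) := tsum_mul_left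
        _ ≤ s ^ (2:ℕ) * (‖x‖ ^ (2:ℕ)) :=
            mul_le_mul_of_nonneg_left (summable_extZero_sq x l).2 (by positivity)
        _ = (s * ‖x‖) ^ (2:ℕ) := (mul_pow _ _ _).symm
    refine lp.norm_le_of_tsum_le h2 (by positivity) ?_
    simp only [rpow_two, ENNReal.toReal_ofNat]
    exact key
  refine ⟨F.mkContinuous s hFle, F.mkContinuous_norm_le hs0 hFle, fun x k => rfl⟩

lemma diag_nonempty (l : ℤ) : ∃ k j : ℕ, (j : ℤ) = (k : ℤ) + l := by
  rcases le_or_gt 0 l with h | h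
  · exact ⟨0, l.toNat, by omega⟩
  · exact ⟨(-l).toNat, 0, by omega⟩

theorem part1 (T : ℕ → ℕ → (H →L[ℂ] H)) (hT : WienerMat T) :
    ∃ A : ellTwo H →L[ℂ] ellTwo H, Represents T A ∧ ContinuousClass A := by
  obtain ⟨hbdd, hsum⟩ := hT
  set s : ℤ → ℝ := fun l => sSup {r : ℝ | ∃ k j : ℕ, (j : ℤ) = (k : ℤ) + l ∧ r = ‖T k j‖}
    with hs_def
  have hub : ∀ (l : ℤ) (k j : ℕ), (j : ℤ) = (k : ℤ) + l → ‖T k j‖ ≤ s l := by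
    intro l k j hkj
    exact le_csSup (hbdd l) ⟨k, j, hkj, rfl⟩
  have hs0 : ∀ l, 0 ≤ s l := by
    intro l
    obtain ⟨k, j, hkj⟩ := diag_nonempty l
    exact (norm_nonneg (T k j)).trans (hub l k j hkj)
  set D : ℤ → ℕ → (H →L[ℂ] H) := fun l k =>
    if h : 0 ≤ (k : ℤ) + l then T k ((k : ℤ) + l).toNat else 0 with hD_def
  have hDpos : ∀ (l : ℤ) (k : ℕ), (0:ℤ) ≤ (k:ℤ) + l → D l k = T k ((k:ℤ) + l).toNat := by
    intro l k h; rw [hD_def]; exact dif_pos h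
  have hDneg : ∀ (l : ℤ) (k : ℕ), ¬ (0:ℤ) ≤ (k:ℤ) + l → D l k = 0 := by
    intro l k h; rw [hD_def]; exact dif_neg h
  have hDle : ∀ l k, ‖D l k‖ ≤ s l := by
    intro l k
    by_cases h : (0:ℤ) ≤ (k:ℤ) + l
    · rw [hDpos l k h]; exact hub l k _ (by omega)
    · rw [hDneg l k h]; simpa using hs0 l
  choose A hAnorm hAapp using fun l : ℤ => exists_diagOp l (D l) (s l) (hDle l)
  have hAsummable : Summable A :=
    Summable.of_norm_bounded hsum hAnorm
  have hAhas : HasSum A (∑' l, A l) := hAsummable.hasSum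
  -- key coordinate computation for single vectors
  have hcoord : ∀ (l : ℤ) (j : ℕ) (x : H) (k : ℕ),
      (A l (lp.single 2 j x) : ∀ _ : ℕ, H) k
        = if l = (j : ℤ) - (k : ℤ) then T k j x else 0 := by
    intro l j x k
    rw [hAapp l, extZero_single]
    rcases eq_or_ne ((j : ℤ)) ((k : ℤ) + l) with h | h
    · rw [if_pos h, if_pos (by omega), hDpos l k (by omega)]
      have h0 : ((k : ℤ) + l).toNat = j := by omega
      rw [h0]
    · rw [if_neg h, if_neg (by omega), map_zero]
  refine ⟨∑' l, A l, ?_, ?_⟩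
  · -- Represents
    intro j x k
    have h1 : HasSum (fun l => evalCLM k (A l (lp.single 2 j x)))
        (evalCLM k ((∑' l, A l) (lp.single 2 j x))) := by
      have := hAhas.mapL ((evalCLM (H := H) k).comp
        (ContinuousLinearMap.apply ℂ (ellTwo H) (lp.single 2 j x)))
      simpa using this
    have h2 : HasSum (fun l : ℤ => if l = (j : ℤ) - (k : ℤ) then T k j x else 0)
        (T k j x) := hasSum_ite_eq _ _
    have h1' : HasSum (fun l : ℤ => if l = (j : ℤ) - (k : ℤ) then T k j x else 0)
        (evalCLM k ((∑' l, A l) (lp.single 2 j x))) := by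
      refine h1.congr_fun (fun l => ?_)
      simpa using (hcoord l j x k).symm
    exact (h1'.unique h2)
  · -- ContinuousClass
    refine mem_closure_of_tendsto hAhas (Filter.Eventually.of_forall ?_)
    intro F
    refine ⟨fun k j => if ((j:ℤ) - (k:ℤ)) ∈ F then T k j else 0,
      ⟨⟨F.sup Int.natAbs, ?_⟩, ⟨∑' l, s l, ?_⟩⟩, ?_⟩
    · intro k j h
      beta_reduce
      rw [if_neg]
      intro hmem
      have h2 := Finset.le_sup (f := Int.natAbs) hmem
      rw [Int.abs_eq_natAbs] at h
      omega
    · intro k j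
      beta_reduce
      by_cases hmem : ((j:ℤ) - (k:ℤ)) ∈ F
      · rw [if_pos hmem]
        exact (hub ((j:ℤ) - (k:ℤ)) k j (by omega)).trans (Summable.le_tsum hsum _ fun l' _ => hs0 l')
      · rw [if_neg hmem]
        simpa using tsum_nonneg hs0
    · intro j x k
      have hc : ((∑ l ∈ F, A l) (lp.single 2 j x) : ∀ _:ℕ, H) k
          = ∑ l ∈ F, ((A l (lp.single 2 j x) : ∀ _:ℕ, H) k) := by
        rw [ContinuousLinearMap.sum_apply]
        exact map_sum (evalCLM k) _ F
      rw [hc]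
      beta_reduce
      simp_rw [hcoord]
      rw [Finset.sum_ite_eq' F ((j:ℤ) - (k:ℤ)) (fun _ => T k j x)]
      by_cases hmem : ((j:ℤ) - (k:ℤ)) ∈ F
      · rw [if_pos hmem]
        simp [hmem]
      · rw [if_neg hmem]
        simp [hmem]


theorem part2b [Nontrivial H] (f : ℝ → ℂ)
    (hns : ¬ Summable fun l : ℤ => ‖scalarFourierCoeff f l‖) :
    ¬ WienerMat (fun k j : ℕ => scalarFourierCoeff f ((j : ℤ) - (k : ℤ)) •
        ContinuousLinearMap.id ℂ H) := by
  rintro ⟨hb, hsum⟩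
  apply hns
  refine hsum.congr fun l => ?_
  have hset : {r : ℝ | ∃ k j : ℕ, (j : ℤ) = (k : ℤ) + l ∧
      r = ‖(fun k j : ℕ => scalarFourierCoeff f ((j:ℤ)-(k:ℤ)) • ContinuousLinearMap.id ℂ H) k j‖}
      = {‖scalarFourierCoeff f l‖} := by
    ext r
    simp only [Set.mem_setOf_eq, Set.mem_singleton_iff]
    constructor
    · rintro ⟨k, j, hkj, rfl⟩
      rw [show (j:ℤ) - (k:ℤ) = l by omega, norm_smul, ContinuousLinearMap.norm_id, mul_one]
    · rintro rfl
      obtain ⟨k, j, hkj⟩ := diag_nonempty l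
      exact ⟨k, j, hkj, by
        rw [show (j:ℤ) - (k:ℤ) = l by omega, norm_smul, ContinuousLinearMap.norm_id, mul_one]⟩
  rw [hset, csSup_singleton]


lemma integral_exp_int (m : ℤ) :
    (∫ t in (0:ℝ)..(2*Real.pi), Complex.exp (Complex.I * m * t))
      = if m = 0 then ((2*Real.pi : ℝ) : ℂ) else 0 := by
  rcases eq_or_ne m 0 with h | h
  · subst h
    simp only [Int.cast_zero, mul_zero, zero_mul, Complex.exp_zero]
    rw [intervalIntegral.integral_const]
    simp
  · rw [if_neg h]
    have hc : (Complex.I * (m:ℂ)) ≠ 0 :=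
      mul_ne_zero Complex.I_ne_zero (Int.cast_ne_zero.mpr h)
    have heq : (fun t : ℝ => Complex.exp (Complex.I * m * t))
        = fun t : ℝ => Complex.exp ((Complex.I * m) * t) := by
      funext t; ring_nf
    rw [heq, integral_exp_mul_complex hc]
    have h1 : Complex.exp (Complex.I * (m:ℂ) * ((2*Real.pi : ℝ) : ℂ)) = 1 := by
      rw [show Complex.I * (m:ℂ) * ((2*Real.pi : ℝ) : ℂ)
          = (m:ℂ) * (2 * (Real.pi:ℂ) * Complex.I) by push_cast; ring]
      exact Complex.exp_int_mul_two_pi_mul_I m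
    rw [show ((0:ℝ):ℂ) = 0 by norm_num]
    rw [mul_zero, Complex.exp_zero, h1, sub_self, zero_div]

lemma cont_exp_int (c : ℂ) : Continuous fun t : ℝ => Complex.exp (c * t) :=
  Complex.continuous_exp.comp (continuous_const.mul Complex.continuous_ofReal)

lemma cont_exp_int' (m : ℤ) : Continuous fun t : ℝ => Complex.exp (-Complex.I * m * t) := by
  have := cont_exp_int (-Complex.I * m)
  simpa [mul_assoc] using this

lemma parseval (S : Finset ℤ) (a : ℤ → H) :
    (∫ t in (0:ℝ)..(2*Real.pi), ‖∑ m ∈ S, Complex.exp (-Complex.I * m * t) • a m‖ ^ 2)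
      = 2 * Real.pi * ∑ m ∈ S, ‖a m‖ ^ 2 := by
  classical
  set V : ℝ → H := fun t => ∑ m ∈ S, Complex.exp (-Complex.I * m * t) • a m with hV
  have hVcont : Continuous V := by
    apply continuous_finset_sum
    intro m _
    exact (cont_exp_int' m).smul continuous_const
  -- pointwise inner product expansion
  have hpt : ∀ t : ℝ, (inner ℂ (V t) (V t) : ℂ)
      = ∑ m ∈ S, ∑ n ∈ S, Complex.exp (Complex.I * ((m - n : ℤ):ℂ) * t) * (inner ℂ (a m) (a n) : ℂ) := by
    intro t
    rw [hV]
    rw [sum_inner]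
    refine Finset.sum_congr rfl fun m hm => ?_
    rw [inner_sum]
    refine Finset.sum_congr rfl fun n hn => ?_
    rw [inner_smul_left, inner_smul_right]
    have h1 : (starRingEnd ℂ) (Complex.exp (-Complex.I * m * t)) = Complex.exp (Complex.I * m * t) := by
      rw [← Complex.exp_conj]
      congr 1
      simp [map_mul, Complex.conj_I, Complex.conj_ofReal]
    rw [h1, ← mul_assoc, ← Complex.exp_add]
    congr 2
    push_cast
    ring
  -- complex integral
  have hint1 : ∀ m n : ℤ,
      (∫ t in (0:ℝ)..(2*Real.pi), Complex.exp (Complex.I * ((m - n : ℤ):ℂ) * t) * (inner ℂ (a m) (a n) : ℂ))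
        = (if (m - n : ℤ) = 0 then ((2*Real.pi : ℝ):ℂ) else 0) * (inner ℂ (a m) (a n) : ℂ) := by
    intro m n
    rw [intervalIntegral.integral_mul_const, integral_exp_int]
  have hJ : (∫ t in (0:ℝ)..(2*Real.pi), (inner ℂ (V t) (V t) : ℂ))
      = ∑ m ∈ S, ∑ n ∈ S, (if (m - n : ℤ) = 0 then ((2*Real.pi : ℝ):ℂ) else 0) * (inner ℂ (a m) (a n) : ℂ) := by
    rw [intervalIntegral.integral_congr (g := fun t => ∑ m ∈ S, ∑ n ∈ S,
      Complex.exp (Complex.I * ((m - n : ℤ):ℂ) * t) * (inner ℂ (a m) (a n) : ℂ))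
      (fun t _ => hpt t)]
    rw [intervalIntegral.integral_finset_sum]
    · refine Finset.sum_congr rfl fun m hm => ?_
      rw [intervalIntegral.integral_finset_sum]
      · exact Finset.sum_congr rfl fun n hn => hint1 m n
      · intro n _
        exact ((cont_exp_int _).mul continuous_const).intervalIntegrable _ _
    · intro m _
      apply Continuous.intervalIntegrable
      exact continuous_finset_sum _ fun n _ => ((cont_exp_int _).mul continuous_const)
  have hdiag : (∑ m ∈ S, ∑ n ∈ S, (if (m - n : ℤ) = 0 then ((2*Real.pi : ℝ):ℂ) else 0) * (inner ℂ (a m) (a n) : ℂ))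
      = ((2*Real.pi : ℝ):ℂ) * ∑ m ∈ S, (inner ℂ (a m) (a m) : ℂ) := by
    rw [Finset.mul_sum]
    refine Finset.sum_congr rfl fun m hm => ?_
    rw [Finset.sum_eq_single_of_mem m hm]
    · rw [if_pos (by omega)]
    · intro n _ hne
      rw [if_neg (by omega), zero_mul]
  -- pass to real parts
  have hself : ∀ t : ℝ, (inner ℂ (V t) (V t) : ℂ) = ((‖V t‖ ^ 2 : ℝ) : ℂ) := by
    intro t
    rw [inner_self_eq_norm_sq_to_K]
    push_cast
    rfl
  have hselfa : ∀ m : ℤ, (inner ℂ (a m) (a m) : ℂ) = ((‖a m‖ ^ 2 : ℝ) : ℂ) := by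
    intro m
    rw [inner_self_eq_norm_sq_to_K]
    push_cast
    rfl
  have hcast : ((∫ t in (0:ℝ)..(2*Real.pi), ‖V t‖ ^ 2 : ℝ) : ℂ)
      = ((2 * Real.pi * ∑ m ∈ S, ‖a m‖ ^ 2 : ℝ) : ℂ) := by
    rw [← intervalIntegral.integral_ofReal]
    calc (∫ t in (0:ℝ)..(2*Real.pi), ((‖V t‖ ^ 2 : ℝ) : ℂ))
        = ∫ t in (0:ℝ)..(2*Real.pi), (inner ℂ (V t) (V t) : ℂ) := by
          refine intervalIntegral.integral_congr fun t _ => (hself t).symm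
      _ = ((2*Real.pi : ℝ):ℂ) * ∑ m ∈ S, (inner ℂ (a m) (a m) : ℂ) := by rw [hJ, hdiag]
      _ = ((2 * Real.pi * ∑ m ∈ S, ‖a m‖ ^ 2 : ℝ) : ℂ) := by
          rw [Finset.sum_congr rfl fun m _ => hselfa m]
          push_cast
          ring
  exact_mod_cast hcast


lemma exp_mul_exp_neg (m l : ℤ) (t : ℝ) :
    Complex.exp (Complex.I * m * t) * Complex.exp (-Complex.I * l * t)
      = Complex.exp (Complex.I * ((m - l : ℤ):ℂ) * t) := by
  rw [← Complex.exp_add]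
  congr 1
  push_cast
  ring

lemma pi_ne_C : ((Real.pi : ℂ)) ≠ 0 := Complex.ofReal_ne_zero.mpr Real.pi_ne_zero

lemma scalarFourierCoeff_exp (m l : ℤ) :
    scalarFourierCoeff (fun t => Complex.exp (Complex.I * m * t)) l
      = if m = l then 1 else 0 := by
  unfold scalarFourierCoeff
  rw [intervalIntegral.integral_congr (g := fun t : ℝ =>
    Complex.exp (Complex.I * ((m - l : ℤ):ℂ) * t)) (fun t _ => exp_mul_exp_neg m l t)]
  rw [integral_exp_int (m - l)]
  rcases eq_or_ne m l with h | h
  · rw [if_pos (by omega), if_pos h]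
    push_cast
    rw [div_mul_eq_mul_div, one_mul, div_eq_one_iff_eq (by
      exact mul_ne_zero two_ne_zero pi_ne_C)]
  · rw [if_neg (by omega), if_neg h, mul_zero]

lemma scalarFourierCoeff_trig (c : ℤ →₀ ℂ) (l : ℤ) :
    scalarFourierCoeff (fun t => ∑ m ∈ c.support, c m * Complex.exp (Complex.I * m * t)) l
      = c l := by
  unfold scalarFourierCoeff
  have h1 : (fun t : ℝ => (∑ m ∈ c.support, c m * Complex.exp (Complex.I * m * t))
        * Complex.exp (-Complex.I * l * t))
      = fun t : ℝ => ∑ m ∈ c.support,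
          c m * Complex.exp (Complex.I * ((m - l : ℤ):ℂ) * t) := by
    funext t
    rw [Finset.sum_mul]
    refine Finset.sum_congr rfl fun m _ => ?_
    rw [mul_assoc, exp_mul_exp_neg]
  rw [h1, intervalIntegral.integral_finset_sum (fun m _ =>
    (show Continuous fun t : ℝ => c m * Complex.exp (Complex.I * ((m - l : ℤ):ℂ) * t) from
      continuous_const.mul (cont_exp_int _)).intervalIntegrable _ _)]
  simp_rw [intervalIntegral.integral_const_mul, integral_exp_int]
  have h2 : ∀ m ∈ c.support, c m * (if (m - l : ℤ) = 0 then ((2*Real.pi:ℝ):ℂ) else 0)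
      = if m = l then c m * ((2*Real.pi:ℝ):ℂ) else 0 := by
    intro m _
    rcases eq_or_ne m l with h|h
    · rw [if_pos (by omega), if_pos h]
    · rw [if_neg (by omega), if_neg h, mul_zero]
  rw [Finset.sum_congr rfl h2,
    Finset.sum_ite_eq' c.support l (fun m => c m * ((2*Real.pi:ℝ):ℂ))]
  by_cases hmem : l ∈ c.support
  · rw [if_pos hmem]
    push_cast
    field_simp
  · rw [if_neg hmem, mul_zero, Finsupp.notMem_support_iff.mp hmem]

lemma norm_exp_neg_I (l : ℤ) (t : ℝ) : ‖Complex.exp (-Complex.I * l * t)‖ = 1 := by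
  rw [show -Complex.I * (l:ℂ) * (t:ℝ) = ((-l * t : ℝ) : ℂ) * Complex.I by push_cast; ring]
  exact Complex.norm_exp_ofReal_mul_I _

lemma scalarFourierCoeff_dist (g h : ℝ → ℂ) (hg : Continuous g) (hh : Continuous h)
    (C : ℝ) (hC : ∀ t, ‖g t - h t‖ ≤ C) (l : ℤ) :
    ‖scalarFourierCoeff g l - scalarFourierCoeff h l‖ ≤ C := by
  have hC0 : 0 ≤ C := (norm_nonneg _).trans (hC 0)
  unfold scalarFourierCoeff
  rw [← mul_sub, ← intervalIntegral.integral_sub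
    ((show Continuous fun t : ℝ => g t * Complex.exp (-Complex.I * l * t) from
      hg.mul (cont_exp_int' l)).intervalIntegrable _ _)
    ((show Continuous fun t : ℝ => h t * Complex.exp (-Complex.I * l * t) from
      hh.mul (cont_exp_int' l)).intervalIntegrable _ _)]
  rw [norm_mul]
  have h1 : ‖(1 / (2 * Real.pi) : ℂ)‖ = 1 / (2 * Real.pi) := by
    rw [show (1 / (2 * Real.pi) : ℂ) = ((1 / (2 * Real.pi) : ℝ) : ℂ) by push_cast; ring]
    rw [Complex.norm_real]
    rw [Real.norm_eq_abs, abs_of_pos (by positivity)]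
  have h2 : ‖∫ t in (0:ℝ)..(2*Real.pi),
      (g t * Complex.exp (-Complex.I * l * t) - h t * Complex.exp (-Complex.I * l * t))‖
      ≤ C * |2 * Real.pi - 0| := by
    apply intervalIntegral.norm_integral_le_of_norm_le_const
    intro t _
    rw [← sub_mul, norm_mul, norm_exp_neg_I, mul_one]
    exact hC t
  calc ‖(1 / (2 * Real.pi) : ℂ)‖ * ‖_‖ ≤ (1 / (2 * Real.pi)) * (C * |2 * Real.pi - 0|) := by
        rw [h1]
        exact mul_le_mul_of_nonneg_left h2 (by positivity)
    _ = C := by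
        rw [sub_zero, abs_of_pos two_pi_pos]
        field_simp


local instance fact_two_pi : Fact (0 < 2 * Real.pi) := ⟨two_pi_pos⟩

lemma gamma_apply (c : ℤ →₀ ℂ) (t : ℝ) :
    (∑ l ∈ c.support, c l • fourier (T := 2*Real.pi) l) ((t : ℝ) : AddCircle (2*Real.pi))
      = ∑ l ∈ c.support, c l * Complex.exp (Complex.I * l * t) := by
  rw [ContinuousMap.sum_apply]
  refine Finset.sum_congr rfl fun l _ => ?_
  rw [ContinuousMap.smul_apply, fourier_coe_apply, smul_eq_mul]
  congr 1
  congr 1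
  have hne : ((2 * Real.pi : ℝ) : ℂ) ≠ 0 := by
    push_cast
    exact mul_ne_zero two_ne_zero pi_ne_C
  rw [div_eq_iff hne]
  push_cast
  ring

lemma coe_sum_apply {ι : Type} (s : Finset ι) (v : ι → ellTwo H) (k : ℕ) :
    ((∑ i ∈ s, v i : ellTwo H) : ∀ _ : ℕ, H) k = ∑ i ∈ s, ((v i : ellTwo H) : ∀ _ : ℕ, H) k := by
  exact map_sum (evalCLM k) v s

lemma lambda_norm_le (Sop : ℤ → ellTwo H →L[ℂ] ellTwo H)
    (hSop : ∀ (l : ℤ) (x : ellTwo H) (k : ℕ),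
      (Sop l x : ∀ _ : ℕ, H) k = extZero (x : ∀ _ : ℕ, H) ((k:ℤ) + l))
    (c : ℤ →₀ ℂ) :
    ‖∑ l ∈ c.support, c l • Sop l‖
      ≤ ‖∑ l ∈ c.support, c l • fourier (T := 2*Real.pi) l‖ := by
  classical
  set Γ := ∑ l ∈ c.support, c l • fourier (T := 2*Real.pi) l with hΓ
  set Λ := ∑ l ∈ c.support, c l • Sop l with hΛ
  have hLco : ∀ (x : ellTwo H) (k : ℕ),
      (Λ x : ∀ _ : ℕ, H) k = ∑ l ∈ c.support, c l • extZero (x : ∀ _:ℕ,H) ((k:ℤ)+l) := by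
    intro x k
    have h1 : Λ x = ∑ l ∈ c.support, c l • (Sop l x) := by
      rw [hΛ, ContinuousLinearMap.sum_apply]
      exact Finset.sum_congr rfl fun l _ => rfl
    rw [h1, coe_sum_apply]
    refine Finset.sum_congr rfl fun l _ => ?_
    rw [lp.coeFn_smul, Pi.smul_apply, hSop]
  refine ContinuousLinearMap.opNorm_le_bound _ (norm_nonneg Γ) ?_
  have key : ∀ (s : Finset ℕ) (x0 : ℕ → H),
      ‖Λ (∑ j ∈ s, lp.single 2 j (x0 j))‖ ≤ ‖Γ‖ * ‖∑ j ∈ s, lp.single 2 j (x0 j)‖ := by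
    intro s x0
    set y : ellTwo H := ∑ j ∈ s, lp.single 2 j (x0 j) with hy
    have h2 : (0:ℝ) < (2 : ℝ≥0∞).toReal := by norm_num
    have hyco : ∀ k : ℕ, (y : ∀ _:ℕ,H) k = if k ∈ s then x0 k else 0 := by
      intro k
      rw [hy, coe_sum_apply]
      rw [Finset.sum_congr rfl fun j _ => single_coe j (x0 j) k]
      exact Finset.sum_ite_eq s k x0
    have hext : ∀ m : ℤ, extZero (y : ∀ _:ℕ,H) m
        = ∑ j ∈ s, (if ((j:ℤ) = m) then x0 j else 0) := by
      intro m
      rcases le_or_gt 0 m with h | h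
      · simp only [extZero]
        rw [if_pos h, hyco]
        have hcg : ∀ j ∈ s, (if ((j:ℤ) = m) then x0 j else 0)
            = (if j = m.toNat then x0 j else 0) := fun j _ => if_congr (by omega) rfl rfl
        rw [Finset.sum_congr rfl hcg, Finset.sum_ite_eq' s m.toNat x0]
      · simp only [extZero]
        rw [if_neg (by omega)]
        exact (Finset.sum_eq_zero fun j _ => if_neg (by omega)).symm
    set Y : ℤ → H := fun m => ∑ j ∈ s, c ((j:ℤ) - m) • x0 j with hYdef
    have hYco : ∀ k : ℕ, (Λ y : ∀ _:ℕ,H) k = Y ((k:ℕ):ℤ) := by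
      intro k
      rw [hLco y k]
      have hterm : ∀ l ∈ c.support, c l • extZero (y : ∀ _:ℕ,H) ((k:ℤ)+l)
          = ∑ j ∈ s, (if l = (j:ℤ) - (k:ℤ) then c l • x0 j else 0) := by
        intro l _
        rw [hext, Finset.smul_sum]
        refine Finset.sum_congr rfl fun j _ => ?_
        rcases eq_or_ne l ((j:ℤ) - (k:ℤ)) with h|h
        · rw [if_pos (by omega), if_pos h]
        · rw [if_neg (by omega), if_neg h, smul_zero]
      rw [Finset.sum_congr rfl hterm, Finset.sum_comm]
      refine Finset.sum_congr rfl fun j _ => ?_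
      rw [Finset.sum_ite_eq' c.support ((j:ℤ) - (k:ℤ)) (fun l => c l • x0 j)]
      by_cases hmem : ((j:ℤ) - (k:ℤ)) ∈ c.support
      · rw [if_pos hmem]
      · rw [if_neg hmem, Finsupp.notMem_support_iff.mp hmem, zero_smul]
    set K : Finset ℤ := (s ×ˢ c.support).image (fun p : ℕ × ℤ => (p.1 : ℤ) - p.2) with hK
    have hY0 : ∀ m : ℤ, m ∉ K → Y m = 0 := by
      intro m hm
      refine Finset.sum_eq_zero fun j hj => ?_
      by_cases hc : c ((j:ℤ) - m) = 0
      · rw [hc, zero_smul]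
      · exfalso
        apply hm
        rw [hK]
        refine Finset.mem_image.mpr ⟨⟨j, (j:ℤ) - m⟩, ?_, by dsimp; omega⟩
        exact Finset.mem_product.mpr ⟨hj, Finsupp.mem_support_iff.mpr hc⟩
    -- norm computations
    have hinj : Function.Injective ((↑) : ℕ → ℤ) := fun a b h => by omega
    have hnormL : ‖Λ y‖ ^ (2:ℕ) = ∑' k : ℕ, ‖Y ((k:ℕ):ℤ)‖ ^ (2:ℕ) := by
      have h0 := lp.norm_rpow_eq_tsum h2 (Λ y)
      simp only [ENNReal.toReal_ofNat, rpow_two] at h0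
      rw [h0]
      exact tsum_congr fun k => by rw [hYco k]
    have hnormy : ‖y‖ ^ (2:ℕ) = ∑ j ∈ s, ‖x0 j‖ ^ (2:ℕ) := by
      have h0 := lp.norm_rpow_eq_tsum h2 y
      simp only [ENNReal.toReal_ofNat, rpow_two] at h0
      rw [h0]
      rw [tsum_eq_sum (s := s) (fun k hk => by rw [hyco k, if_neg hk, norm_zero]; norm_num)]
      refine Finset.sum_congr rfl fun k hk => by rw [hyco k, if_pos hk]
    set Ks : Finset ℕ := K.preimage ((↑) : ℕ → ℤ) (Set.injOn_of_injective hinj) with hKs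
    have htsum_le : (∑' k : ℕ, ‖Y ((k:ℕ):ℤ)‖ ^ (2:ℕ)) ≤ ∑ m ∈ K, ‖Y m‖ ^ (2:ℕ) := by
      rw [tsum_eq_sum (s := Ks) (fun k hk => by
        rw [hY0 _ (fun hc => hk (Finset.mem_preimage.mpr hc)), norm_zero]
        norm_num)]
      have himg : (∑ m ∈ Ks.image ((↑) : ℕ → ℤ), ‖Y m‖ ^ (2:ℕ))
          = ∑ k ∈ Ks, ‖Y ((k:ℕ):ℤ)‖ ^ (2:ℕ) :=
        Finset.sum_image (fun a _ b _ h => hinj h)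
      rw [← himg]
      refine Finset.sum_le_sum_of_subset_of_nonneg ?_ (fun m _ _ => by positivity)
      intro m hm
      obtain ⟨k, hk, rfl⟩ := Finset.mem_image.mp hm
      exact Finset.mem_preimage.mp hk
    -- Parseval for Y over K
    have hPars1 := parseval K Y
    -- F function
    set Fv : ℝ → H := fun t => ∑ m ∈ s.image ((↑) : ℕ → ℤ),
      Complex.exp (-Complex.I * m * t) • extZero x0 m with hFv
    have hPars2 := parseval (s.image ((↑) : ℕ → ℤ)) (extZero x0)
    have hFsum : (∑ m ∈ s.image ((↑) : ℕ → ℤ), ‖extZero x0 m‖ ^ (2:ℕ))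
        = ∑ j ∈ s, ‖x0 j‖ ^ (2:ℕ) := by
      rw [Finset.sum_image (fun a _ b _ h => hinj h)]
      exact Finset.sum_congr rfl fun j _ => by rw [extZero_coe]
    -- pointwise identity V = gamma * F
    have hVF : ∀ t : ℝ, (∑ m ∈ K, Complex.exp (-Complex.I * m * t) • Y m)
        = (∑ l ∈ c.support, c l * Complex.exp (Complex.I * l * t)) • Fv t := by
      intro t
      rw [Finset.sum_smul]
      have hr : ∀ l ∈ c.support, (c l * Complex.exp (Complex.I * l * t)) • Fv t
          = ∑ j ∈ s, (c l * Complex.exp (Complex.I * ((l - j : ℤ):ℂ) * t)) • x0 j := by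
        intro l _
        rw [hFv]
        dsimp only
        rw [Finset.smul_sum, Finset.sum_image (fun a _ b _ h => hinj h)]
        refine Finset.sum_congr rfl fun j _ => ?_
        rw [extZero_coe, smul_smul, mul_assoc, exp_mul_exp_neg]
      have hl : ∀ m ∈ K, Complex.exp (-Complex.I * m * t) • Y m
          = ∑ j ∈ s, (c ((j:ℤ) - m) * Complex.exp (-Complex.I * m * t)) • x0 j := by
        intro m _
        rw [hYdef]
        dsimp only
        rw [Finset.smul_sum]
        refine Finset.sum_congr rfl fun j _ => ?_
        rw [smul_smul, mul_comm]
      rw [Finset.sum_congr rfl hl, Finset.sum_congr rfl hr, Finset.sum_comm,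
        Finset.sum_comm (s := c.support)]
      refine Finset.sum_congr rfl fun j hj => ?_
      rw [← Finset.sum_smul, ← Finset.sum_smul]
      congr 1
      rw [← Finset.sum_filter_of_ne (p := fun m => (j:ℤ) - m ∈ c.support)
        (fun m _ hne => by
          by_contra hns
          exact hne (by rw [Finsupp.notMem_support_iff.mp hns, zero_mul]))]
      refine Finset.sum_nbij' (i := fun m => (j:ℤ) - m) (j := fun l => (j:ℤ) - l)
        ?_ ?_ ?_ ?_ ?_
      · intro m hm
        exact (Finset.mem_filter.mp hm).2
      · intro l hl2
        refine Finset.mem_filter.mpr ⟨?_, by rw [show (j:ℤ) - ((j:ℤ) - l) = l by ring]; exact hl2⟩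
        rw [hK]
        refine Finset.mem_image.mpr ⟨⟨j, l⟩, Finset.mem_product.mpr ⟨hj, hl2⟩, rfl⟩
      · intro m _; ring
      · intro l _; ring
      · intro m _
        congr 1
        congr 1
        push_cast
        ring
    -- continuity facts
    have hFcont : Continuous Fv := by
      rw [hFv]
      exact continuous_finset_sum _ fun m _ => (cont_exp_int' m).smul continuous_const
    have hVcont : Continuous fun t : ℝ => ∑ m ∈ K, Complex.exp (-Complex.I * m * t) • Y m :=
      continuous_finset_sum _ fun m _ => (cont_exp_int' m).smul continuous_const
    have hbnd : ∀ t : ℝ, ‖∑ m ∈ K, Complex.exp (-Complex.I*m*t) • Y m‖ ^ (2:ℕ)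
        ≤ ‖Γ‖ ^ (2:ℕ) * ‖Fv t‖ ^ (2:ℕ) := by
      intro t
      rw [hVF t, norm_smul]
      have hle : ‖∑ l ∈ c.support, c l * Complex.exp (Complex.I*l*t)‖ ≤ ‖Γ‖ := by
        rw [← gamma_apply c t]
        exact ContinuousMap.norm_coe_le_norm Γ _
      calc (‖∑ l ∈ c.support, c l * Complex.exp (Complex.I*l*t)‖ * ‖Fv t‖) ^ (2:ℕ)
          ≤ (‖Γ‖ * ‖Fv t‖) ^ (2:ℕ) := by
            apply pow_le_pow_left₀ (by positivity)
            exact mul_le_mul_of_nonneg_right hle (norm_nonneg _)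
        _ = ‖Γ‖ ^ (2:ℕ) * ‖Fv t‖ ^ (2:ℕ) := mul_pow _ _ _
    have hIle : (∫ t in (0:ℝ)..(2*Real.pi), ‖∑ m ∈ K, Complex.exp (-Complex.I*m*t) • Y m‖^(2:ℕ))
        ≤ ∫ t in (0:ℝ)..(2*Real.pi), ‖Γ‖^(2:ℕ) * ‖Fv t‖^(2:ℕ) := by
      apply intervalIntegral.integral_mono_on two_pi_pos.le ?_ ?_ (fun t _ => hbnd t)
      · exact ((hVcont.norm.pow 2)).intervalIntegrable _ _
      · exact ((continuous_const.mul (hFcont.norm.pow 2))).intervalIntegrable _ _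
    have h5 : (∫ t in (0:ℝ)..(2*Real.pi), ‖Γ‖^(2:ℕ) * ‖Fv t‖^(2:ℕ))
        = ‖Γ‖^(2:ℕ) * (2*Real.pi * ∑ j ∈ s, ‖x0 j‖^(2:ℕ)) := by
      rw [intervalIntegral.integral_const_mul]
      congr 1
      rw [show (∫ t in (0:ℝ)..(2*Real.pi), ‖Fv t‖^(2:ℕ))
          = 2*Real.pi * ∑ m ∈ s.image ((↑):ℕ→ℤ), ‖extZero x0 m‖^(2:ℕ) from hPars2, hFsum]
    have hKle : (∑ m ∈ K, ‖Y m‖ ^ (2:ℕ)) ≤ ‖Γ‖^(2:ℕ) * ∑ j ∈ s, ‖x0 j‖^(2:ℕ) := by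
      have h6 : 2*Real.pi * (∑ m ∈ K, ‖Y m‖^(2:ℕ))
          ≤ 2*Real.pi * (‖Γ‖^(2:ℕ) * ∑ j ∈ s, ‖x0 j‖^(2:ℕ)) := by
        calc 2*Real.pi * (∑ m ∈ K, ‖Y m‖^(2:ℕ))
            = ∫ t in (0:ℝ)..(2*Real.pi), ‖∑ m ∈ K, Complex.exp (-Complex.I*m*t) • Y m‖^(2:ℕ) :=
              hPars1.symm
          _ ≤ ∫ t in (0:ℝ)..(2*Real.pi), ‖Γ‖^(2:ℕ) * ‖Fv t‖^(2:ℕ) := hIle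
          _ = 2*Real.pi * (‖Γ‖^(2:ℕ) * ∑ j ∈ s, ‖x0 j‖^(2:ℕ)) := by rw [h5]; ring
      exact le_of_mul_le_mul_left h6 two_pi_pos
    have hfinal : ‖Λ y‖ ^ (2:ℕ) ≤ (‖Γ‖ * ‖y‖) ^ (2:ℕ) := by
      rw [hnormL]
      calc (∑' k : ℕ, ‖Y ((k:ℕ):ℤ)‖ ^ (2:ℕ)) ≤ ∑ m ∈ K, ‖Y m‖ ^ (2:ℕ) := htsum_le
        _ ≤ ‖Γ‖^(2:ℕ) * ∑ j ∈ s, ‖x0 j‖^(2:ℕ) := hKle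
        _ = ‖Γ‖^(2:ℕ) * ‖y‖^(2:ℕ) := by rw [hnormy]
        _ = (‖Γ‖ * ‖y‖)^(2:ℕ) := (mul_pow _ _ _).symm
    nlinarith [norm_nonneg (Λ y), norm_nonneg Γ, norm_nonneg y, hfinal,
      mul_nonneg (norm_nonneg Γ) (norm_nonneg y)]
  intro x
  have hx : Filter.Tendsto (fun s : Finset ℕ => ∑ j ∈ s, lp.single 2 j ((x : ∀ _:ℕ,H) j))
      Filter.atTop (𝓝 x) := lp.hasSum_single ENNReal.ofNat_ne_top x
  have hclosed : IsClosed {y : ellTwo H | ‖Λ y‖ ≤ ‖Γ‖ * ‖y‖} :=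
    isClosed_le (Λ.continuous.norm) (continuous_const.mul continuous_norm)
  exact hclosed.mem_of_tendsto hx (Filter.Eventually.of_forall fun s => key s _)


theorem part2a (f : ℝ → ℂ) (hfc : Continuous f) (hfp : Function.Periodic f (2 * Real.pi)) :
    ∃ A : ellTwo H →L[ℂ] ellTwo H,
      Represents (fun k j => scalarFourierCoeff f ((j : ℤ) - (k : ℤ)) •
        ContinuousLinearMap.id ℂ H) A ∧ ContinuousClass A := by
  classical
  choose Sop hSnorm hSapp using fun l : ℤ =>
    exists_diagOp (H := H) l (fun _ : ℕ => ContinuousLinearMap.id ℂ H) 1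
      (fun _ => ContinuousLinearMap.norm_id_le)
  have hSapp' : ∀ (l : ℤ) (x : ellTwo H) (k : ℕ),
      (Sop l x : ∀ _ : ℕ, H) k = extZero (x : ∀ _ : ℕ, H) ((k:ℤ) + l) := by
    intro l x k
    rw [hSapp l x k]
    rfl
  have hsingle : ∀ (c : ℤ →₀ ℂ) (j : ℕ) (x : H) (k : ℕ),
      ((∑ l ∈ c.support, c l • Sop l) (lp.single 2 j x) : ∀ _ : ℕ, H) k
        = c ((j:ℤ) - (k:ℤ)) • x := by
    intro c j x k
    have h1 : (∑ l ∈ c.support, c l • Sop l) (lp.single 2 j x)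
        = ∑ l ∈ c.support, c l • (Sop l (lp.single 2 j x)) := by
      rw [ContinuousLinearMap.sum_apply]
      exact Finset.sum_congr rfl fun l _ => rfl
    rw [h1, coe_sum_apply]
    have h2 : ∀ l ∈ c.support, ((c l • Sop l (lp.single 2 j x) : ellTwo H) : ∀ _:ℕ,H) k
        = if l = (j:ℤ) - (k:ℤ) then c l • x else 0 := by
      intro l _
      rw [lp.coeFn_smul, Pi.smul_apply, hSapp', extZero_single]
      rcases eq_or_ne l ((j:ℤ)-(k:ℤ)) with h|h
      · rw [if_pos (by omega), if_pos h]
      · rw [if_neg (by omega), if_neg h, smul_zero]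
    rw [Finset.sum_congr rfl h2,
      Finset.sum_ite_eq' c.support ((j:ℤ)-(k:ℤ)) (fun l => c l • x)]
    by_cases hmem : ((j:ℤ)-(k:ℤ)) ∈ c.support
    · rw [if_pos hmem]
    · rw [if_neg hmem, Finsupp.notMem_support_iff.mp hmem, zero_smul]
  set fc : C(AddCircle (2*Real.pi), ℂ) := ⟨hfp.lift, hfc.quotient_liftOn' _⟩ with hfc_def
  have hfc_coe : ∀ t : ℝ, fc ((t : ℝ) : AddCircle (2*Real.pi)) = f t := fun t => rfl
  have hmemcl : fc ∈ closure ((Submodule.span ℂ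
      (Set.range (fourier (T := 2*Real.pi)))) : Set C(AddCircle (2*Real.pi), ℂ)) := by
    have htop := span_fourier_closure_eq_top (T := 2*Real.pi)
    have h1 : fc ∈ (Submodule.span ℂ
        (Set.range (fourier (T := 2*Real.pi)))).topologicalClosure := by
      rw [htop]
      trivial
    rw [← Submodule.topologicalClosure_coe]
    exact h1
  obtain ⟨g, hg_mem, hg_lim⟩ := mem_closure_iff_seq_limit.mp hmemcl
  choose cs hcs using fun n => Finsupp.mem_span_range_iff_exists_finsupp.mp (hg_mem n)
  have hgn : ∀ n, (∑ l ∈ (cs n).support, (cs n) l • fourier (T := 2*Real.pi) l) = g n := by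
    intro n
    rw [← hcs n]
    rfl
  set ΛL : (ℤ →₀ ℂ) →ₗ[ℂ] (ellTwo H →L[ℂ] ellTwo H) :=
    Finsupp.lsum ℂ (fun l => LinearMap.toSpanSingleton ℂ _ (Sop l)) with hΛL
  have hΛeq : ∀ c : ℤ →₀ ℂ, ΛL c = ∑ l ∈ c.support, c l • Sop l := by
    intro c
    rw [hΛL]
    simp [Finsupp.lsum_apply, Finsupp.sum, LinearMap.toSpanSingleton_apply]
  set ΓL : (ℤ →₀ ℂ) →ₗ[ℂ] C(AddCircle (2*Real.pi), ℂ) :=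
    Finsupp.lsum ℂ (fun l => LinearMap.toSpanSingleton ℂ _ (fourier l)) with hΓL
  have hΓeq : ∀ c : ℤ →₀ ℂ, ΓL c = ∑ l ∈ c.support, c l • fourier (T := 2*Real.pi) l := by
    intro c
    rw [hΓL]
    simp [Finsupp.lsum_apply, Finsupp.sum, LinearMap.toSpanSingleton_apply]
  have hbound : ∀ c : ℤ →₀ ℂ, ‖ΛL c‖ ≤ ‖ΓL c‖ := by
    intro c
    rw [hΛeq, hΓeq]
    exact lambda_norm_le Sop hSapp' c
  have hΓg : ∀ n, ΓL (cs n) = g n := fun n => by rw [hΓeq]; exact hgn n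
  have hgc : CauchySeq g := hg_lim.cauchySeq
  have hcauchy : CauchySeq (fun n => ΛL (cs n)) := by
    rw [Metric.cauchySeq_iff] at hgc ⊢
    intro ε hε
    obtain ⟨N, hN⟩ := hgc ε hε
    refine ⟨N, fun m hm n hn => ?_⟩
    have h1 : dist (ΛL (cs m)) (ΛL (cs n)) ≤ dist (g m) (g n) := by
      rw [dist_eq_norm, dist_eq_norm, ← map_sub]
      calc ‖ΛL (cs m - cs n)‖ ≤ ‖ΓL (cs m - cs n)‖ := hbound _
        _ = ‖g m - g n‖ := by rw [map_sub, hΓg, hΓg]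
    exact lt_of_le_of_lt h1 (hN m hm n hn)
  obtain ⟨A, hA⟩ := cauchySeq_tendsto_of_complete hcauchy
  have hcoef : ∀ l : ℤ, Filter.Tendsto (fun n => (cs n) l) Filter.atTop
      (𝓝 (scalarFourierCoeff f l)) := by
    intro l
    have hb : ∀ n, ‖(cs n) l - scalarFourierCoeff f l‖ ≤ ‖g n - fc‖ := by
      intro n
      have h1 : (cs n) l = scalarFourierCoeff
          (fun t => ∑ m ∈ (cs n).support, (cs n) m * Complex.exp (Complex.I * m * t)) l :=
        (scalarFourierCoeff_trig (cs n) l).symm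
      rw [h1]
      refine scalarFourierCoeff_dist _ _
        (show Continuous fun t : ℝ =>
          ∑ m ∈ (cs n).support, (cs n) m * Complex.exp (Complex.I * m * t) from
          continuous_finset_sum _ fun m _ => continuous_const.mul (cont_exp_int _)) hfc _ ?_ l
      intro t
      have h2 : (∑ m ∈ (cs n).support, (cs n) m * Complex.exp (Complex.I * m * t))
          = (g n) ((t:ℝ) : AddCircle (2*Real.pi)) := by
        rw [← hgn n, gamma_apply]
      rw [h2, ← hfc_coe t]
      calc ‖g n ((t:ℝ) : AddCircle (2*Real.pi)) - fc ((t:ℝ) : AddCircle (2*Real.pi))‖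
          = ‖(g n - fc) ((t:ℝ) : AddCircle (2*Real.pi))‖ := by rw [ContinuousMap.sub_apply]
        _ ≤ ‖g n - fc‖ := ContinuousMap.norm_coe_le_norm _ _
    have h0 : Filter.Tendsto (fun n => ‖g n - fc‖) Filter.atTop (𝓝 0) :=
      (tendsto_iff_norm_sub_tendsto_zero.mp hg_lim)
    have h6 : Filter.Tendsto (fun n => (cs n) l - scalarFourierCoeff f l) Filter.atTop (𝓝 0) :=
      squeeze_zero_norm hb h0
    exact tendsto_sub_nhds_zero_iff.mp h6
  refine ⟨A, ?_, ?_⟩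
  · intro j x k
    have h1 : Filter.Tendsto (fun n => (evalCLM k) ((ΛL (cs n)) (lp.single 2 j x)))
        Filter.atTop (𝓝 ((evalCLM k) (A (lp.single 2 j x)))) := by
      have hcont := ((evalCLM (H := H) k).comp
        (ContinuousLinearMap.apply ℂ (ellTwo H) (lp.single 2 j x : ellTwo H))).continuous
      exact (hcont.tendsto A).comp hA
    have h2 : ∀ n, (evalCLM k) ((ΛL (cs n)) (lp.single 2 j x)) = (cs n) ((j:ℤ)-(k:ℤ)) • x := by
      intro n
      rw [hΛeq]
      exact hsingle (cs n) j x k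
    have h1' : Filter.Tendsto (fun n => (cs n) ((j:ℤ)-(k:ℤ)) • x)
        Filter.atTop (𝓝 ((evalCLM k) (A (lp.single 2 j x)))) := by
      refine Filter.Tendsto.congr (fun n => h2 n) h1
    have h3 : Filter.Tendsto (fun n => (cs n) ((j:ℤ)-(k:ℤ)) • x)
        Filter.atTop (𝓝 (scalarFourierCoeff f ((j:ℤ)-(k:ℤ)) • x)) :=
      (hcoef _).smul_const x
    have h4 := tendsto_nhds_unique h1' h3
    beta_reduce
    calc (A (lp.single 2 j x) : ∀ _:ℕ,H) k = (evalCLM k) (A (lp.single 2 j x)) := rfl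
      _ = scalarFourierCoeff f ((j:ℤ)-(k:ℤ)) • x := h4
      _ = (scalarFourierCoeff f ((j:ℤ)-(k:ℤ)) • ContinuousLinearMap.id ℂ H) x := by simp
  · refine mem_closure_of_tendsto hA (Filter.Eventually.of_forall fun n => ?_)
    refine ⟨fun k j => (cs n) ((j:ℤ)-(k:ℤ)) • ContinuousLinearMap.id ℂ H,
      ⟨⟨(cs n).support.sup Int.natAbs, ?_⟩, ⟨∑ l ∈ (cs n).support, ‖(cs n) l‖, ?_⟩⟩, ?_⟩
    · intro k j h
      beta_reduce
      have hnm : ((j:ℤ)-(k:ℤ)) ∉ (cs n).support := by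
        intro hmem
        have h7 := Finset.le_sup (f := Int.natAbs) hmem
        rw [Int.abs_eq_natAbs] at h
        omega
      rw [Finsupp.notMem_support_iff.mp hnm, zero_smul]
    · intro k j
      beta_reduce
      have h1 : ‖(cs n) ((j:ℤ)-(k:ℤ)) • ContinuousLinearMap.id ℂ H‖
          ≤ ‖(cs n) ((j:ℤ)-(k:ℤ))‖ := by
        rw [norm_smul]
        calc ‖(cs n) ((j:ℤ)-(k:ℤ))‖ * ‖ContinuousLinearMap.id ℂ H‖
            ≤ ‖(cs n) ((j:ℤ)-(k:ℤ))‖ * 1 :=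
              mul_le_mul_of_nonneg_left ContinuousLinearMap.norm_id_le (norm_nonneg _)
          _ = ‖(cs n) ((j:ℤ)-(k:ℤ))‖ := mul_one _
      refine h1.trans ?_
      by_cases hmem : ((j:ℤ)-(k:ℤ)) ∈ (cs n).support
      · exact Finset.single_le_sum (fun l _ => norm_nonneg _) hmem
      · rw [Finsupp.notMem_support_iff.mp hmem, norm_zero]
        exact Finset.sum_nonneg fun l _ => norm_nonneg _
    · intro j x k
      beta_reduce
      have h8 : ((ΛL (cs n)) (lp.single 2 j x) : ∀ _:ℕ,H) k = (cs n) ((j:ℤ)-(k:ℤ)) • x := by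
        rw [hΛeq]
        exact hsingle (cs n) j x k
      rw [h8]
      simp

end WAux


/-- `𝒜(ℓ²(H)) ⊊ 𝒞(ℓ²(H))`: every Wiener-class matrix gives an operator in
`𝒞(ℓ²(H))`, while for any continuous `f` on `𝕋` whose Fourier series is not absolutely
convergent, the Toeplitz matrix `M_f = (f̂(j−k)·Id)` gives an operator in `𝒞(ℓ²(H))`
although `M_f` is not in the Wiener class. -/
theorem wiener_strict_subset_continuousClass [Nontrivial H] :
    (∀ T : ℕ → ℕ → (H →L[ℂ] H), WienerMat T →
      ∃ A : ellTwo H →L[ℂ] ellTwo H, Represents T A ∧ ContinuousClass A) ∧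
    (∀ f : ℝ → ℂ, Continuous f → Function.Periodic f (2 * Real.pi) →
      (¬ Summable fun l : ℤ => ‖scalarFourierCoeff f l‖) →
      ((∃ A : ellTwo H →L[ℂ] ellTwo H,
          Represents (fun k j => scalarFourierCoeff f ((j : ℤ) - (k : ℤ)) •
            ContinuousLinearMap.id ℂ H) A ∧ ContinuousClass A) ∧
        ¬ WienerMat (fun k j => scalarFourierCoeff f ((j : ℤ) - (k : ℤ)) •
            ContinuousLinearMap.id ℂ H))) := by
  constructor
  · exact fun T hT => WAux.part1 T hT
  · intro f hfc hfp hns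
    exact ⟨WAux.part2a f hfc hfp, WAux.part2b f hns⟩
end
end

section
/- Let A = (a_{kj}) be a scalar Schur multiplier on B(ℓ²) and T ∈ B(H). Then 𝐀 = (a_{kj} T) is both a left and right Schur multiplier on B(ℓ²(H)), and ‖𝐀‖_{M_l(ℓ²(H))} = ‖𝐀‖_{M_r(ℓ²(H))} = ‖A‖_{M(ℓ²)} · ‖T‖_{B(H)}. -/
noncomputable section

variable {H : Type} [NormedAddCommGroup H] [InnerProductSpace ℂ H] [CompleteSpace H]
  [TopologicalSpace.SeparableSpace H]

/-- `C` is a bound for `T` as a right Schur multiplier: for every bounded `B = (S_{kj})`,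
the Schur product `B * A = (S_{kj} ∘ T_{kj})` is bounded with norm at most `C ‖B‖`. -/
def IsRightMultBound (T : ℕ → ℕ → (H →L[ℂ] H)) (C : ℝ) : Prop :=
  ∀ (S : ℕ → ℕ → (H →L[ℂ] H)) (B : ellTwo H →L[ℂ] ellTwo H), Represents S B →
    ∃ AB : ellTwo H →L[ℂ] ellTwo H,
      Represents (fun k j => (S k j).comp (T k j)) AB ∧ ‖AB‖ ≤ C * ‖B‖

/-- `C` is a bound for `T` as a left Schur multiplier: for every bounded `B = (S_{kj})`,
the Schur product `A * B = (T_{kj} ∘ S_{kj})` is bounded with norm at most `C ‖B‖`. -/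
def IsLeftMultBound (T : ℕ → ℕ → (H →L[ℂ] H)) (C : ℝ) : Prop :=
  ∀ (S : ℕ → ℕ → (H →L[ℂ] H)) (B : ellTwo H →L[ℂ] ellTwo H), Represents S B →
    ∃ AB : ellTwo H →L[ℂ] ellTwo H,
      Represents (fun k j => (T k j).comp (S k j)) AB ∧ ‖AB‖ ≤ C * ‖B‖

/-- The right Schur-multiplier norm `‖T‖_{M_r(ℓ²(H))}`. -/
def rightMultNorm (T : ℕ → ℕ → (H →L[ℂ] H)) : ℝ :=
  sInf {C : ℝ | 0 ≤ C ∧ IsRightMultBound T C}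

/-- The left Schur-multiplier norm `‖T‖_{M_l(ℓ²(H))}`. -/
def leftMultNorm (T : ℕ → ℕ → (H →L[ℂ] H)) : ℝ :=
  sInf {C : ℝ | 0 ≤ C ∧ IsLeftMultBound T C}

/-- A bounded operator on scalar `ℓ²` represented by the scalar matrix `a = (a_{kj})`. -/
def RepresentsC (a : ℕ → ℕ → ℂ) (A : ellTwo ℂ →L[ℂ] ellTwo ℂ) : Prop :=
  ∀ (j : ℕ) (c : ℂ) (k : ℕ), A (lp.single 2 j c) k = a k j * c

/-- `C` is a bound for the scalar matrix `a` as a Schur multiplier on `B(ℓ²)`. -/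
def IsScalarMultBound (a : ℕ → ℕ → ℂ) (C : ℝ) : Prop :=
  ∀ (b : ℕ → ℕ → ℂ) (B : ellTwo ℂ →L[ℂ] ellTwo ℂ), RepresentsC b B →
    ∃ AB : ellTwo ℂ →L[ℂ] ellTwo ℂ,
      RepresentsC (fun k j => a k j * b k j) AB ∧ ‖AB‖ ≤ C * ‖B‖

/-- The scalar Schur multiplier norm `‖a‖_{M(ℓ²)}`. -/
def scalarMultNorm (a : ℕ → ℕ → ℂ) : ℝ :=
  sInf {C : ℝ | 0 ≤ C ∧ IsScalarMultBound a C}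

open scoped InnerProductSpace ENNReal

section Helpers
variable {E F : Type} [NormedAddCommGroup E] [InnerProductSpace ℂ E]
  [NormedAddCommGroup F] [InnerProductSpace ℂ F]

lemma two_toReal : ((2 : ℝ≥0∞)).toReal = 2 := by simp

lemma sq_rpow (x : ℝ) (hx : 0 ≤ x) : x ^ ((2:ℝ≥0∞)).toReal = x ^ 2 := by
  rw [two_toReal, Real.rpow_two]

lemma memℓp_two_of_sum_sq_le {f : ℕ → E} {A : ℝ}
    (h : ∀ s : Finset ℕ, ∑ i ∈ s, ‖f i‖ ^ 2 ≤ A) : Memℓp f 2 := by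
  apply memℓp_gen' (C := A)
  intro s
  calc ∑ i ∈ s, ‖f i‖ ^ ((2:ℝ≥0∞)).toReal = ∑ i ∈ s, ‖f i‖ ^ 2 := by
        refine Finset.sum_congr rfl fun i _ => sq_rpow _ (norm_nonneg _)
    _ ≤ A := h s

lemma lp_sum_sq_le (f : ellTwo E) (s : Finset ℕ) : ∑ i ∈ s, ‖f i‖ ^ 2 ≤ ‖f‖ ^ 2 := by
  have h := lp.hasSum_norm (p := 2) (by rw [two_toReal]; norm_num) f
  have := sum_le_hasSum s (fun i _ => Real.rpow_nonneg (norm_nonneg _) _) h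
  calc ∑ i ∈ s, ‖f i‖ ^ 2 = ∑ i ∈ s, ‖f i‖ ^ ((2:ℝ≥0∞)).toReal := by
        refine Finset.sum_congr rfl fun i _ => (sq_rpow _ (norm_nonneg _)).symm
    _ ≤ ‖f‖ ^ ((2:ℝ≥0∞)).toReal := this
    _ = ‖f‖ ^ 2 := sq_rpow _ (norm_nonneg _)

lemma lp_norm_le_of_sum_sq_le {f : ellTwo E} {A : ℝ} (hA : 0 ≤ A)
    (h : ∀ s : Finset ℕ, ∑ i ∈ s, ‖f i‖ ^ 2 ≤ A ^ 2) : ‖f‖ ≤ A := by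
  have hs := lp.hasSum_norm (p := 2) (by rw [two_toReal]; norm_num) f
  have h2 : ‖f‖ ^ ((2:ℝ≥0∞)).toReal ≤ A ^ 2 := by
    refine hasSum_le_of_sum_le hs fun s => ?_
    calc ∑ i ∈ s, ‖f i‖ ^ ((2:ℝ≥0∞)).toReal = ∑ i ∈ s, ‖f i‖ ^ 2 := by
          refine Finset.sum_congr rfl fun i _ => sq_rpow _ (norm_nonneg _)
      _ ≤ A ^ 2 := h s
  rw [sq_rpow _ (norm_nonneg _)] at h2
  exact le_of_pow_le_pow_left₀ two_ne_zero hA h2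

end Helpers

section Diag
variable {E F : Type} [NormedAddCommGroup E] [InnerProductSpace ℂ E]
  [NormedAddCommGroup F] [InnerProductSpace ℂ F]

lemma memℓp_diag (T : ℕ → E →L[ℂ] F) {M : ℝ} (hM : ∀ i, ‖T i‖ ≤ M) (f : ellTwo E) :
    Memℓp (fun k => T k (f k)) 2 := by
  have hM0 : 0 ≤ M := le_trans (norm_nonneg _) (hM 0)
  refine memℓp_two_of_sum_sq_le (A := M ^ 2 * ‖f‖ ^ 2) fun s => ?_
  calc ∑ i ∈ s, ‖T i (f i)‖ ^ 2 ≤ ∑ i ∈ s, M ^ 2 * ‖f i‖ ^ 2 := by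
        refine Finset.sum_le_sum fun i _ => ?_
        have h1 : ‖T i (f i)‖ ≤ M * ‖f i‖ :=
          le_trans ((T i).le_opNorm _) (mul_le_mul_of_nonneg_right (hM i) (norm_nonneg _))
        calc ‖T i (f i)‖ ^ 2 ≤ (M * ‖f i‖) ^ 2 :=
              pow_le_pow_left₀ (norm_nonneg _) h1 2
          _ = M ^ 2 * ‖f i‖ ^ 2 := by ring
    _ ≤ M ^ 2 * ‖f‖ ^ 2 := by
        rw [← Finset.mul_sum]
        exact mul_le_mul_of_nonneg_left (lp_sum_sq_le f s) (by positivity)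

end Diag

section Diag2
variable {E F : Type} [NormedAddCommGroup E] [InnerProductSpace ℂ E]
  [NormedAddCommGroup F] [InnerProductSpace ℂ F]

/-- Diagonal operator between `ℓ²` spaces from a uniformly bounded family. -/
def lpDiag (T : ℕ → E →L[ℂ] F) {M : ℝ} (hM : ∀ i, ‖T i‖ ≤ M) :
    ellTwo E →L[ℂ] ellTwo F :=
  LinearMap.mkContinuous
    { toFun := fun f => ⟨fun k => T k (f k), memℓp_diag T hM f⟩
      map_add' := fun f g => by
        apply lp.ext
        funext k
        simp [lp.coeFn_add, Pi.add_apply]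
        rfl
      map_smul' := fun c f => by
        apply lp.ext
        funext k
        simp [lp.coeFn_smul, Pi.smul_apply] }
    M
    (by
      intro f
      have hM0 : 0 ≤ M := le_trans (norm_nonneg _) (hM 0)
      refine lp_norm_le_of_sum_sq_le (by positivity) fun s => ?_
      calc ∑ i ∈ s, ‖T i (f i)‖ ^ 2 ≤ ∑ i ∈ s, M ^ 2 * ‖f i‖ ^ 2 := by
            refine Finset.sum_le_sum fun i _ => ?_
            have h1 : ‖T i (f i)‖ ≤ M * ‖f i‖ :=
              le_trans ((T i).le_opNorm _) (mul_le_mul_of_nonneg_right (hM i) (norm_nonneg _))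
            calc ‖T i (f i)‖ ^ 2 ≤ (M * ‖f i‖) ^ 2 := pow_le_pow_left₀ (norm_nonneg _) h1 2
              _ = M ^ 2 * ‖f i‖ ^ 2 := by ring
        _ ≤ M ^ 2 * ‖f‖ ^ 2 := by
            rw [← Finset.mul_sum]
            exact mul_le_mul_of_nonneg_left (lp_sum_sq_le f s) (by positivity)
        _ = (M * ‖f‖) ^ 2 := by ring)

@[simp] lemma lpDiag_apply (T : ℕ → E →L[ℂ] F) {M : ℝ} (hM : ∀ i, ‖T i‖ ≤ M)
    (f : ellTwo E) (k : ℕ) : (lpDiag T hM f) k = T k (f k) := rfl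

lemma lpDiag_norm_le (T : ℕ → E →L[ℂ] F) {M : ℝ} (hM : ∀ i, ‖T i‖ ≤ M) :
    ‖lpDiag T hM‖ ≤ M :=
  LinearMap.mkContinuous_norm_le _ (le_trans (norm_nonneg _) (hM 0)) _

lemma lpDiag_single (T : ℕ → E →L[ℂ] F) {M : ℝ} (hM : ∀ i, ‖T i‖ ≤ M) (j : ℕ) (x : E) :
    lpDiag T hM (lp.single 2 j x) = lp.single 2 j (T j x) := by
  apply lp.ext
  funext k
  rcases eq_or_ne k j with rfl | hk
  · simp [lp.single_apply_self]
  · simp [lp.single_apply_ne _ _ _ hk, Pi.single_apply, hk]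

end Diag2
section Core
variable {H : Type} [NormedAddCommGroup H] [InnerProductSpace ℂ H] [CompleteSpace H]
  [TopologicalSpace.SeparableSpace H]

/-- normalization of a vector -/
def nz (x : H) : H := open Classical in if x = 0 then 0 else (‖x‖ : ℂ)⁻¹ • x

lemma nz_norm_le (x : H) : ‖nz x‖ ≤ 1 := by
  unfold nz
  classical
  split_ifs with h
  · simp
  · rw [norm_smul, norm_inv]
    simp only [Complex.norm_real, norm_norm]
    rw [inv_mul_cancel₀ (norm_ne_zero_iff.2 h)]

lemma nz_smul (x : H) : (‖x‖ : ℂ) • nz x = x := by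
  unfold nz
  classical
  split_ifs with h
  · simp [h]
  · rw [smul_smul, mul_inv_cancel₀ (by exact_mod_cast norm_ne_zero_iff.2 h), one_smul]

/-- Compression of an operator-matrix operator to a scalar-matrix operator along
families of (almost) unit vectors. -/
lemma compress_exists (S : ℕ → ℕ → (H →L[ℂ] H)) (B : ellTwo H →L[ℂ] ellTwo H)
    (hB : Represents S B) (η ξ : ℕ → H) :
    ∃ Bt : ellTwo ℂ →L[ℂ] ellTwo ℂ,
      RepresentsC (fun k j => ⟪nz (η k), S k j (nz (ξ j))⟫_ℂ) Bt ∧ ‖Bt‖ ≤ ‖B‖ := by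
  have hV : ∀ j, ‖ContinuousLinearMap.toSpanSingleton ℂ (nz (ξ j))‖ ≤ (1:ℝ) := fun j => by
    rw [ContinuousLinearMap.norm_toSpanSingleton]; exact nz_norm_le _
  have hW : ∀ k, ‖innerSL ℂ (nz (η k))‖ ≤ (1:ℝ) := fun k => by
    rw [innerSL_apply_norm]; exact nz_norm_le _
  set V := lpDiag (fun j => ContinuousLinearMap.toSpanSingleton ℂ (nz (ξ j))) hV
  set W := lpDiag (fun k => innerSL ℂ (nz (η k))) hW
  refine ⟨(W.comp B).comp V, ?_, ?_⟩
  · intro j c k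
    show W (B (V (lp.single 2 j c))) k = _
    rw [show V (lp.single 2 j c) = lp.single 2 j (c • nz (ξ j)) from lpDiag_single _ _ _ _]
    have : B (lp.single 2 j (c • nz (ξ j))) k = S k j (c • nz (ξ j)) := hB j _ k
    rw [lpDiag_apply, this]
    simp [inner_smul_right, mul_comm]
  · have hV' : ‖V‖ ≤ 1 := lpDiag_norm_le _ hV
    have hW' : ‖W‖ ≤ 1 := lpDiag_norm_le _ hW
    calc ‖(W.comp B).comp V‖ ≤ ‖W.comp B‖ * ‖V‖ := ContinuousLinearMap.opNorm_comp_le _ _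
      _ ≤ (‖W‖ * ‖B‖) * ‖V‖ :=
          mul_le_mul_of_nonneg_right (ContinuousLinearMap.opNorm_comp_le _ _)
            (ContinuousLinearMap.opNorm_nonneg _)
      _ ≤ (1 * ‖B‖) * 1 := by
          have h0 := ContinuousLinearMap.opNorm_nonneg B
          have h1 := ContinuousLinearMap.opNorm_nonneg V
          have h2 := ContinuousLinearMap.opNorm_nonneg W
          gcongr <;> positivity
      _ = ‖B‖ := by ring

end Core

section CoreIneq
open ComplexConjugate
variable {H : Type} [NormedAddCommGroup H] [InnerProductSpace ℂ H] [CompleteSpace H]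
  [TopologicalSpace.SeparableSpace H]

lemma inner_factor (S : H →L[ℂ] H) (x y : H) :
    ⟪x, S y⟫_ℂ = (‖x‖ : ℂ) * (‖y‖ : ℂ) * ⟪nz x, S (nz y)⟫_ℂ := by
  conv_lhs => rw [← nz_smul x, ← nz_smul y]
  rw [map_smul, inner_smul_left, inner_smul_right, Complex.conj_ofReal]
  ring

lemma norm_sum_single_sqrt (f : ℕ → ℝ) (K : Finset ℕ) :
    ‖∑ k ∈ K, lp.single (E := fun _ : ℕ => ℂ) 2 k (f k : ℂ)‖ =
      Real.sqrt (∑ k ∈ K, ‖f k‖ ^ 2) := by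
  have h2 : (0:ℝ) < ((2 : ℝ≥0∞)).toReal := by rw [two_toReal]; norm_num
  have hs := lp.norm_sum_single (E := fun _ : ℕ => ℂ) h2 (fun k => (f k : ℂ)) K
  rw [two_toReal] at hs
  simp only [Real.rpow_two] at hs
  rw [← Real.sqrt_sq (norm_nonneg _), hs]
  congr 1
  exact Finset.sum_congr rfl fun k _ => by rw [Complex.norm_real]

lemma core_ineq {a : ℕ → ℕ → ℂ} {D : ℝ} (hD0 : 0 ≤ D) (hD : IsScalarMultBound a D)
    {S : ℕ → ℕ → (H →L[ℂ] H)} {B : ellTwo H →L[ℂ] ellTwo H} (hB : Represents S B)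
    (η ξ : ℕ → H) (K F : Finset ℕ) :
    ‖∑ k ∈ K, ∑ j ∈ F, a k j * ⟪η k, S k j (ξ j)⟫_ℂ‖ ≤
      (D * ‖B‖) * (Real.sqrt (∑ k ∈ K, ‖η k‖ ^ 2) * Real.sqrt (∑ j ∈ F, ‖ξ j‖ ^ 2)) := by
  obtain ⟨Bt, hBt, hBtn⟩ := compress_exists S B hB η ξ
  obtain ⟨M, hM, hMn⟩ := hD _ Bt hBt
  set u : ellTwo ℂ := ∑ k ∈ K, lp.single 2 k ((‖η k‖ : ℂ)) with hu
  set w : ellTwo ℂ := ∑ j ∈ F, lp.single 2 j ((‖ξ j‖ : ℂ)) with hw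
  have hMw : ∀ k, (M w) k = ∑ j ∈ F, a k j * ⟪nz (η k), S k j (nz (ξ j))⟫_ℂ * (‖ξ j‖ : ℂ) := by
    intro k
    rw [hw, map_sum]
    rw [lp.coeFn_sum, Finset.sum_apply]
    exact Finset.sum_congr rfl fun j _ => hM j _ k
  have key : ⟪u, M w⟫_ℂ = ∑ k ∈ K, ∑ j ∈ F, a k j * ⟪η k, S k j (ξ j)⟫_ℂ := by
    rw [hu, sum_inner]
    refine Finset.sum_congr rfl fun k _ => ?_
    rw [lp.inner_single_left, RCLike.inner_apply, Complex.conj_ofReal, hMw k,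
      Finset.sum_mul]
    refine Finset.sum_congr rfl fun j _ => ?_
    rw [inner_factor (S k j) (η k) (ξ j)]
    ring
  have hMnorm : ‖M‖ ≤ D * ‖B‖ := le_trans hMn (mul_le_mul_of_nonneg_left hBtn hD0)
  calc ‖∑ k ∈ K, ∑ j ∈ F, a k j * ⟪η k, S k j (ξ j)⟫_ℂ‖ = ‖⟪u, M w⟫_ℂ‖ := by rw [key]
    _ ≤ ‖u‖ * ‖M w‖ := norm_inner_le_norm _ _
    _ ≤ ‖u‖ * (‖M‖ * ‖w‖) := by
        exact mul_le_mul_of_nonneg_left (M.le_opNorm w) (norm_nonneg _)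
    _ ≤ ‖u‖ * ((D * ‖B‖) * ‖w‖) := by
        have := norm_nonneg u; have := norm_nonneg w
        exact mul_le_mul_of_nonneg_left (mul_le_mul_of_nonneg_right hMnorm (norm_nonneg _))
          (norm_nonneg _)
    _ = (D * ‖B‖) * (‖u‖ * ‖w‖) := by ring
    _ = (D * ‖B‖) * (Real.sqrt (∑ k ∈ K, ‖η k‖ ^ 2) * Real.sqrt (∑ j ∈ F, ‖ξ j‖ ^ 2)) := by
        rw [hu, hw, norm_sum_single_sqrt, norm_sum_single_sqrt]
        have e1 : ∑ k ∈ K, ‖‖η k‖‖ ^ 2 = ∑ k ∈ K, ‖η k‖ ^ 2 :=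
          Finset.sum_congr rfl fun k _ => by rw [norm_norm]
        have e2 : ∑ j ∈ F, ‖‖ξ j‖‖ ^ 2 = ∑ j ∈ F, ‖ξ j‖ ^ 2 :=
          Finset.sum_congr rfl fun j _ => by rw [norm_norm]
        rw [e1, e2]

end CoreIneq

section Col
variable {H : Type} [NormedAddCommGroup H] [InnerProductSpace ℂ H] [CompleteSpace H]
  [TopologicalSpace.SeparableSpace H]

lemma col_elem {a : ℕ → ℕ → ℂ} {D : ℝ} (hD0 : 0 ≤ D) (hD : IsScalarMultBound a D)
    {S : ℕ → ℕ → (H →L[ℂ] H)} {B : ellTwo H →L[ℂ] ellTwo H} (hB : Represents S B)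
    (ξ : ℕ → H) (F : Finset ℕ) :
    ∃ g : ellTwo H, (∀ k, g k = ∑ j ∈ F, a k j • S k j (ξ j)) ∧
      ‖g‖ ≤ (D * ‖B‖) * Real.sqrt (∑ j ∈ F, ‖ξ j‖ ^ 2) := by
  set g0 : ℕ → H := fun k => ∑ j ∈ F, a k j • S k j (ξ j) with hg0
  set R : ℝ := Real.sqrt (∑ j ∈ F, ‖ξ j‖ ^ 2) with hR
  have hR0 : 0 ≤ R := Real.sqrt_nonneg _
  have hDB0 : 0 ≤ D * ‖B‖ := mul_nonneg hD0 (norm_nonneg _)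
  -- key partial-sum estimate
  have hsum : ∀ K : Finset ℕ, ∑ k ∈ K, ‖g0 k‖ ^ 2 ≤ ((D * ‖B‖) * R) ^ 2 := by
    intro K
    have hcore := core_ineq hD0 hD hB g0 ξ K F
    have hidentify : ∑ k ∈ K, ∑ j ∈ F, a k j * ⟪g0 k, S k j (ξ j)⟫_ℂ =
        ((∑ k ∈ K, ‖g0 k‖ ^ 2 : ℝ) : ℂ) := by
      push_cast
      refine Finset.sum_congr rfl fun k _ => ?_
      have : ∑ j ∈ F, a k j * ⟪g0 k, S k j (ξ j)⟫_ℂ = ⟪g0 k, g0 k⟫_ℂ := by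
        rw [hg0]
        rw [inner_sum]
        exact Finset.sum_congr rfl fun j _ => by rw [inner_smul_right]
      rw [this, inner_self_eq_norm_sq_to_K]
      norm_cast
    rw [hidentify] at hcore
    rw [Complex.norm_real] at hcore
    have hKnn : 0 ≤ ∑ k ∈ K, ‖g0 k‖ ^ 2 :=
      Finset.sum_nonneg fun k _ => sq_nonneg _
    rw [Real.norm_of_nonneg hKnn] at hcore
    set t : ℝ := Real.sqrt (∑ k ∈ K, ‖g0 k‖ ^ 2) with ht
    have ht2 : t ^ 2 = ∑ k ∈ K, ‖g0 k‖ ^ 2 := Real.sq_sqrt hKnn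
    have hcore' : t ^ 2 ≤ (D * ‖B‖) * (t * R) := by rw [ht2]; exact hcore
    have htnn : (0:ℝ) ≤ t := Real.sqrt_nonneg _
    have htle : t ≤ (D * ‖B‖) * R := by
      nlinarith [hcore', htnn, hDB0, hR0, mul_nonneg hDB0 hR0]
    calc ∑ k ∈ K, ‖g0 k‖ ^ 2 = t ^ 2 := ht2.symm
      _ ≤ ((D * ‖B‖) * R) ^ 2 := by
          have := mul_nonneg hDB0 hR0
          nlinarith
  have hmem : Memℓp g0 2 := memℓp_two_of_sum_sq_le hsum
  refine ⟨⟨g0, hmem⟩, fun k => rfl, ?_⟩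
  exact lp_norm_le_of_sum_sq_le (by positivity) hsum

end Col

section Amplify
variable {H : Type} [NormedAddCommGroup H] [InnerProductSpace ℂ H] [CompleteSpace H]
  [TopologicalSpace.SeparableSpace H]

lemma summable_sq (f : ellTwo H) : Summable fun j => ‖f j‖ ^ 2 := by
  have h2 : (0:ℝ) < ((2 : ℝ≥0∞)).toReal := by rw [two_toReal]; norm_num
  have := (lp.memℓp f).summable h2
  refine this.congr fun j => sq_rpow _ (norm_nonneg _)

/-- Amplification: a scalar Schur multiplier bound gives an entrywise
multiplication bound on operator matrices. -/
lemma amplify {a : ℕ → ℕ → ℂ} {D : ℝ} (hD0 : 0 ≤ D) (hD : IsScalarMultBound a D)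
    (S : ℕ → ℕ → (H →L[ℂ] H)) (B : ellTwo H →L[ℂ] ellTwo H) (hB : Represents S B) :
    ∃ AB : ellTwo H →L[ℂ] ellTwo H,
      Represents (fun k j => a k j • S k j) AB ∧ ‖AB‖ ≤ D * ‖B‖ := by
  classical
  have hDB0 : 0 ≤ D * ‖B‖ := mul_nonneg hD0 (norm_nonneg _)
  -- the columns
  have hcol : ∀ (j : ℕ) (x : H), ∃ g : ellTwo H,
      (∀ k, g k = a k j • S k j x) ∧ ‖g‖ ≤ (D * ‖B‖) * ‖x‖ := by
    intro j x
    obtain ⟨g, hg, hgn⟩ := col_elem hD0 hD hB (fun _ => x) {j}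
    refine ⟨g, fun k => by rw [hg k, Finset.sum_singleton], ?_⟩
    rw [Finset.sum_singleton, Real.sqrt_sq (norm_nonneg x)] at hgn
    exact hgn
  choose col hcol1 hcol2 using hcol
  have colext : ∀ (j : ℕ) (x : H) (g : ellTwo H),
      (∀ k, g k = a k j • S k j x) → g = col j x := by
    intro j x g hg
    apply lp.ext; funext k; rw [hg k, hcol1 j x k]
  have col_zero : ∀ j, col j 0 = 0 := by
    intro j
    symm
    exact colext j 0 0 (fun k => by simp)
  -- partial sums
  have hpartial : ∀ (f : ellTwo H) (t : Finset ℕ),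
      ‖∑ j ∈ t, col j (f j)‖ ≤ (D * ‖B‖) * Real.sqrt (∑ j ∈ t, ‖f j‖ ^ 2) := by
    intro f t
    obtain ⟨g, hg, hgn⟩ := col_elem hD0 hD hB (fun j => f j) t
    have : ∑ j ∈ t, col j (f j) = g := by
      apply lp.ext
      funext k
      rw [lp.coeFn_sum, Finset.sum_apply, hg k]
      exact Finset.sum_congr rfl fun j _ => by rw [hcol1]
    rw [this]; exact hgn
  -- summability
  have hsummable : ∀ f : ellTwo H, Summable fun j => col j (f j) := by
    intro f
    rw [summable_iff_vanishing_norm]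
    intro ε hε
    have hδ : (0:ℝ) < (ε / (D * ‖B‖ + 1)) ^ 2 := by positivity
    obtain ⟨s, hs⟩ := summable_iff_vanishing_norm.mp (summable_sq f) _ hδ
    refine ⟨s, fun t ht => ?_⟩
    have h1 : ∑ j ∈ t, ‖f j‖ ^ 2 ≤ (ε / (D * ‖B‖ + 1)) ^ 2 := by
      have := hs t ht
      have hnn : 0 ≤ ∑ j ∈ t, ‖f j‖ ^ 2 := Finset.sum_nonneg fun _ _ => sq_nonneg _
      rw [Real.norm_of_nonneg hnn] at this
      exact this.le
    have h2 : Real.sqrt (∑ j ∈ t, ‖f j‖ ^ 2) ≤ ε / (D * ‖B‖ + 1) := by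
      rw [show ε / (D * ‖B‖ + 1) = Real.sqrt ((ε / (D * ‖B‖ + 1)) ^ 2) from
        (Real.sqrt_sq (by positivity)).symm]
      exact Real.sqrt_le_sqrt h1
    calc ‖∑ j ∈ t, col j (f j)‖ ≤ (D * ‖B‖) * Real.sqrt (∑ j ∈ t, ‖f j‖ ^ 2) := hpartial f t
      _ ≤ (D * ‖B‖) * (ε / (D * ‖B‖ + 1)) := mul_le_mul_of_nonneg_left h2 hDB0
      _ < ε := by
          rw [div_eq_inv_mul]
          have h3 : (D * ‖B‖) * ((D * ‖B‖ + 1)⁻¹ * ε) < 1 * ε := by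
            have h4 : (D * ‖B‖) * (D * ‖B‖ + 1)⁻¹ < 1 := by
              rw [mul_inv_lt_iff₀ (by positivity)]
              linarith
            calc (D * ‖B‖) * ((D * ‖B‖ + 1)⁻¹ * ε) = ((D * ‖B‖) * (D * ‖B‖ + 1)⁻¹) * ε := by
                  ring
              _ < 1 * ε := by exact mul_lt_mul_of_pos_right h4 hε
          linarith
  -- the operator
  set g : ellTwo H → ellTwo H := fun f => ∑' j, col j (f j) with hgdef
  have hgsum : ∀ f : ellTwo H, HasSum (fun j => col j (f j)) (g f) :=
    fun f => (hsummable f).hasSum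
  have hadd : ∀ f f' : ellTwo H, g (f + f') = g f + g f' := by
    intro f f'
    have : ∀ j, col j ((f + f') j) = col j (f j) + col j (f' j) := by
      intro j
      symm
      refine colext j ((f + f') j) _ (fun k => ?_)
      simp only [lp.coeFn_add, Pi.add_apply, hcol1, map_add, smul_add]
    have h := hgsum (f + f')
    rw [funext this] at h
    exact h.unique ((hgsum f).add (hgsum f'))
  have hsmul : ∀ (c : ℂ) (f : ellTwo H), g (c • f) = c • g f := by
    intro c f
    have : ∀ j, col j ((c • f) j) = c • col j (f j) := by
      intro j
      symm
      refine colext j ((c • f) j) _ (fun k => ?_)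
      simp only [lp.coeFn_smul, Pi.smul_apply, hcol1, map_smul]
      rw [smul_comm]
    have h := hgsum (c • f)
    rw [funext this] at h
    exact h.unique ((hgsum f).const_smul c)
  have hbound : ∀ f : ellTwo H, ‖g f‖ ≤ (D * ‖B‖) * ‖f‖ := by
    intro f
    refine le_of_tendsto (Filter.Tendsto.norm (hgsum f)) (Filter.Eventually.of_forall fun s => ?_)
    calc ‖∑ j ∈ s, col j (f j)‖ ≤ (D * ‖B‖) * Real.sqrt (∑ j ∈ s, ‖f j‖ ^ 2) := hpartial f s
      _ ≤ (D * ‖B‖) * ‖f‖ := by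
          refine mul_le_mul_of_nonneg_left ?_ hDB0
          rw [show ‖f‖ = Real.sqrt (‖f‖ ^ 2) from (Real.sqrt_sq (norm_nonneg f)).symm]
          exact Real.sqrt_le_sqrt (lp_sum_sq_le f s)
  set L : ellTwo H →ₗ[ℂ] ellTwo H :=
    { toFun := g
      map_add' := hadd
      map_smul' := hsmul } with hL
  refine ⟨LinearMap.mkContinuous L (D * ‖B‖) hbound, ?_, ?_⟩
  · intro j x k
    have h1 : g (lp.single 2 j x) = col j x := by
      have hz : ∀ j', j' ≠ j → col j' ((lp.single 2 j x : ellTwo H) j') = 0 := by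
        intro j' hj'
        have hz0 : (lp.single 2 j x : ellTwo H) j' = 0 :=
          lp.single_apply_ne (E := fun _ : ℕ => H) 2 j x hj'
        rw [hz0, col_zero]
      have h := hasSum_single (f := fun j' => col j' ((lp.single 2 j x : ellTwo H) j')) j hz
      have hself : (lp.single 2 j x : ellTwo H) j = x :=
        lp.single_apply_self (E := fun _ : ℕ => H) 2 j x
      simp only [hself] at h
      exact (hgsum _).unique h
    show g (lp.single 2 j x) k = _
    rw [h1, hcol1]
    rfl
  · exact LinearMap.mkContinuous_norm_le _ hDB0 _

end Amplify

section Upper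
variable {H : Type} [NormedAddCommGroup H] [InnerProductSpace ℂ H] [CompleteSpace H]
  [TopologicalSpace.SeparableSpace H]

lemma left_bound {a : ℕ → ℕ → ℂ} {D : ℝ} (hD0 : 0 ≤ D) (hD : IsScalarMultBound a D)
    (T : H →L[ℂ] H) : IsLeftMultBound (fun k j => a k j • T) (D * ‖T‖) := by
  intro S B hB
  obtain ⟨AB0, hAB0, hABn⟩ := amplify hD0 hD S B hB
  have hT : ∀ _i : ℕ, ‖T‖ ≤ ‖T‖ := fun _ => le_rfl
  set DT := lpDiag (fun _ : ℕ => T) hT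
  refine ⟨DT.comp AB0, ?_, ?_⟩
  · intro j x k
    show T ((AB0 (lp.single 2 j x)) k) = _
    rw [hAB0 j x k]
    show T (a k j • S k j x) = (a k j • T) (S k j x)
    rw [map_smul]; rfl
  · calc ‖DT.comp AB0‖ ≤ ‖DT‖ * ‖AB0‖ := ContinuousLinearMap.opNorm_comp_le _ _
      _ ≤ ‖T‖ * (D * ‖B‖) :=
          mul_le_mul (lpDiag_norm_le _ hT) hABn (norm_nonneg _) (norm_nonneg _)
      _ = (D * ‖T‖) * ‖B‖ := by ring

lemma right_bound {a : ℕ → ℕ → ℂ} {D : ℝ} (hD0 : 0 ≤ D) (hD : IsScalarMultBound a D)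
    (T : H →L[ℂ] H) : IsRightMultBound (fun k j => a k j • T) (D * ‖T‖) := by
  intro S B hB
  have hT : ∀ _i : ℕ, ‖T‖ ≤ ‖T‖ := fun _ => le_rfl
  set DT := lpDiag (fun _ : ℕ => T) hT
  have hB' : Represents (fun k j => (S k j).comp T) (B.comp DT) := by
    intro j x k
    show (B (DT (lp.single 2 j x))) k = _
    rw [lpDiag_single]
    exact hB j (T x) k
  obtain ⟨AB0, hAB0, hABn⟩ := amplify hD0 hD _ _ hB'
  refine ⟨AB0, ?_, ?_⟩
  · intro j x k
    rw [hAB0 j x k]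
    show a k j • (S k j) (T x) = (S k j) ((a k j • T) x)
    rw [ContinuousLinearMap.smul_apply, map_smul]
  · calc ‖AB0‖ ≤ D * ‖B.comp DT‖ := hABn
      _ ≤ D * (‖B‖ * ‖DT‖) :=
          mul_le_mul_of_nonneg_left (ContinuousLinearMap.opNorm_comp_le _ _) hD0
      _ ≤ D * (‖B‖ * ‖T‖) := by
          refine mul_le_mul_of_nonneg_left ?_ hD0
          exact mul_le_mul_of_nonneg_left (lpDiag_norm_le _ hT) (norm_nonneg _)
      _ = (D * ‖T‖) * ‖B‖ := by ring

end Upper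

section Deamp
variable {H : Type} [NormedAddCommGroup H] [InnerProductSpace ℂ H] [CompleteSpace H]
  [TopologicalSpace.SeparableSpace H]

lemma nz_norm_one {x : H} (hx : x ≠ 0) : ‖nz x‖ = 1 := by
  unfold nz
  classical
  rw [if_neg hx, norm_smul, norm_inv, Complex.norm_real, norm_norm,
    inv_mul_cancel₀ (norm_ne_zero_iff.2 hx)]

lemma inner_nz_self (x : H) : ⟪nz x, x⟫_ℂ = (‖x‖ : ℂ) := by
  unfold nz
  classical
  split_ifs with h
  · simp [h]
  · rw [inner_smul_left, inner_self_eq_norm_sq_to_K]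
    rw [map_inv₀, Complex.conj_ofReal]
    have hx : (‖x‖ : ℂ) ≠ 0 := by exact_mod_cast norm_ne_zero_iff.2 h
    field_simp
    rfl

lemma inner_nz_nz {x : H} (hx : x ≠ 0) : ⟪nz x, nz x⟫_ℂ = 1 := by
  rw [inner_self_eq_norm_sq_to_K, nz_norm_one hx]
  norm_num

lemma norm_T_nz (T : H →L[ℂ] H) {e : H} (he : e ≠ 0) : ‖T (nz e)‖ = ‖T e‖ / ‖e‖ := by
  unfold nz
  classical
  rw [if_neg he, map_smul, norm_smul, norm_inv, Complex.norm_real, norm_norm]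
  rw [div_eq_inv_mul]

lemma deamp_aux {a : ℕ → ℕ → ℂ} {C : ℝ} (hC0 : 0 ≤ C) (T : H →L[ℂ] H) (e : H)
    (hTe : T e ≠ 0)
    (hmain : ∀ (b : ℕ → ℕ → ℂ) (B : ellTwo ℂ →L[ℂ] ellTwo ℂ), RepresentsC b B →
      ∃ M : ellTwo ℂ →L[ℂ] ellTwo ℂ,
        RepresentsC (fun k j => a k j * b k j * (‖T (nz e)‖ : ℂ)) M ∧ ‖M‖ ≤ C * ‖B‖) :
    IsScalarMultBound a (C * ‖e‖ / ‖T e‖) := by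
  intro b B hbB
  obtain ⟨M, hM, hMn⟩ := hmain b B hbB
  have he : e ≠ 0 := fun h => hTe (by simp [h])
  have hTnz : ‖T (nz e)‖ ≠ 0 := by
    rw [norm_T_nz T he]
    exact div_ne_zero (norm_ne_zero_iff.2 hTe) (norm_ne_zero_iff.2 he)
  have hTnzC : ((‖T (nz e)‖ : ℂ)) ≠ 0 := by exact_mod_cast hTnz
  refine ⟨((‖T (nz e)‖ : ℂ))⁻¹ • M, ?_, ?_⟩
  · intro j c k
    have h1 : (((‖T (nz e)‖ : ℂ))⁻¹ • M) (lp.single 2 j c) =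
        ((‖T (nz e)‖ : ℂ))⁻¹ • (M (lp.single 2 j c)) := rfl
    rw [h1, lp.coeFn_smul, Pi.smul_apply, hM j c k]
    rw [smul_eq_mul]
    rw [show a k j * b k j * (‖T (nz e)‖ : ℂ) * c = (‖T (nz e)‖ : ℂ) * (a k j * b k j * c) by
      ring]
    rw [inv_mul_cancel_left₀ hTnzC]
  · have h2 : ‖(((‖T (nz e)‖ : ℂ))⁻¹ • M)‖ ≤ ‖T (nz e)‖⁻¹ * ‖M‖ := by
      refine le_trans (ContinuousLinearMap.opNorm_smul_le _ _) (le_of_eq ?_)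
      rw [norm_inv, Complex.norm_real, norm_norm]
    refine le_trans h2 ?_
    calc ‖T (nz e)‖⁻¹ * ‖M‖ ≤ ‖T (nz e)‖⁻¹ * (C * ‖B‖) := by
          refine mul_le_mul_of_nonneg_left hMn (by positivity)
      _ = (C * ‖e‖ / ‖T e‖) * ‖B‖ := by
          rw [norm_T_nz T he, inv_div]
          ring

end Deamp

section Sandwich
variable {E₁ E₂ E₃ E₄ : Type*} [NormedAddCommGroup E₁] [NormedSpace ℂ E₁]
  [NormedAddCommGroup E₂] [NormedSpace ℂ E₂] [NormedAddCommGroup E₃] [NormedSpace ℂ E₃]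
  [NormedAddCommGroup E₄] [NormedSpace ℂ E₄]

lemma sandwich_norm (X : E₃ →L[ℂ] E₄) (Y : E₂ →L[ℂ] E₃) (Z : E₁ →L[ℂ] E₂)
    (hX : ‖X‖ ≤ 1) (hZ : ‖Z‖ ≤ 1) : ‖(X.comp Y).comp Z‖ ≤ ‖Y‖ := by
  calc ‖(X.comp Y).comp Z‖ ≤ ‖X.comp Y‖ * ‖Z‖ := ContinuousLinearMap.opNorm_comp_le _ _
    _ ≤ (‖X‖ * ‖Y‖) * ‖Z‖ :=
        mul_le_mul_of_nonneg_right (ContinuousLinearMap.opNorm_comp_le _ _)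
          (ContinuousLinearMap.opNorm_nonneg _)
    _ ≤ (1 * ‖Y‖) * 1 := by
        have h0 := ContinuousLinearMap.opNorm_nonneg Y
        have h1 := ContinuousLinearMap.opNorm_nonneg X
        have h2 := ContinuousLinearMap.opNorm_nonneg Z
        gcongr <;> positivity
    _ = ‖Y‖ := by ring

end Sandwich

section DeampMain
variable {H : Type} [NormedAddCommGroup H] [InnerProductSpace ℂ H] [CompleteSpace H]
  [TopologicalSpace.SeparableSpace H]

lemma deamp_left {a : ℕ → ℕ → ℂ} {C : ℝ} (hC0 : 0 ≤ C) {T : H →L[ℂ] H}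
    (hC : IsLeftMultBound (fun k j => a k j • T) C) (e : H) (hTe : T e ≠ 0) :
    IsScalarMultBound a (C * ‖e‖ / ‖T e‖) := by
  have he : e ≠ 0 := fun h => hTe (by simp [h])
  refine deamp_aux hC0 T e hTe ?_
  intro b B hbB
  have hV : ∀ _i : ℕ, ‖ContinuousLinearMap.toSpanSingleton ℂ (nz e)‖ ≤ (1:ℝ) := fun _ => by
    rw [ContinuousLinearMap.norm_toSpanSingleton]; exact nz_norm_le _
  have hW : ∀ _i : ℕ, ‖innerSL ℂ (nz e)‖ ≤ (1:ℝ) := fun _ => by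
    rw [innerSL_apply_norm]; exact nz_norm_le _
  have hW2 : ∀ _i : ℕ, ‖innerSL ℂ (nz (T (nz e)))‖ ≤ (1:ℝ) := fun _ => by
    rw [innerSL_apply_norm]; exact nz_norm_le _
  set V := lpDiag (fun _ : ℕ => ContinuousLinearMap.toSpanSingleton ℂ (nz e)) hV
  set W := lpDiag (fun _ : ℕ => innerSL ℂ (nz e)) hW
  set W2 := lpDiag (fun _ : ℕ => innerSL ℂ (nz (T (nz e)))) hW2
  set S' : ℕ → ℕ → (H →L[ℂ] H) := fun k j =>
    b k j • ((ContinuousLinearMap.toSpanSingleton ℂ (nz e)).comp (innerSL ℂ (nz e)))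
    with hS'
  have hB' : Represents S' ((V.comp B).comp W) := by
    intro j x k
    show V (B (W (lp.single 2 j x))) k = _
    rw [show W (lp.single 2 j x) = lp.single 2 j (⟪nz e, x⟫_ℂ) from lpDiag_single _ _ _ _]
    rw [lpDiag_apply, hbB j _ k]
    show (b k j * ⟪nz e, x⟫_ℂ) • nz e = _
    rw [hS']
    show _ = b k j • (⟪nz e, x⟫_ℂ • nz e)
    rw [smul_smul]
  obtain ⟨AB, hAB, hABn⟩ := hC S' _ hB'
  refine ⟨(W2.comp AB).comp V, ?_, ?_⟩
  · intro j c k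
    show W2 (AB (V (lp.single 2 j c))) k = _
    rw [show V (lp.single 2 j c) = lp.single 2 j (c • nz e) from lpDiag_single _ _ _ _]
    rw [lpDiag_apply, hAB j _ k]
    show ⟪nz (T (nz e)), (a k j • T) (S' k j (c • nz e))⟫_ℂ = _
    have h1 : S' k j (c • nz e) = (b k j * c) • nz e := by
      rw [hS']
      show b k j • (⟪nz e, c • nz e⟫_ℂ • nz e) = _
      rw [inner_smul_right, inner_nz_nz he, mul_one, smul_smul]
    rw [h1]
    have h2 : (a k j • T) ((b k j * c) • nz e) = (a k j * (b k j * c)) • T (nz e) := by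
      rw [ContinuousLinearMap.smul_apply, map_smul, smul_smul]
    rw [h2, inner_smul_right, inner_nz_self]
    ring
  · refine le_trans (sandwich_norm W2 AB V (lpDiag_norm_le _ hW2) (lpDiag_norm_le _ hV)) ?_
    refine le_trans hABn ?_
    refine mul_le_mul_of_nonneg_left ?_ hC0
    exact sandwich_norm V B W (lpDiag_norm_le _ hV) (lpDiag_norm_le _ hW)

lemma deamp_right {a : ℕ → ℕ → ℂ} {C : ℝ} (hC0 : 0 ≤ C) {T : H →L[ℂ] H}
    (hC : IsRightMultBound (fun k j => a k j • T) C) (e : H) (hTe : T e ≠ 0) :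
    IsScalarMultBound a (C * ‖e‖ / ‖T e‖) := by
  have he : e ≠ 0 := fun h => hTe (by simp [h])
  have hTnze : T (nz e) ≠ 0 := by
    intro h
    have := norm_T_nz T he
    rw [h, norm_zero] at this
    exact hTe (norm_eq_zero.mp (by
      have h4 : ‖e‖ ≠ 0 := norm_ne_zero_iff.2 he
      field_simp at this
      simpa using this.symm))
  refine deamp_aux hC0 T e hTe ?_
  intro b B hbB
  have hV : ∀ _i : ℕ, ‖ContinuousLinearMap.toSpanSingleton ℂ (nz e)‖ ≤ (1:ℝ) := fun _ => by
    rw [ContinuousLinearMap.norm_toSpanSingleton]; exact nz_norm_le _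
  have hW : ∀ _i : ℕ, ‖innerSL ℂ (nz (T (nz e)))‖ ≤ (1:ℝ) := fun _ => by
    rw [innerSL_apply_norm]; exact nz_norm_le _
  have hW2 : ∀ _i : ℕ, ‖innerSL ℂ (nz e)‖ ≤ (1:ℝ) := fun _ => by
    rw [innerSL_apply_norm]; exact nz_norm_le _
  set V := lpDiag (fun _ : ℕ => ContinuousLinearMap.toSpanSingleton ℂ (nz e)) hV
  set W := lpDiag (fun _ : ℕ => innerSL ℂ (nz (T (nz e)))) hW
  set W2 := lpDiag (fun _ : ℕ => innerSL ℂ (nz e)) hW2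
  set S' : ℕ → ℕ → (H →L[ℂ] H) := fun k j =>
    b k j • ((ContinuousLinearMap.toSpanSingleton ℂ (nz e)).comp
      (innerSL ℂ (nz (T (nz e))))) with hS'
  have hB' : Represents S' ((V.comp B).comp W) := by
    intro j x k
    show V (B (W (lp.single 2 j x))) k = _
    rw [show W (lp.single 2 j x) = lp.single 2 j (⟪nz (T (nz e)), x⟫_ℂ) from
      lpDiag_single _ _ _ _]
    rw [lpDiag_apply, hbB j _ k]
    show (b k j * ⟪nz (T (nz e)), x⟫_ℂ) • nz e = _
    rw [hS']
    show _ = b k j • (⟪nz (T (nz e)), x⟫_ℂ • nz e)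
    rw [smul_smul]
  obtain ⟨AB, hAB, hABn⟩ := hC S' _ hB'
  refine ⟨(W2.comp AB).comp V, ?_, ?_⟩
  · intro j c k
    show W2 (AB (V (lp.single 2 j c))) k = _
    rw [show V (lp.single 2 j c) = lp.single 2 j (c • nz e) from lpDiag_single _ _ _ _]
    rw [lpDiag_apply, hAB j _ k]
    show ⟪nz e, (S' k j) ((a k j • T) (c • nz e))⟫_ℂ = _
    have h2 : (a k j • T) (c • nz e) = (a k j * c) • T (nz e) := by
      rw [ContinuousLinearMap.smul_apply, map_smul, smul_smul]
    have h1 : S' k j ((a k j * c) • T (nz e)) =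
        (b k j * ((a k j * c) * (‖T (nz e)‖ : ℂ))) • nz e := by
      rw [hS']
      show b k j • (⟪nz (T (nz e)), (a k j * c) • T (nz e)⟫_ℂ • nz e) = _
      rw [inner_smul_right, inner_nz_self, smul_smul]
    rw [h2, h1, inner_smul_right, inner_nz_nz he, mul_one]
    ring
  · refine le_trans (sandwich_norm W2 AB V (lpDiag_norm_le _ hW2) (lpDiag_norm_le _ hV)) ?_
    refine le_trans hABn ?_
    refine mul_le_mul_of_nonneg_left ?_ hC0
    exact sandwich_norm V B W (lpDiag_norm_le _ hV) (lpDiag_norm_le _ hW)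

end DeampMain

/-- if `a = (a_{kj})` is a scalar Schur multiplier and `T ∈ B(H)`, then
`(a_{kj} T)` is a left and right Schur multiplier on `B(ℓ²(H))`, with both multiplier
norms equal to `‖a‖_{M(ℓ²)} ‖T‖`. -/
theorem scalar_tensor_multiplier (a : ℕ → ℕ → ℂ)
    (h : ∃ C : ℝ, 0 ≤ C ∧ IsScalarMultBound a C) (T : H →L[ℂ] H) :
    (∃ C : ℝ, 0 ≤ C ∧ IsLeftMultBound (fun k j => a k j • T) C) ∧
    (∃ C : ℝ, 0 ≤ C ∧ IsRightMultBound (fun k j => a k j • T) C) ∧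
    leftMultNorm (fun k j => a k j • T) = scalarMultNorm a * ‖T‖ ∧
    rightMultNorm (fun k j => a k j • T) = scalarMultNorm a * ‖T‖ := by
  obtain ⟨D, hD0, hD⟩ := h
  set Sc : Set ℝ := {C : ℝ | 0 ≤ C ∧ IsScalarMultBound a C} with hScdef
  set N : ℝ := sInf Sc with hNdef
  have hSc_ne : Sc.Nonempty := ⟨D, hD0, hD⟩
  have hSc_bdd : BddBelow Sc := ⟨0, fun C hC => hC.1⟩
  have hN0 : 0 ≤ N := le_csInf hSc_ne fun C hC => hC.1
  have hNsc : scalarMultNorm a = N := rfl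
  set L : Set ℝ := {C : ℝ | 0 ≤ C ∧ IsLeftMultBound (fun k j => a k j • T) C} with hLdef
  set R : Set ℝ := {C : ℝ | 0 ≤ C ∧ IsRightMultBound (fun k j => a k j • T) C} with hRdef
  have hDT0 : 0 ≤ D * ‖T‖ := by positivity
  have hmemL : (D * ‖T‖) ∈ L := ⟨hDT0, left_bound hD0 hD T⟩
  have hmemR : (D * ‖T‖) ∈ R := ⟨hDT0, right_bound hD0 hD T⟩
  have hL_ne : L.Nonempty := ⟨_, hmemL⟩
  have hR_ne : R.Nonempty := ⟨_, hmemR⟩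
  have hL_bdd : BddBelow L := ⟨0, fun C hC => hC.1⟩
  have hR_bdd : BddBelow R := ⟨0, fun C hC => hC.1⟩
  -- the claim needed for the lower bounds
  have lower : ∀ C : ℝ, 0 ≤ C →
      (∀ e : H, T e ≠ 0 → IsScalarMultBound a (C * ‖e‖ / ‖T e‖)) → N * ‖T‖ ≤ C := by
    intro C hC0 hde
    have claim : ∀ e : H, N * ‖T e‖ ≤ C * ‖e‖ := by
      intro e
      by_cases hTe : T e = 0
      · rw [hTe, norm_zero, mul_zero]
        positivity
      · have hmem : (C * ‖e‖ / ‖T e‖) ∈ Sc := ⟨by positivity, hde e hTe⟩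
        have hNle : N ≤ C * ‖e‖ / ‖T e‖ := csInf_le hSc_bdd hmem
        have hTep : 0 < ‖T e‖ := norm_pos_iff.mpr hTe
        rw [le_div_iff₀ hTep] at hNle
        exact hNle
    rcases eq_or_lt_of_le hN0 with hN | hN
    · rw [← hN, zero_mul]; exact hC0
    · have hTle : ‖T‖ ≤ C / N := by
        refine ContinuousLinearMap.opNorm_le_bound _ (by positivity) ?_
        intro x
        rw [div_mul_eq_mul_div, le_div_iff₀ hN]
        nlinarith [claim x]
      have h5 : N * ‖T‖ ≤ N * (C / N) := mul_le_mul_of_nonneg_left hTle hN0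
      rw [mul_comm N (C / N), div_mul_cancel₀ C hN.ne'] at h5
      exact h5
  have eqL : sInf L = N * ‖T‖ := by
    by_cases hT0 : T = 0
    · have h0L : (0:ℝ) ∈ L := by
        refine ⟨le_rfl, ?_⟩
        intro S B hB
        refine ⟨0, ?_, by rw [zero_mul]; exact le_of_eq norm_zero⟩
        intro j x k
        show (0 : ellTwo H) k = ((a k j • T).comp (S k j)) x
        rw [hT0]
        simp only [smul_zero, ContinuousLinearMap.comp_apply, ContinuousLinearMap.zero_apply,
          lp.coeFn_zero, Pi.zero_apply]
      have h1 : sInf L = 0 :=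
        le_antisymm (csInf_le hL_bdd h0L) (le_csInf hL_ne fun C hC => hC.1)
      rw [h1, hT0, norm_zero, mul_zero]
    · have hTpos : (0:ℝ) < ‖T‖ := norm_pos_iff.mpr hT0
      refine le_antisymm ?_ ?_
      · have hdivle : sInf L / ‖T‖ ≤ N := by
          refine le_csInf hSc_ne ?_
          rintro D' ⟨hD'0, hD'⟩
          rw [div_le_iff₀ hTpos]
          exact csInf_le hL_bdd ⟨by positivity, left_bound hD'0 hD' T⟩
        rw [div_le_iff₀ hTpos] at hdivle
        exact hdivle
      · refine le_csInf hL_ne ?_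
        rintro C ⟨hC0, hC⟩
        exact lower C hC0 fun e hTe => deamp_left hC0 hC e hTe
  have eqR : sInf R = N * ‖T‖ := by
    by_cases hT0 : T = 0
    · have h0R : (0:ℝ) ∈ R := by
        refine ⟨le_rfl, ?_⟩
        intro S B hB
        refine ⟨0, ?_, by rw [zero_mul]; exact le_of_eq norm_zero⟩
        intro j x k
        show (0 : ellTwo H) k = ((S k j).comp (a k j • T)) x
        rw [hT0]
        simp only [smul_zero, ContinuousLinearMap.comp_apply, ContinuousLinearMap.zero_apply,
          lp.coeFn_zero, Pi.zero_apply, map_zero]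
      have h1 : sInf R = 0 :=
        le_antisymm (csInf_le hR_bdd h0R) (le_csInf hR_ne fun C hC => hC.1)
      rw [h1, hT0, norm_zero, mul_zero]
    · have hTpos : (0:ℝ) < ‖T‖ := norm_pos_iff.mpr hT0
      refine le_antisymm ?_ ?_
      · have hdivle : sInf R / ‖T‖ ≤ N := by
          refine le_csInf hSc_ne ?_
          rintro D' ⟨hD'0, hD'⟩
          rw [div_le_iff₀ hTpos]
          exact csInf_le hR_bdd ⟨by positivity, right_bound hD'0 hD' T⟩
        rw [div_le_iff₀ hTpos] at hdivle
        exact hdivle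
      · refine le_csInf hR_ne ?_
        rintro C ⟨hC0, hC⟩
        exact lower C hC0 fun e hTe => deamp_right hC0 hC e hTe
  exact ⟨⟨D * ‖T‖, hDT0, left_bound hD0 hD T⟩, ⟨D * ‖T‖, hDT0, right_bound hD0 hD T⟩,
    eqL, eqR⟩
end
end

section
/- Let A = (T_{kj}) be the matrix with T_{k,2k} = Id_H for all k and T_{kj} = 0 otherwise. Then A ∈ B(ℓ²(H)), but the function t ↦ f_A(t) = (e^{i(j−k)t} T_{kj}) is not strongly measurable as a B(ℓ²(H))-valued function; in fact ‖f_A(t) − f_A(s)‖_{B(ℓ²(H))} = sup_{k∈ℕ} |e^{ik(t−s)} − 1| ≥ √2 whenever t ≠ s, so the range {f_A(t) : t} is non-separable. -/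
set_option maxHeartbeats 1000000


noncomputable section

open scoped ENNReal

variable {H : Type} [NormedAddCommGroup H] [InnerProductSpace ℂ H] [CompleteSpace H]
  [TopologicalSpace.SeparableSpace H]

/-- The matrix of `f_A(t) = M_t * A`, i.e. `(e^{i(j−k)t} T_{kj})`. -/
def fAMat (T : ℕ → ℕ → (H →L[ℂ] H)) (t : ℝ) : ℕ → ℕ → (H →L[ℂ] H) :=
  fun k j => Complex.exp (Complex.I * (((j : ℤ) - (k : ℤ)) : ℤ) * t) • T k j

/-- The matrix with `T_{k,2k} = Id` and all other entries zero. -/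
def shiftMat (H : Type) [NormedAddCommGroup H] [InnerProductSpace ℂ H] :
    ℕ → ℕ → (H →L[ℂ] H) :=
  fun k j => if j = 2 * k then ContinuousLinearMap.id ℂ H else 0

/-! ### Auxiliary lemmas -/

section Aux

variable {H : Type} [NormedAddCommGroup H] [InnerProductSpace ℂ H] [CompleteSpace H]

lemma rpow_two_eq_pow {x : ℝ} (hx : 0 ≤ x) : x ^ (2:ℝ) = x ^ 2 := by
  rw [show (2:ℝ) = ((2:ℕ):ℝ) by norm_num, Real.rpow_natCast]

lemma ellTwo_norm_sq (f : ellTwo H) : ‖f‖ ^ 2 = ∑' k, ‖f k‖ ^ 2 := by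
  have h := lp.norm_rpow_eq_tsum (p := 2) (by norm_num) f
  rw [show ((2:ℝ≥0∞)).toReal = (2:ℝ) by norm_num] at h
  rw [rpow_two_eq_pow (norm_nonneg _)] at h
  rw [h]
  exact tsum_congr fun k => rpow_two_eq_pow (norm_nonneg _)

lemma ellTwo_summable (f : ellTwo H) : Summable fun k => ‖f k‖ ^ 2 := by
  have h := (memℓp_gen_iff (p := 2) (by norm_num)).1 (lp.memℓp f)
  rw [show ((2:ℝ≥0∞)).toReal = (2:ℝ) by norm_num] at h
  exact h.congr fun k => rpow_two_eq_pow (norm_nonneg _)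

lemma double_inj : Function.Injective (fun k : ℕ => 2 * k) := fun a b h => by
  have h' : 2 * a = 2 * b := h
  omega

lemma summable_comp_double (f : ellTwo H) : Summable fun k => ‖f (2*k)‖ ^ 2 :=
  (ellTwo_summable f).comp_injective double_inj

lemma tsum_double_le (f : ellTwo H) : ∑' k, ‖f (2*k)‖ ^ 2 ≤ ‖f‖ ^ 2 := by
  rw [ellTwo_norm_sq]
  exact tsum_comp_le_tsum_of_inj (ellTwo_summable f) (fun k => sq_nonneg _) double_inj

/-- Evaluation at `k` as a continuous linear map. -/
def evalCLM (k : ℕ) : ellTwo H →L[ℂ] H :=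
  LinearMap.mkContinuous
    { toFun := fun f => f k
      map_add' := fun f g => by
        have := lp.coeFn_add f g
        simp only [this, Pi.add_apply]
      map_smul' := fun c f => by
        have := lp.coeFn_smul c f
        simp only [this, Pi.smul_apply, RingHom.id_apply] }
    1 (fun f => by
      simpa using lp.norm_apply_le_norm (p := 2) (by norm_num) f k)

lemma diag_apply (D : ellTwo H →L[ℂ] ellTwo H) (c : ℕ → ℂ)
    (hD : ∀ (j : ℕ) (x : H) (k : ℕ),
      D (lp.single 2 j x) k = if j = 2*k then c k • x else 0)
    (x : ellTwo H) (k : ℕ) : D x k = c k • x (2*k) := by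
  have h1 : HasSum (fun j : ℕ => lp.single 2 j (x j)) x :=
    lp.hasSum_single (by norm_num) x
  have h2 : HasSum (fun j : ℕ => ((evalCLM k).comp D) (lp.single 2 j (x j)))
      (((evalCLM k).comp D) x) := ((evalCLM k).comp D).hasSum h1
  have h3 : (fun j : ℕ => ((evalCLM k).comp D) (lp.single 2 j (x j)))
      = fun j : ℕ => if j = 2*k then c k • x (2*k) else 0 := by
    funext j
    show D (lp.single 2 j (x j)) k = _
    rw [hD j (x j) k]
    split_ifs with h
    · subst h; rfl
    · rfl
  rw [h3] at h2
  exact h2.unique (hasSum_ite_eq (2*k) (c k • x (2*k)))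

lemma diag_norm [Nontrivial H] (D : ellTwo H →L[ℂ] ellTwo H) (c : ℕ → ℂ)
    (hc : ∀ k, ‖c k‖ ≤ 2)
    (hD : ∀ (j : ℕ) (x : H) (k : ℕ),
      D (lp.single 2 j x) k = if j = 2*k then c k • x else 0) :
    ‖D‖ = ⨆ k, ‖c k‖ := by
  have hbdd : BddAbove (Set.range fun k => ‖c k‖) :=
    ⟨2, by rintro _ ⟨k, rfl⟩; exact hc k⟩
  have hC0 : 0 ≤ ⨆ k, ‖c k‖ := (norm_nonneg (c 0)).trans (le_ciSup hbdd 0)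
  apply le_antisymm
  · apply D.opNorm_le_bound hC0
    intro x
    have hx : ∀ k, D x k = c k • x (2*k) := diag_apply D c hD x
    have key : ‖D x‖ ^ 2 ≤ ((⨆ k, ‖c k‖) * ‖x‖) ^ 2 := by
      rw [ellTwo_norm_sq]
      have hsum2 : Summable fun k => (⨆ j, ‖c j‖) ^ 2 * ‖x (2*k)‖ ^ 2 :=
        (summable_comp_double x).mul_left _
      calc ∑' k, ‖D x k‖ ^ 2 = ∑' k, ‖c k‖ ^ 2 * ‖x (2*k)‖ ^ 2 := by
            refine tsum_congr fun k => ?_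
            rw [hx k, norm_smul, mul_pow]
        _ ≤ ∑' k, (⨆ j, ‖c j‖) ^ 2 * ‖x (2*k)‖ ^ 2 := by
            refine Summable.tsum_le_tsum (fun k => ?_) ?_ hsum2
            · have h1 : ‖c k‖ ≤ ⨆ j, ‖c j‖ := le_ciSup hbdd k
              have h2 : ‖c k‖ ^ 2 ≤ (⨆ j, ‖c j‖) ^ 2 :=
                pow_le_pow_left₀ (norm_nonneg _) h1 2
              exact mul_le_mul_of_nonneg_right h2 (sq_nonneg _)
            · refine Summable.of_nonneg_of_le (fun k => by positivity)
                (fun k => ?_) hsum2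
              have h1 : ‖c k‖ ≤ ⨆ j, ‖c j‖ := le_ciSup hbdd k
              exact mul_le_mul_of_nonneg_right
                (pow_le_pow_left₀ (norm_nonneg _) h1 2) (sq_nonneg _)
        _ = (⨆ j, ‖c j‖) ^ 2 * ∑' k, ‖x (2*k)‖ ^ 2 := tsum_mul_left
        _ ≤ (⨆ j, ‖c j‖) ^ 2 * ‖x‖ ^ 2 := by
            have := tsum_double_le x
            exact mul_le_mul_of_nonneg_left this (by positivity)
        _ = ((⨆ j, ‖c j‖) * ‖x‖) ^ 2 := by ring
    calc ‖D x‖ = Real.sqrt (‖D x‖ ^ 2) := (Real.sqrt_sq (norm_nonneg _)).symm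
      _ ≤ Real.sqrt (((⨆ k, ‖c k‖) * ‖x‖) ^ 2) := Real.sqrt_le_sqrt key
      _ = (⨆ k, ‖c k‖) * ‖x‖ := Real.sqrt_sq (by positivity)
  · obtain ⟨y, hy⟩ := exists_ne (0 : H)
    set x₀ : H := ‖y‖⁻¹ • y with hx₀def
    have hx₀ : ‖x₀‖ = 1 := norm_smul_inv_norm hy
    refine ciSup_le fun k => ?_
    have h1 : D (lp.single 2 (2*k) x₀) k = c k • x₀ := by
      rw [hD]; simp
    calc ‖c k‖ = ‖c k • x₀‖ := by rw [norm_smul, hx₀, mul_one]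
      _ = ‖D (lp.single 2 (2*k) x₀) k‖ := by rw [h1]
      _ ≤ ‖D (lp.single 2 (2*k) x₀)‖ :=
          lp.norm_apply_le_norm (by norm_num) _ k
      _ ≤ ‖D‖ * ‖(lp.single 2 (2*k) x₀ : ellTwo H)‖ := D.le_opNorm _
      _ = ‖D‖ := by
          rw [show ‖(lp.single 2 (2*k) x₀ : ellTwo H)‖ = ‖x₀‖ from
            lp.norm_single (E := fun _ : ℕ => H) (p := 2) (by norm_num) (2*k) x₀, hx₀, mul_one]

lemma shiftMem (x : ellTwo H) : Memℓp (fun k => x (2*k)) 2 := by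
  apply memℓp_gen
  rw [show ((2:ℝ≥0∞)).toReal = (2:ℝ) by norm_num]
  exact (summable_comp_double x).congr fun k =>
    (rpow_two_eq_pow (norm_nonneg _)).symm

/-- The shift operator `(A x)_k = x_{2k}` on `ℓ²(H)`. -/
def shiftOp : ellTwo H →L[ℂ] ellTwo H :=
  LinearMap.mkContinuous
    { toFun := fun x => ⟨fun k => x (2*k), shiftMem x⟩
      map_add' := fun x y => by
        apply lp.ext
        funext k
        show (x + y) (2*k) = x (2*k) + y (2*k)
        rw [lp.coeFn_add]; rfl
      map_smul' := fun c x => by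
        apply lp.ext
        funext k
        show (c • x) (2*k) = c • (x (2*k))
        rw [lp.coeFn_smul]; rfl }
    1 (fun x => by
      rw [one_mul]
      have key : ‖(⟨fun k => x (2*k), shiftMem x⟩ : ellTwo H)‖ ^ 2 ≤ ‖x‖ ^ 2 := by
        rw [ellTwo_norm_sq]
        exact tsum_double_le x
      calc ‖(⟨fun k => x (2*k), shiftMem x⟩ : ellTwo H)‖
          = Real.sqrt (‖(⟨fun k => x (2*k), shiftMem x⟩ : ellTwo H)‖ ^ 2) :=
            (Real.sqrt_sq (norm_nonneg _)).symm
        _ ≤ Real.sqrt (‖x‖ ^ 2) := Real.sqrt_le_sqrt key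
        _ = ‖x‖ := Real.sqrt_sq (norm_nonneg _))

lemma shiftOp_apply (x : ellTwo H) (k : ℕ) : (shiftOp x) k = x (2*k) := rfl

lemma shiftOp_represents : Represents (shiftMat H) (shiftOp (H := H)) := by
  intro j x k
  rw [shiftOp_apply]
  unfold shiftMat
  by_cases h : j = 2*k
  · subst h
    rw [lp.single_apply_self (E := fun _ : ℕ => H)]
    simp
  · rw [lp.single_apply_ne (E := fun _ : ℕ => H) 2 j x (fun hh => h hh.symm)]
    simp [h]

lemma norm_exp_I_mul_sub_one_sq (r : ℝ) :
    ‖Complex.exp (Complex.I * r) - 1‖ ^ 2 = 2 - 2 * Real.cos r := by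
  rw [show Complex.I * (r:ℂ) = (r:ℂ) * Complex.I by ring]
  rw [show ‖Complex.exp ((r:ℂ) * Complex.I) - 1‖ ^ 2
      = Complex.normSq (Complex.exp ((r:ℂ) * Complex.I) - 1) by
    rw [← Complex.sq_norm]]
  rw [Complex.normSq_apply, Complex.sub_re, Complex.sub_im, Complex.one_re, Complex.one_im,
    Complex.exp_ofReal_mul_I_re, Complex.exp_ofReal_mul_I_im]
  nlinarith [Real.sin_sq_add_cos_sq r]

lemma norm_exp_I_mul_le_two (r : ℝ) : ‖Complex.exp (Complex.I * r) - 1‖ ≤ 2 := by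
  have h1 : ‖Complex.exp (Complex.I * r)‖ = 1 := by
    rw [show Complex.I * (r:ℂ) = (r:ℂ) * Complex.I by ring]
    rw [Complex.norm_exp_ofReal_mul_I]
  calc ‖Complex.exp (Complex.I * r) - 1‖
      ≤ ‖Complex.exp (Complex.I * r)‖ + ‖(1:ℂ)‖ := norm_sub_le _ _
    _ = 2 := by rw [h1, norm_one]; norm_num

lemma exists_cos_nonpos {θ : ℝ} (hθ : θ ≠ 0) (hθ2 : |θ| < 2 * Real.pi) :
    ∃ k : ℕ, Real.cos (k * θ) ≤ 0 := by
  have hπ := Real.pi_pos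
  obtain ⟨φ, hφ0, hφπ, hcos⟩ : ∃ φ : ℝ, 0 < φ ∧ φ ≤ Real.pi ∧
      ∀ k : ℕ, Real.cos (k * θ) = Real.cos (k * φ) := by
    have habs : ∀ k : ℕ, Real.cos (k * θ) = Real.cos (k * |θ|) := by
      intro k
      rcases abs_cases θ with ⟨he, _⟩ | ⟨he, _⟩
      · rw [he]
      · rw [he, show (k:ℝ) * -θ = -(k * θ) by ring, Real.cos_neg]
    rcases le_or_gt |θ| Real.pi with h | h
    · exact ⟨|θ|, abs_pos.2 hθ, h, habs⟩
    · refine ⟨2 * Real.pi - |θ|, by linarith, by linarith, fun k => ?_⟩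
      rw [habs k, show (k:ℝ) * |θ| = k * (2 * Real.pi) - k * (2 * Real.pi - |θ|) by ring,
        Real.cos_nat_mul_two_pi_sub]
  set k := ⌈(Real.pi / 2) / φ⌉₊ with hk
  refine ⟨k, ?_⟩
  rw [hcos]
  apply Real.cos_nonpos_of_pi_div_two_le_of_le
  · have h1 := Nat.le_ceil ((Real.pi / 2) / φ)
    calc Real.pi / 2 = ((Real.pi / 2) / φ) * φ := (div_mul_cancel₀ _ hφ0.ne').symm
      _ ≤ k * φ := mul_le_mul_of_nonneg_right h1 hφ0.le
  · have h2 : (k:ℝ) < (Real.pi / 2) / φ + 1 := Nat.ceil_lt_add_one (by positivity)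
    have h3 : (k:ℝ) * φ < ((Real.pi / 2) / φ + 1) * φ :=
      mul_lt_mul_of_pos_right h2 hφ0
    rw [add_mul, div_mul_cancel₀ _ hφ0.ne', one_mul] at h3
    linarith

end Aux

lemma main_estimate [Nontrivial H] (F : ℝ → (ellTwo H →L[ℂ] ellTwo H))
    (hF : ∀ t : ℝ, Represents (fAMat (shiftMat H) t) (F t))
    (t s : ℝ) (ht : t ∈ Set.Ico (-Real.pi) Real.pi)
    (hs : s ∈ Set.Ico (-Real.pi) Real.pi) (hts : t ≠ s) :
    ‖F t - F s‖ = (⨆ k : ℕ, ‖Complex.exp (Complex.I * k * (t - s)) - 1‖) ∧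
    Real.sqrt 2 ≤ ‖F t - F s‖ := by
  have hck : ∀ k : ℕ, ‖Complex.exp (Complex.I * k * t) - Complex.exp (Complex.I * k * s)‖
      = ‖Complex.exp (Complex.I * k * (t - s)) - 1‖ := by
    intro k
    have hfac : Complex.exp (Complex.I * k * t) - Complex.exp (Complex.I * k * s)
        = Complex.exp (Complex.I * k * s) * (Complex.exp (Complex.I * k * (t - s)) - 1) := by
      rw [mul_sub, ← Complex.exp_add, mul_one,
        show Complex.I * (k:ℂ) * (s:ℂ) + Complex.I * (k:ℂ) * ((t:ℂ) - (s:ℂ))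
          = Complex.I * (k:ℂ) * (t:ℂ) by ring]
    rw [hfac, norm_mul]
    have h1 : ‖Complex.exp (Complex.I * (k:ℂ) * (s:ℂ))‖ = 1 := by
      rw [show Complex.I * (k:ℂ) * (s:ℂ) = ((k * s : ℝ) : ℂ) * Complex.I by push_cast; ring]
      rw [Complex.norm_exp_ofReal_mul_I]
    rw [h1, one_mul]
  have hD : ∀ (j : ℕ) (x : H) (k : ℕ),
      (F t - F s) (lp.single 2 j x) k = if j = 2*k then
        (Complex.exp (Complex.I * k * t) - Complex.exp (Complex.I * k * s)) • x else 0 := by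
    intro j x k
    rw [ContinuousLinearMap.sub_apply]
    have hsub : ((F t (lp.single 2 j x) - F s (lp.single 2 j x)) : ellTwo H) k
        = F t (lp.single 2 j x) k - F s (lp.single 2 j x) k := by
      rw [lp.coeFn_sub]; rfl
    rw [hsub, hF t j x k, hF s j x k]
    unfold fAMat shiftMat
    split_ifs with h
    · subst h
      simp only [ContinuousLinearMap.smul_apply, ContinuousLinearMap.id_apply]
      rw [show (((((2*k : ℕ) : ℤ) - ((k : ℕ) : ℤ)) : ℤ) : ℂ) = ((k : ℕ) : ℂ) by
        push_cast; ring, ← sub_smul]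
    · simp
  have hbound : ∀ k : ℕ,
      ‖Complex.exp (Complex.I * k * t) - Complex.exp (Complex.I * k * s)‖ ≤ 2 := by
    intro k
    rw [hck k, show Complex.I * (k:ℂ) * ((t:ℂ) - (s:ℂ))
      = Complex.I * ((k * (t - s) : ℝ) : ℂ) by push_cast; ring]
    exact norm_exp_I_mul_le_two _
  have hnorm : ‖F t - F s‖ = ⨆ k : ℕ,
      ‖Complex.exp (Complex.I * k * t) - Complex.exp (Complex.I * k * s)‖ :=
    diag_norm (F t - F s) _ hbound hD
  have hsup_eq : (⨆ k : ℕ,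
        ‖Complex.exp (Complex.I * k * t) - Complex.exp (Complex.I * k * s)‖)
      = ⨆ k : ℕ, ‖Complex.exp (Complex.I * k * (t - s)) - 1‖ :=
    iSup_congr hck
  have hθ : (t - s : ℝ) ≠ 0 := sub_ne_zero.2 hts
  have hθ2 : |t - s| < 2 * Real.pi := by
    rw [abs_lt]
    obtain ⟨ht1, ht2⟩ := ht
    obtain ⟨hs1, hs2⟩ := hs
    constructor <;> linarith
  obtain ⟨k₀, hk₀⟩ := exists_cos_nonpos hθ hθ2
  have hsqrt : Real.sqrt 2 ≤ ‖Complex.exp (Complex.I * k₀ * (t - s)) - 1‖ := by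
    have heq : Complex.I * (k₀:ℂ) * ((t:ℂ) - (s:ℂ))
        = Complex.I * ((k₀ * (t - s) : ℝ) : ℂ) := by push_cast; ring
    rw [heq]
    have h2 : 2 ≤ ‖Complex.exp (Complex.I * ((k₀ * (t - s) : ℝ) : ℂ)) - 1‖ ^ 2 := by
      rw [norm_exp_I_mul_sub_one_sq]
      linarith
    calc Real.sqrt 2
        ≤ Real.sqrt (‖Complex.exp (Complex.I * ((k₀ * (t - s) : ℝ) : ℂ)) - 1‖ ^ 2) :=
          Real.sqrt_le_sqrt h2
      _ = _ := Real.sqrt_sq (norm_nonneg _)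
  have hbdd2 : BddAbove (Set.range fun k : ℕ =>
      ‖Complex.exp (Complex.I * k * (t - s)) - 1‖) := by
    refine ⟨2, ?_⟩
    rintro _ ⟨k, rfl⟩
    show ‖Complex.exp (Complex.I * (k:ℂ) * ((t:ℂ) - (s:ℂ))) - 1‖ ≤ 2
    rw [show Complex.I * (k:ℂ) * ((t:ℂ) - (s:ℂ))
      = Complex.I * ((k * (t - s) : ℝ) : ℂ) by push_cast; ring]
    exact norm_exp_I_mul_le_two _
  refine ⟨hnorm.trans hsup_eq, ?_⟩
  rw [hnorm, hsup_eq]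
  exact hsqrt.trans (le_ciSup hbdd2 k₀)

/-- the matrix with `T_{k,2k} = Id` (zero elsewhere) is bounded on `ℓ²(H)`,
yet `t ↦ f_A(t)` is not strongly measurable: for `t ≠ s` in `[-π,π)` one has
`‖f_A(t) − f_A(s)‖ = sup_k |e^{ik(t−s)} − 1| ≥ √2`, so its range is non-separable. -/
theorem shift_fA_not_stronglyMeasurable [Nontrivial H] :
    (∃ A : ellTwo H →L[ℂ] ellTwo H, Represents (shiftMat H) A) ∧
    ∀ F : ℝ → (ellTwo H →L[ℂ] ellTwo H),
      (∀ t : ℝ, Represents (fAMat (shiftMat H) t) (F t)) →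
      (∀ t s : ℝ, t ∈ Set.Ico (-Real.pi) Real.pi → s ∈ Set.Ico (-Real.pi) Real.pi →
        t ≠ s →
        ‖F t - F s‖ = (⨆ k : ℕ, ‖Complex.exp (Complex.I * k * (t - s)) - 1‖) ∧
        Real.sqrt 2 ≤ ‖F t - F s‖) ∧
      ¬ TopologicalSpace.IsSeparable (F '' Set.Ico (-Real.pi) Real.pi) ∧
      ¬ MeasureTheory.StronglyMeasurable F := by
  constructor
  · exact ⟨shiftOp, shiftOp_represents⟩
  intro F hF
  have main := main_estimate F hF
  have hnotsep : ¬ TopologicalSpace.IsSeparable (F '' Set.Ico (-Real.pi) Real.pi) := by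
    intro hsep
    obtain ⟨C, hC_count, hC_sub⟩ := hsep
    have hdist : ∀ t ∈ Set.Ico (-Real.pi) Real.pi, ∀ s ∈ Set.Ico (-Real.pi) Real.pi,
        t ≠ s → Real.sqrt 2 ≤ dist (F t) (F s) := by
      intro t ht s hs hts
      rw [dist_eq_norm]
      exact (main t s ht hs hts).2
    have hs2 : (0:ℝ) < Real.sqrt 2 / 2 := by positivity
    -- choose a close point of C for each t
    have hchoice : ∀ t : Set.Ico (-Real.pi) Real.pi,
        ∃ y : C, dist (F t.1) y.1 < Real.sqrt 2 / 2 := by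
      rintro ⟨t, ht⟩
      have hmem : F t ∈ closure C := hC_sub ⟨t, ht, rfl⟩
      obtain ⟨y, hyC, hy⟩ := Metric.mem_closure_iff.1 hmem _ hs2
      exact ⟨⟨y, hyC⟩, hy⟩
    choose g hg using hchoice
    have hginj : Function.Injective g := by
      rintro ⟨t, ht⟩ ⟨s, hs⟩ hgts
      by_contra hne
      have hts : t ≠ s := fun h => hne (by simp [h])
      have h1 := hg ⟨t, ht⟩
      have h2 := hg ⟨s, hs⟩
      rw [hgts] at h1
      have : dist (F t) (F s) < Real.sqrt 2 :=
        calc dist (F t) (F s) ≤ dist (F t) (g ⟨s, hs⟩).1 + dist (g ⟨s, hs⟩).1 (F s) := dist_triangle _ _ _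
          _ < Real.sqrt 2 / 2 + Real.sqrt 2 / 2 := by
              rw [dist_comm (g ⟨s, hs⟩).1 (F s)]; exact add_lt_add h1 h2
          _ = Real.sqrt 2 := by ring
      exact absurd (hdist t ht s hs hts) (not_le.2 this)
    have : Countable C := hC_count.to_subtype
    have hcnt : Countable (Set.Ico (-Real.pi) Real.pi) := Function.Injective.countable hginj
    have hmk : Cardinal.mk (Set.Ico (-Real.pi) Real.pi) = Cardinal.continuum :=
      Cardinal.mk_Ico_real (by linarith [Real.pi_pos])
    have : Cardinal.mk (Set.Ico (-Real.pi) Real.pi) ≤ Cardinal.aleph0 :=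
      Cardinal.mk_le_aleph0
    rw [hmk] at this
    exact absurd this (not_le.2 Cardinal.aleph0_lt_continuum)
  refine ⟨main, hnotsep, fun hmeas => ?_⟩
  exact hnotsep (hmeas.isSeparable_range.mono (Set.image_subset_range _ _))
end
end

section
/- The operator Wiener class 𝒜(ℓ²(H)) = {A : Σ_{l∈ℤ} sup_k ‖T_{k,k+l}‖ < ∞} is dense in 𝒞(ℓ²(H)) with respect to the B(ℓ²(H)) norm; indeed, for A ∈ 𝒞(ℓ²(H)) the Poisson means P_r(A) = (r^{|j−k|} T_{kj}) belong to 𝒜(ℓ²(H)) and converge to A in operator norm as r → 1⁻. -/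
set_option maxHeartbeats 1000000
set_option synthInstance.maxHeartbeats 200000
set_option linter.unusedSectionVars false
set_option linter.unusedVariables false

noncomputable section

variable {H : Type} [NormedAddCommGroup H] [InnerProductSpace ℂ H] [CompleteSpace H]
  [TopologicalSpace.SeparableSpace H]

/-- The Poisson mean `P_r(A) = (r^{|j−k|} T_{kj})` of a matrix. -/
def poissonMat (T : ℕ → ℕ → (H →L[ℂ] H)) (r : ℝ) : ℕ → ℕ → (H →L[ℂ] H) :=
  fun k j => (r ^ ((j : ℤ) - (k : ℤ)).natAbs) • T k j



namespace WAux

lemma twoR : (2 : ENNReal).toReal = 2 := by norm_num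

lemma single_apply' (i : ℕ) (a : H) (j : ℕ) :
    (lp.single 2 i a : ellTwo H) j = if j = i then a else 0 := by
  by_cases h : j = i
  · subst h; simp [lp.single_apply_self]
  · simp [lp.single_apply_ne 2 i _ h, h]

lemma norm_single' (i : ℕ) (a : H) : ‖(lp.single 2 i a : ellTwo H)‖ = ‖a‖ :=
  lp.norm_single (E := fun _ : ℕ => H) (p := 2) two_pos i a

lemma norm_entry_le {T : ℕ → ℕ → (H →L[ℂ] H)} {A : ellTwo H →L[ℂ] ellTwo H}
    (hA : Represents T A) (k j : ℕ) : ‖T k j‖ ≤ ‖A‖ := by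
  refine ContinuousLinearMap.opNorm_le_bound _ (norm_nonneg A) fun x => ?_
  rw [← hA j x k, ← norm_single' j x]
  exact le_trans (lp.norm_apply_le_norm (by norm_num) (A (lp.single 2 j x)) k)
    (A.le_opNorm _)

lemma summable_sq (x : ellTwo H) : Summable fun k => ‖(x : ∀ _ : ℕ, H) k‖ ^ (2:ℕ) := by
  have := (lp.memℓp x).summable (p := 2) (by rw [twoR]; norm_num)
  convert this using 2 with k
  rw [twoR, ← Real.rpow_natCast]; norm_num

lemma norm_sq_eq (x : ellTwo H) : ‖x‖ ^ (2:ℕ) = ∑' k, ‖(x : ∀ _ : ℕ, H) k‖ ^ (2:ℕ) := by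
  have h := lp.norm_rpow_eq_tsum (p := 2) (by rw [twoR]; norm_num) x
  rw [twoR] at h
  calc (‖x‖:ℝ) ^ (2:ℕ) = ‖x‖ ^ (2:ℝ) := by rw [← Real.rpow_natCast]; norm_num
  _ = ∑' k, ‖(x : ∀ _ : ℕ, H) k‖ ^ (2:ℝ) := h
  _ = _ := by
      refine tsum_congr fun k => ?_
      rw [← Real.rpow_natCast]; norm_num

end WAux

namespace WAux

lemma memℓp_of_sq {f : ∀ _ : ℕ, H} (h : Summable fun k => ‖f k‖ ^ (2:ℕ)) :
    Memℓp f 2 :=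
  memℓp_gen (by convert h using 2 with k; rw [twoR, ← Real.rpow_natCast]; norm_num)

lemma norm_le_of_sq {x : ellTwo H} {C : ℝ} (hC : 0 ≤ C)
    (h : ∑' k, ‖(x : ∀ _ : ℕ, H) k‖ ^ (2:ℕ) ≤ C ^ 2) : ‖x‖ ≤ C := by
  have h2 := norm_sq_eq x
  nlinarith [norm_nonneg x]

section Diag

variable (S : ℕ → ℕ → (H →L[ℂ] H)) {M : ℝ}

def upFun (n : ℕ) (x : ellTwo H) : ∀ _ : ℕ, H := fun k => S k (k + n) (x (k + n))

def downFun (n : ℕ) (x : ellTwo H) : ∀ _ : ℕ, H :=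
  fun k => if n ≤ k then S k (k - n) (x (k - n)) else 0

variable (hM : ∀ k j, ‖S k j‖ ≤ M) (hM0 : 0 ≤ M)

include hM hM0

lemma upFun_bound (n : ℕ) (x : ellTwo H) (k : ℕ) :
    ‖upFun S n x k‖ ^ (2:ℕ) ≤ M ^ 2 * ‖(x : ∀ _ : ℕ, H) (k + n)‖ ^ (2:ℕ) := by
  have h1 : ‖upFun S n x k‖ ≤ M * ‖(x : ∀ _ : ℕ, H) (k + n)‖ :=
    le_trans ((S k (k+n)).le_opNorm _) (by
      have := hM k (k+n); exact mul_le_mul_of_nonneg_right this (norm_nonneg _))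
  calc ‖upFun S n x k‖ ^ (2:ℕ) ≤ (M * ‖(x : ∀ _ : ℕ, H) (k + n)‖) ^ 2 :=
        pow_le_pow_left₀ (norm_nonneg _) h1 2
  _ = M ^ 2 * ‖(x : ∀ _ : ℕ, H) (k + n)‖ ^ 2 := by ring

lemma downFun_bound (n : ℕ) (x : ellTwo H) (k : ℕ) :
    ‖downFun S n x k‖ ^ (2:ℕ) ≤
      M ^ 2 * (if n ≤ k then ‖(x : ∀ _ : ℕ, H) (k - n)‖ ^ (2:ℕ) else 0) := by
  unfold downFun
  split_ifs with h
  · have h1 : ‖S k (k-n) ((x : ∀ _ : ℕ, H) (k - n))‖ ≤ M * ‖(x : ∀ _ : ℕ, H) (k - n)‖ :=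
      le_trans ((S k (k-n)).le_opNorm _)
        (mul_le_mul_of_nonneg_right (hM k (k-n)) (norm_nonneg _))
    calc ‖S k (k-n) ((x : ∀ _ : ℕ, H) (k - n))‖ ^ (2:ℕ)
        ≤ (M * ‖(x : ∀ _ : ℕ, H) (k - n)‖) ^ 2 := pow_le_pow_left₀ (norm_nonneg _) h1 2
    _ = _ := by ring
  · simp

lemma up_shift_summable (n : ℕ) (x : ellTwo H) :
    Summable fun k => ‖(x : ∀ _ : ℕ, H) (k + n)‖ ^ (2:ℕ) :=
  (summable_nat_add_iff n).2 (summable_sq x)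

lemma up_shift_tsum_le (n : ℕ) (x : ellTwo H) :
    ∑' k, ‖(x : ∀ _ : ℕ, H) (k + n)‖ ^ (2:ℕ) ≤ ‖x‖ ^ 2 := by
  rw [norm_sq_eq x]
  exact Summable.tsum_le_tsum_of_inj (· + n) (add_left_injective n)
    (fun c _ => by positivity) (fun i => le_rfl) (up_shift_summable S hM hM0 n x)
    (summable_sq x)

lemma down_shift_summable (n : ℕ) (x : ellTwo H) :
    Summable fun k => (if n ≤ k then ‖(x : ∀ _ : ℕ, H) (k - n)‖ ^ (2:ℕ) else 0) := by
  apply (summable_nat_add_iff n).1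
  have : (fun m => if n ≤ m + n then ‖(x : ∀ _ : ℕ, H) (m + n - n)‖ ^ (2:ℕ) else 0)
      = fun m => ‖(x : ∀ _ : ℕ, H) m‖ ^ (2:ℕ) := by
    funext m; rw [if_pos (Nat.le_add_left n m), Nat.add_sub_cancel]
  rw [this]; exact summable_sq x

lemma down_shift_tsum_le (n : ℕ) (x : ellTwo H) :
    ∑' k, (if n ≤ k then ‖(x : ∀ _ : ℕ, H) (k - n)‖ ^ (2:ℕ) else 0) ≤ ‖x‖ ^ 2 := by
  rw [norm_sq_eq x]
  have h := (Summable.sum_add_tsum_nat_add (f := fun k =>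
    (if n ≤ k then ‖(x : ∀ _ : ℕ, H) (k - n)‖ ^ (2:ℕ) else 0)) n
    (down_shift_summable S hM hM0 n x)).symm
  have hz : (∑ i ∈ Finset.range n,
      (if n ≤ i then ‖(x : ∀ _ : ℕ, H) (i - n)‖ ^ (2:ℕ) else 0)) = 0 := by
    apply Finset.sum_eq_zero; intro i hi
    rw [Finset.mem_range] at hi; rw [if_neg (by omega)]
  have he : (fun m => if n ≤ m + n then ‖(x : ∀ _ : ℕ, H) (m + n - n)‖ ^ (2:ℕ) else 0)
      = fun m => ‖(x : ∀ _ : ℕ, H) m‖ ^ (2:ℕ) := by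
    funext m; rw [if_pos (Nat.le_add_left n m), Nat.add_sub_cancel]
  rw [h, hz, zero_add, he]

lemma upFun_summable (n : ℕ) (x : ellTwo H) :
    Summable fun k => ‖upFun S n x k‖ ^ (2:ℕ) :=
  Summable.of_nonneg_of_le (fun k => by positivity) (upFun_bound S hM hM0 n x)
    ((up_shift_summable S hM hM0 n x).mul_left (M ^ 2))

lemma downFun_summable (n : ℕ) (x : ellTwo H) :
    Summable fun k => ‖downFun S n x k‖ ^ (2:ℕ) :=
  Summable.of_nonneg_of_le (fun k => by positivity) (downFun_bound S hM hM0 n x)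
    ((down_shift_summable S hM hM0 n x).mul_left (M ^ 2))

lemma upFun_tsum_le (n : ℕ) (x : ellTwo H) :
    ∑' k, ‖upFun S n x k‖ ^ (2:ℕ) ≤ (M * ‖x‖) ^ 2 := by
  calc ∑' k, ‖upFun S n x k‖ ^ (2:ℕ)
      ≤ ∑' k, M ^ 2 * ‖(x : ∀ _ : ℕ, H) (k + n)‖ ^ (2:ℕ) :=
        Summable.tsum_le_tsum (upFun_bound S hM hM0 n x) (upFun_summable S hM hM0 n x)
          ((up_shift_summable S hM hM0 n x).mul_left (M ^ 2))
  _ = M ^ 2 * ∑' k, ‖(x : ∀ _ : ℕ, H) (k + n)‖ ^ (2:ℕ) := tsum_mul_left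
  _ ≤ M ^ 2 * ‖x‖ ^ 2 := by
      exact mul_le_mul_of_nonneg_left (up_shift_tsum_le S hM hM0 n x) (by positivity)
  _ = (M * ‖x‖) ^ 2 := by ring

lemma downFun_tsum_le (n : ℕ) (x : ellTwo H) :
    ∑' k, ‖downFun S n x k‖ ^ (2:ℕ) ≤ (M * ‖x‖) ^ 2 := by
  calc ∑' k, ‖downFun S n x k‖ ^ (2:ℕ)
      ≤ ∑' k, M ^ 2 * (if n ≤ k then ‖(x : ∀ _ : ℕ, H) (k - n)‖ ^ (2:ℕ) else 0) :=
        Summable.tsum_le_tsum (downFun_bound S hM hM0 n x) (downFun_summable S hM hM0 n x)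
          ((down_shift_summable S hM hM0 n x).mul_left (M ^ 2))
  _ = M ^ 2 * ∑' k, (if n ≤ k then ‖(x : ∀ _ : ℕ, H) (k - n)‖ ^ (2:ℕ) else 0) := tsum_mul_left
  _ ≤ M ^ 2 * ‖x‖ ^ 2 :=
      mul_le_mul_of_nonneg_left (down_shift_tsum_le S hM hM0 n x) (by positivity)
  _ = (M * ‖x‖) ^ 2 := by ring

def upOp (n : ℕ) : ellTwo H →L[ℂ] ellTwo H :=
  LinearMap.mkContinuous
    { toFun := fun x => (⟨upFun S n x, memℓp_of_sq (upFun_summable S hM hM0 n x)⟩ : ellTwo H)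
      map_add' := fun x y => by
        apply lp.ext; funext k
        show S k (k+n) (((x + y) : ellTwo H) (k+n)) = _
        rw [lp.coeFn_add]
        simp [upFun]
        rfl
      map_smul' := fun c x => by
        apply lp.ext; funext k
        show S k (k+n) (((c • x) : ellTwo H) (k+n)) = _
        rw [lp.coeFn_smul]
        simp [upFun] }
    M (fun x => norm_le_of_sq (by positivity) (by
        simpa using (upFun_tsum_le S hM hM0 n x)))

def downOp (n : ℕ) : ellTwo H →L[ℂ] ellTwo H :=
  LinearMap.mkContinuous
    { toFun := fun x => (⟨downFun S n x, memℓp_of_sq (downFun_summable S hM hM0 n x)⟩ : ellTwo H)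
      map_add' := fun x y => by
        apply lp.ext; funext k
        rw [lp.coeFn_add, Pi.add_apply]
        show downFun S n (x + y) k = downFun S n x k + downFun S n y k
        unfold downFun
        rw [lp.coeFn_add]
        split_ifs <;> simp
      map_smul' := fun c x => by
        apply lp.ext; funext k
        simp only [RingHom.id_apply]
        rw [lp.coeFn_smul, Pi.smul_apply]
        show downFun S n (c • x) k = c • downFun S n x k
        unfold downFun
        rw [lp.coeFn_smul]
        split_ifs <;> simp }
    M (fun x => norm_le_of_sq (by positivity) (by
        simpa using (downFun_tsum_le S hM hM0 n x)))

lemma upOp_norm_le (n : ℕ) : ‖upOp S hM hM0 n‖ ≤ M :=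
  LinearMap.mkContinuous_norm_le _ hM0 _

lemma downOp_norm_le (n : ℕ) : ‖downOp S hM hM0 n‖ ≤ M :=
  LinearMap.mkContinuous_norm_le _ hM0 _

lemma upOp_apply (n : ℕ) (x : ellTwo H) (k : ℕ) :
    (upOp S hM hM0 n x : ∀ _ : ℕ, H) k = S k (k + n) (x (k + n)) := rfl

lemma downOp_apply (n : ℕ) (x : ellTwo H) (k : ℕ) :
    (downOp S hM hM0 n x : ∀ _ : ℕ, H) k
      = if n ≤ k then S k (k - n) (x (k - n)) else 0 := rfl

lemma upOp_single (n j : ℕ) (a : H) (k : ℕ) :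
    (upOp S hM hM0 n (lp.single 2 j a) : ∀ _ : ℕ, H) k
      = if k + n = j then S k j a else 0 := by
  rw [upOp_apply, single_apply']
  split_ifs with h
  · subst h; rfl
  · simp

lemma downOp_single (n j : ℕ) (a : H) (k : ℕ) :
    (downOp S hM hM0 n (lp.single 2 j a) : ∀ _ : ℕ, H) k
      = if k = j + n then S k j a else 0 := by
  rw [downOp_apply, single_apply']
  by_cases h : k = j + n
  · rw [if_pos h, if_pos (by omega), if_pos (by omega)]
    subst h; congr 2; omega
  · rw [if_neg h]
    split_ifs with h1 h2
    · omega
    · simp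
    · rfl

end Diag

end WAux

namespace WAux

section OpOf

variable (S : ℕ → ℕ → (H →L[ℂ] H)) {M : ℝ}
variable (hM : ∀ k j, ‖S k j‖ ≤ M) (hM0 : 0 ≤ M)

def opOf (N : ℕ) : ellTwo H →L[ℂ] ellTwo H :=
  (∑ n ∈ Finset.range (N + 1), upOp S hM hM0 n) + ∑ n ∈ Finset.Icc 1 N, downOp S hM hM0 n

lemma opOf_norm_le (N : ℕ) : ‖opOf S hM hM0 N‖ ≤ (2 * N + 1) * M := by
  unfold opOf
  refine le_trans (norm_add_le _ _) ?_
  have h1 : ‖∑ n ∈ Finset.range (N + 1), upOp S hM hM0 n‖ ≤ (N + 1) * M := by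
    refine le_trans (norm_sum_le _ _) ?_
    calc (∑ n ∈ Finset.range (N + 1), ‖upOp S hM hM0 n‖)
        ≤ ∑ _n ∈ Finset.range (N + 1), M :=
          Finset.sum_le_sum fun n _ => upOp_norm_le S hM hM0 n
    _ = (N + 1) * M := by simp [Finset.sum_const]
  have h2 : ‖∑ n ∈ Finset.Icc 1 N, downOp S hM hM0 n‖ ≤ N * M := by
    refine le_trans (norm_sum_le _ _) ?_
    calc (∑ n ∈ Finset.Icc 1 N, ‖downOp S hM hM0 n‖)
        ≤ ∑ _n ∈ Finset.Icc 1 N, M :=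
          Finset.sum_le_sum fun n _ => downOp_norm_le S hM hM0 n
    _ = N * M := by simp [Finset.sum_const, Nat.card_Icc]
  have : ((2:ℝ) * N + 1) * M = (N+1)*M + N*M := by ring
  rw [this]
  exact add_le_add h1 h2

lemma opOf_represents (N : ℕ)
    (hband : ∀ k j : ℕ, (N : ℤ) < |(j : ℤ) - (k : ℤ)| → S k j = 0) :
    Represents S (opOf S hM hM0 N) := by
  intro j a k
  unfold opOf
  rw [ContinuousLinearMap.add_apply, lp.coeFn_add, Pi.add_apply,
    ContinuousLinearMap.sum_apply, ContinuousLinearMap.sum_apply,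
    lp.coeFn_sum, Finset.sum_apply, lp.coeFn_sum, Finset.sum_apply]
  have hup : ∀ n, (upOp S hM hM0 n (lp.single 2 j a) : ∀ _ : ℕ, H) k
      = if k + n = j then S k j a else 0 := fun n => upOp_single S hM hM0 n j a k
  have hdown : ∀ n, (downOp S hM hM0 n (lp.single 2 j a) : ∀ _ : ℕ, H) k
      = if k = j + n then S k j a else 0 := fun n => downOp_single S hM hM0 n j a k
  simp only [hup, hdown]
  rcases le_or_gt k j with hkj | hkj
  · have h2 : (∑ n ∈ Finset.Icc 1 N, if k = j + n then S k j a else 0) = 0 :=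
      Finset.sum_eq_zero fun n hn => by
        rw [Finset.mem_Icc] at hn; rw [if_neg (by omega)]
    rw [h2, add_zero]
    by_cases hN : j - k ≤ N
    · rw [Finset.sum_eq_single_of_mem (j - k) (by rw [Finset.mem_range]; omega)
        (fun n _ hne => by rw [if_neg (by omega)])]
      rw [if_pos (by omega)]
    · have hz : (∑ n ∈ Finset.range (N + 1), if k + n = j then S k j a else 0) = 0 :=
        Finset.sum_eq_zero fun n hn => by
          rw [Finset.mem_range] at hn; rw [if_neg (by omega)]
      rw [hz]
      have : S k j = 0 := hband k j (by rw [abs_of_nonneg (by omega : (0:ℤ) ≤ (j:ℤ) - k)]; omega)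
      simp [this]
  · have h1 : (∑ n ∈ Finset.range (N + 1), if k + n = j then S k j a else 0) = 0 :=
      Finset.sum_eq_zero fun n hn => by rw [if_neg (by omega)]
    rw [h1, zero_add]
    by_cases hN : k - j ≤ N
    · rw [Finset.sum_eq_single_of_mem (k - j) (by rw [Finset.mem_Icc]; omega)
        (fun n _ hne => by rw [if_neg (by omega)])]
      rw [if_pos (by omega)]
    · have hz : (∑ n ∈ Finset.Icc 1 N, if k = j + n then S k j a else 0) = 0 :=
        Finset.sum_eq_zero fun n hn => by
          rw [Finset.mem_Icc] at hn; rw [if_neg (by omega)]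
      rw [hz]
      have : S k j = 0 := hband k j (by rw [abs_of_nonpos (by omega : (j:ℤ) - k ≤ 0)]; omega)
      simp [this]

end OpOf

lemma represents_unique {S : ℕ → ℕ → (H →L[ℂ] H)} {B₁ B₂ : ellTwo H →L[ℂ] ellTwo H}
    (h1 : Represents S B₁) (h2 : Represents S B₂) : B₁ = B₂ := by
  refine ContinuousLinearMap.ext fun x => ?_
  have key : ∀ j : ℕ, B₁ (lp.single 2 j (x j)) = B₂ (lp.single 2 j (x j)) := fun j =>
    lp.ext (funext fun k => by rw [h1 j (x j) k, h2 j (x j) k])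
  have hx := lp.hasSum_single (E := fun _ : ℕ => H) (p := 2) ENNReal.ofNat_ne_top x
  have hx1 := hx.mapL B₁
  have hx2 := hx.mapL B₂
  simp only [key] at hx1
  exact hx1.unique hx2

lemma represents_sub {S₁ S₂ : ℕ → ℕ → (H →L[ℂ] H)} {B₁ B₂ : ellTwo H →L[ℂ] ellTwo H}
    (h1 : Represents S₁ B₁) (h2 : Represents S₂ B₂) :
    Represents (fun k j => S₁ k j - S₂ k j) (B₁ - B₂) := by
  intro j a k
  rw [ContinuousLinearMap.sub_apply, lp.coeFn_sub, Pi.sub_apply, h1 j a k, h2 j a k]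
  rfl

def trnc (s : Finset ℕ) (x : ellTwo H) : ellTwo H := ∑ i ∈ s, lp.single 2 i (x i)

lemma norm_trnc_sq (s : Finset ℕ) (x : ellTwo H) :
    ‖trnc s x‖ ^ (2:ℕ) = ∑ i ∈ s, ‖(x : ∀ _ : ℕ, H) i‖ ^ (2:ℕ) := by
  have := lp.norm_sum_single (p := 2) (by rw [twoR]; norm_num) (⇑x) s
  rw [twoR] at this
  calc (‖trnc s x‖:ℝ) ^ (2:ℕ) = ‖trnc s x‖ ^ (2:ℝ) := by rw [← Real.rpow_natCast]; norm_num
  _ = ∑ i ∈ s, ‖(x : ∀ _ : ℕ, H) i‖ ^ (2:ℝ) := this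
  _ = _ := Finset.sum_congr rfl fun i _ => by rw [← Real.rpow_natCast]; norm_num

lemma norm_trnc_le (s : Finset ℕ) (x : ellTwo H) : ‖trnc s x‖ ≤ ‖x‖ := by
  have h1 := norm_trnc_sq s x
  have h2 : ∑ i ∈ s, ‖(x : ∀ _ : ℕ, H) i‖ ^ (2:ℕ) ≤ ‖x‖ ^ (2:ℕ) := by
    rw [norm_sq_eq x]
    exact Summable.sum_le_tsum s (fun i _ => by positivity) (summable_sq x)
  nlinarith [norm_nonneg (trnc s x), norm_nonneg x]

lemma tendsto_trnc (x : ellTwo H) :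
    Filter.Tendsto (fun n => trnc (Finset.range n) x) Filter.atTop (nhds x) :=
  (lp.hasSum_single (E := fun _ : ℕ => H) (p := 2) ENNReal.ofNat_ne_top x).tendsto_sum_nat

end WAux


namespace WAux

local notation "⟪" x ", " y "⟫" => @inner ℂ _ _ x y

def pf (r : ℝ) (j : ℕ) (m : ℤ) : ℝ :=
  if m ≤ (j:ℤ) then Real.sqrt (1 - r^2) * r ^ ((j:ℤ) - m).toNat else 0

variable {r : ℝ}

lemma sq_lt_one (hr : r ∈ Set.Ico (0:ℝ) 1) : r ^ 2 < 1 :=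
  pow_lt_one₀ hr.1 hr.2 (by norm_num)

lemma pf_nonneg (hr : r ∈ Set.Ico (0:ℝ) 1) (j : ℕ) (m : ℤ) : 0 ≤ pf r j m := by
  unfold pf; split_ifs
  · have := hr.1; positivity
  · exact le_rfl

lemma pf_le_one (hr : r ∈ Set.Ico (0:ℝ) 1) (j : ℕ) (m : ℤ) : pf r j m ≤ 1 := by
  have h2 := sq_lt_one hr
  unfold pf; split_ifs
  · have h1 : Real.sqrt (1 - r^2) ≤ 1 := Real.sqrt_le_one.mpr (by nlinarith)
    have h3 : r ^ ((j:ℤ) - m).toNat ≤ 1 := pow_le_one₀ hr.1 hr.2.le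
    have h4 : (0:ℝ) ≤ r ^ ((j:ℤ) - m).toNat := pow_nonneg hr.1 _
    nlinarith [Real.sqrt_nonneg (1 - r^2)]
  · norm_num

lemma pf_hasSum_aux (hr : r ∈ Set.Ico (0:ℝ) 1) {k j : ℕ} (hkj : k ≤ j) :
    HasSum (fun m : ℤ => pf r j m * pf r k m) (r ^ (j - k)) := by
  have hr2 : r ^ 2 < 1 := sq_lt_one hr
  have h1 : (0:ℝ) ≤ 1 - r ^ 2 := by linarith
  have hsq : Real.sqrt (1 - r^2) * Real.sqrt (1 - r^2) = 1 - r^2 := Real.mul_self_sqrt h1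
  have key : ∀ n : ℕ, pf r j ((k:ℤ) - n) * pf r k ((k:ℤ) - n)
      = ((1 - r^2) * r ^ (j - k)) * (r^2)^n := by
    intro n
    unfold pf
    rw [if_pos (by omega), if_pos (by omega)]
    have e1 : ((j:ℤ) - ((k:ℤ) - n)).toNat = (j - k) + n := by omega
    have e2 : ((k:ℤ) - ((k:ℤ) - n)).toNat = n := by omega
    rw [e1, e2, pow_add]
    calc (Real.sqrt (1-r^2) * (r ^ (j-k) * r ^ n)) * (Real.sqrt (1-r^2) * r ^ n)
        = (Real.sqrt (1-r^2) * Real.sqrt (1-r^2)) * r ^ (j-k) * (r ^ n * r ^ n) := by ring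
    _ = (1 - r^2) * r ^ (j-k) * (r^2)^n := by
        rw [hsq, ← pow_add, ← two_mul, pow_mul]
    _ = _ := by ring
  have hg : HasSum (fun n : ℕ => ((1 - r^2) * r ^ (j - k)) * (r^2)^n)
      (((1 - r^2) * r ^ (j - k)) * (1 - r^2)⁻¹) :=
    (hasSum_geometric_of_lt_one (by positivity) hr2).mul_left _
  have hval : ((1 - r^2) * r ^ (j - k)) * (1 - r^2)⁻¹ = r ^ (j - k) := by
    rw [mul_comm (1 - r^2) (r ^ (j - k)), mul_assoc, mul_inv_cancel₀ (by nlinarith), mul_one]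
  rw [hval] at hg
  refine (Function.Injective.hasSum_iff (g := fun n : ℕ => (k:ℤ) - n)
    (fun a b hab => by simp only at hab; omega) ?_).1 ?_
  · intro m hm
    have hle : ¬ m ≤ (k:ℤ) := fun hle => hm ⟨((k:ℤ) - m).toNat, by simp only; omega⟩
    have : pf r k m = 0 := by unfold pf; rw [if_neg (by omega)]
    rw [this, mul_zero]
  · have : ((fun m : ℤ => pf r j m * pf r k m) ∘ fun n : ℕ => (k:ℤ) - n)
        = fun n : ℕ => ((1 - r^2) * r ^ (j - k)) * (r^2)^n := funext fun n => key n
    rw [this]; exact hg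

lemma pf_hasSum (hr : r ∈ Set.Ico (0:ℝ) 1) (j k : ℕ) :
    HasSum (fun m : ℤ => pf r j m * pf r k m) (r ^ ((j:ℤ) - (k:ℤ)).natAbs) := by
  rcases le_total k j with h | h
  · have he : ((j:ℤ) - (k:ℤ)).natAbs = j - k := by omega
    rw [he]; exact pf_hasSum_aux hr h
  · have he : ((j:ℤ) - (k:ℤ)).natAbs = k - j := by omega
    rw [he]
    have := pf_hasSum_aux hr h
    simpa [mul_comm] using this

def Vmat (r : ℝ) (m : ℤ) : ℕ → ℕ → (H →L[ℂ] H) :=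
  fun k _ => (((pf r k m : ℝ)) : ℂ) • (1 : H →L[ℂ] H)

lemma Vmat_bound (hr : r ∈ Set.Ico (0:ℝ) 1) (m : ℤ) (k j : ℕ) :
    ‖Vmat (H := H) r m k j‖ ≤ 1 := by
  unfold Vmat
  rw [norm_smul]
  calc ‖((pf r k m : ℝ) : ℂ)‖ * ‖(1 : H →L[ℂ] H)‖ ≤ 1 * 1 := by
        refine mul_le_mul ?_ ContinuousLinearMap.norm_id_le (norm_nonneg _) zero_le_one
        rw [Complex.norm_real, Real.norm_eq_abs, abs_of_nonneg (pf_nonneg hr k m)]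
        exact pf_le_one hr k m
  _ = 1 := by norm_num

def V (hr : r ∈ Set.Ico (0:ℝ) 1) (m : ℤ) : ellTwo H →L[ℂ] ellTwo H :=
  upOp (Vmat r m) (fun k j => Vmat_bound hr m k j) zero_le_one 0

lemma V_single (hr : r ∈ Set.Ico (0:ℝ) 1) (m : ℤ) (j : ℕ) (a : H) :
    V hr m (lp.single 2 j a) = ((pf r j m : ℝ) : ℂ) • lp.single 2 j a := by
  rw [← lp.single_smul]
  apply lp.ext; funext k
  rw [show (V hr m (lp.single 2 j a) : ∀ _ : ℕ, H) k
    = if k + 0 = j then Vmat r m k j a else 0 from upOp_single _ _ _ 0 j a k]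
  rw [single_apply']
  by_cases h : k = j
  · rw [if_pos (by omega), if_pos h]; subst h
    show ((pf r k m : ℝ) : ℂ) • a = _
    rfl
  · rw [if_neg (by omega), if_neg h]

end WAux

namespace WAux

open Filter

local notation "⟪" x ", " y "⟫" => @inner ℂ _ _ x y

variable {r : ℝ} {S : ℕ → ℕ → (H →L[ℂ] H)} {B C : ellTwo H →L[ℂ] ellTwo H}

lemma norm_sum_single_sq (s : Finset ℕ) (g : ℕ → H) :
    ‖(∑ i ∈ s, lp.single 2 i (g i) : ellTwo H)‖ ^ (2:ℕ) = ∑ i ∈ s, ‖g i‖ ^ (2:ℕ) := by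
  have := lp.norm_sum_single (p := 2) (by rw [twoR]; norm_num) g s
  rw [twoR] at this
  calc (‖(∑ i ∈ s, lp.single 2 i (g i) : ellTwo H)‖:ℝ) ^ (2:ℕ)
      = ‖(∑ i ∈ s, lp.single 2 i (g i) : ellTwo H)‖ ^ (2:ℝ) := by
        rw [← Real.rpow_natCast]; norm_num
  _ = ∑ i ∈ s, ‖g i‖ ^ (2:ℝ) := this
  _ = _ := Finset.sum_congr rfl fun i _ => by rw [← Real.rpow_natCast]; norm_num

lemma inner_single_inner (hr : r ∈ Set.Ico (0:ℝ) 1) (hB : Represents S B)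
    (hC : Represents (poissonMat S r) C) (j k : ℕ) (a b : H) :
    HasSum (fun m : ℤ => ⟪B (V hr m (lp.single 2 j a)), V hr m (lp.single 2 k b)⟫)
      ⟪C (lp.single 2 j a), lp.single 2 k b⟫ := by
  have hRHS : ⟪C (lp.single 2 j a), lp.single 2 k b⟫
      = ((r ^ ((j:ℤ)-(k:ℤ)).natAbs : ℝ) : ℂ) * ⟪S k j a, b⟫ := by
    rw [lp.inner_single_right, hC j a k]
    show ⟪((r ^ ((j:ℤ)-(k:ℤ)).natAbs : ℝ) • S k j) a, b⟫ = _
    rw [ContinuousLinearMap.smul_apply, RCLike.real_smul_eq_coe_smul (K := ℂ),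
      inner_smul_left, RCLike.conj_ofReal]
    norm_cast
  have hBs : ⟪B (lp.single 2 j a), lp.single 2 k b⟫ = ⟪S k j a, b⟫ := by
    rw [lp.inner_single_right, hB j a k]
  have hLHS : ∀ m : ℤ, ⟪B (V hr m (lp.single 2 j a)), V hr m (lp.single 2 k b)⟫
      = ((pf r j m * pf r k m : ℝ) : ℂ) * ⟪S k j a, b⟫ := by
    intro m
    rw [V_single, V_single, map_smul, inner_smul_left, inner_smul_right,
      Complex.conj_ofReal, hBs]
    push_cast; ring
  simp only [hLHS, hRHS]
  exact ((pf_hasSum hr j k).mapL Complex.ofRealCLM).mul_right _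

lemma hasSum_inner_trnc (hr : r ∈ Set.Ico (0:ℝ) 1) (hB : Represents S B)
    (hC : Represents (poissonMat S r) C) (s t : Finset ℕ) (x y : ellTwo H) :
    HasSum (fun m : ℤ => ⟪B (V hr m (trnc s x)), V hr m (trnc t y)⟫)
      ⟪C (trnc s x), trnc t y⟫ := by
  unfold trnc
  simp only [map_sum, sum_inner, inner_sum]
  apply hasSum_sum
  intro i _
  apply hasSum_sum
  intro l _
  exact inner_single_inner hr hB hC _ _ _ _

lemma hasSum_V_norm_sq (hr : r ∈ Set.Ico (0:ℝ) 1) (s : Finset ℕ) (x : ellTwo H) :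
    HasSum (fun m : ℤ => ‖V hr m (trnc s x)‖ ^ (2:ℕ)) (‖trnc s x‖ ^ (2:ℕ)) := by
  have hv : ∀ m : ℤ, V hr m (trnc s x) = ∑ i ∈ s, lp.single 2 i (((pf r i m : ℝ) : ℂ) • x i) := by
    intro m; unfold trnc; rw [map_sum]
    exact Finset.sum_congr rfl fun i _ => by rw [V_single, ← lp.single_smul]
  have hn : ∀ m : ℤ, ‖V hr m (trnc s x)‖ ^ (2:ℕ)
      = ∑ i ∈ s, (pf r i m * pf r i m) * ‖(x : ∀ _ : ℕ, H) i‖ ^ (2:ℕ) := by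
    intro m
    rw [hv m, norm_sum_single_sq]
    refine Finset.sum_congr rfl fun i _ => ?_
    rw [norm_smul, Complex.norm_real, Real.norm_eq_abs,
      abs_of_nonneg (pf_nonneg hr i m)]
    ring
  simp only [hn, norm_trnc_sq]
  apply hasSum_sum
  intro i _
  have := (pf_hasSum hr i i).mul_right (‖(x : ∀ _ : ℕ, H) i‖ ^ (2:ℕ))
  simpa using this

lemma tsum_cs {a b : ℤ → ℝ} {Sa Sb : ℝ} (ha : ∀ m, 0 ≤ a m) (hb : ∀ m, 0 ≤ b m)
    (hA : HasSum (fun m => a m ^ (2:ℕ)) Sa) (hB : HasSum (fun m => b m ^ (2:ℕ)) Sb) :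
    Summable (fun m => a m * b m) ∧ ∑' m, a m * b m ≤ Real.sqrt Sa * Real.sqrt Sb := by
  have hsum : Summable (fun m => a m * b m) := by
    refine Summable.of_nonneg_of_le (fun m => mul_nonneg (ha m) (hb m))
      (fun m => ?_) ((hA.summable.add hB.summable).div_const 2)
    nlinarith [sq_nonneg (a m - b m)]
  refine ⟨hsum, Summable.tsum_le_of_sum_le hsum fun u => ?_⟩
  have h1 : (∑ m ∈ u, a m * b m) ^ 2 ≤ (∑ m ∈ u, a m ^ 2) * ∑ m ∈ u, b m ^ 2 :=
    Finset.sum_mul_sq_le_sq_mul_sq u a b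
  have h2 : ∑ m ∈ u, a m ^ 2 ≤ Sa := sum_le_hasSum u (fun m _ => sq_nonneg _) hA
  have h3 : ∑ m ∈ u, b m ^ 2 ≤ Sb := sum_le_hasSum u (fun m _ => sq_nonneg _) hB
  have hSa : 0 ≤ Sa := le_trans (by positivity) (sum_le_hasSum (∅ : Finset ℤ)
    (fun m _ => sq_nonneg _) hA)
  have hSb : 0 ≤ Sb := le_trans (by positivity) (sum_le_hasSum (∅ : Finset ℤ)
    (fun m _ => sq_nonneg _) hB)
  have h4 : 0 ≤ ∑ m ∈ u, a m * b m := Finset.sum_nonneg fun m _ => mul_nonneg (ha m) (hb m)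
  have h5 : (∑ m ∈ u, a m * b m) ≤ Real.sqrt (Sa * Sb) :=
    (Real.le_sqrt h4 (by positivity)).2 (le_trans h1
      (mul_le_mul h2 h3 (Finset.sum_nonneg fun m _ => sq_nonneg _) hSa))
  rwa [Real.sqrt_mul hSa] at h5

lemma inner_est_trnc (hr : r ∈ Set.Ico (0:ℝ) 1) (hB : Represents S B)
    (hC : Represents (poissonMat S r) C) (s t : Finset ℕ) (x y : ellTwo H) :
    ‖⟪C (trnc s x), trnc t y⟫‖ ≤ ‖B‖ * (‖trnc s x‖ * ‖trnc t y‖) := by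
  have hsum := hasSum_inner_trnc hr hB hC s t x y
  have haX := hasSum_V_norm_sq hr s x
  have hbY := hasSum_V_norm_sq hr t y
  obtain ⟨hab, hcs⟩ := tsum_cs (fun m => norm_nonneg _) (fun m => norm_nonneg _) haX hbY
  have hpt : ∀ m : ℤ, ‖⟪B (V hr m (trnc s x)), V hr m (trnc t y)⟫‖
      ≤ ‖B‖ * (‖V hr m (trnc s x)‖ * ‖V hr m (trnc t y)‖) := by
    intro m
    refine le_trans (norm_inner_le_norm _ _) ?_
    calc ‖B (V hr m (trnc s x))‖ * ‖V hr m (trnc t y)‖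
        ≤ (‖B‖ * ‖V hr m (trnc s x)‖) * ‖V hr m (trnc t y)‖ :=
          mul_le_mul_of_nonneg_right (B.le_opNorm _) (norm_nonneg _)
    _ = ‖B‖ * (‖V hr m (trnc s x)‖ * ‖V hr m (trnc t y)‖) := by ring
  have hsummable : Summable (fun m : ℤ => ‖⟪B (V hr m (trnc s x)), V hr m (trnc t y)⟫‖) :=
    Summable.of_nonneg_of_le (fun m => norm_nonneg _) hpt (hab.mul_left ‖B‖)
  calc ‖⟪C (trnc s x), trnc t y⟫‖
      = ‖∑' m : ℤ, ⟪B (V hr m (trnc s x)), V hr m (trnc t y)⟫‖ := by rw [hsum.tsum_eq]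
  _ ≤ ∑' m : ℤ, ‖⟪B (V hr m (trnc s x)), V hr m (trnc t y)⟫‖ :=
      norm_tsum_le_tsum_norm hsummable
  _ ≤ ∑' m : ℤ, ‖B‖ * (‖V hr m (trnc s x)‖ * ‖V hr m (trnc t y)‖) :=
      Summable.tsum_le_tsum hpt hsummable (hab.mul_left ‖B‖)
  _ = ‖B‖ * ∑' m : ℤ, ‖V hr m (trnc s x)‖ * ‖V hr m (trnc t y)‖ := tsum_mul_left
  _ ≤ ‖B‖ * (Real.sqrt (‖trnc s x‖ ^ (2:ℕ)) * Real.sqrt (‖trnc t y‖ ^ (2:ℕ))) :=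
      mul_le_mul_of_nonneg_left hcs (norm_nonneg B)
  _ = ‖B‖ * (‖trnc s x‖ * ‖trnc t y‖) := by
      rw [Real.sqrt_sq (norm_nonneg _), Real.sqrt_sq (norm_nonneg _)]

lemma inner_est (hr : r ∈ Set.Ico (0:ℝ) 1) (hB : Represents S B)
    (hC : Represents (poissonMat S r) C) (x y : ellTwo H) :
    ‖⟪C x, y⟫‖ ≤ ‖B‖ * (‖x‖ * ‖y‖) := by
  have hx := tendsto_trnc x
  have hy := tendsto_trnc y
  have l1 : Tendsto (fun n => ‖⟪C (trnc (Finset.range n) x), trnc (Finset.range n) y⟫‖)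
      atTop (nhds ‖⟪C x, y⟫‖) := (Filter.Tendsto.inner ((C.continuous.tendsto x).comp hx) hy).norm
  have l2 : Tendsto (fun n => ‖B‖ * (‖trnc (Finset.range n) x‖ * ‖trnc (Finset.range n) y‖))
      atTop (nhds (‖B‖ * (‖x‖ * ‖y‖))) := tendsto_const_nhds.mul (hx.norm.mul hy.norm)
  exact le_of_tendsto_of_tendsto' l1 l2 fun n => inner_est_trnc hr hB hC _ _ x y

lemma contraction (hr : r ∈ Set.Ico (0:ℝ) 1) (hB : Represents S B)
    (hC : Represents (poissonMat S r) C) : ‖C‖ ≤ ‖B‖ := by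
  refine C.opNorm_le_bound (norm_nonneg B) fun x => ?_
  rcases eq_or_lt_of_le (norm_nonneg (C x)) with h0 | h0
  · rw [← h0]; positivity
  · have h := inner_est hr hB hC x (C x)
    have h2 : ‖C x‖ ^ 2 = RCLike.re ⟪C x, C x⟫ := norm_sq_eq_re_inner (𝕜 := ℂ) (C x)
    have h3 : RCLike.re ⟪C x, C x⟫ ≤ ‖⟪C x, C x⟫‖ := RCLike.re_le_norm _
    nlinarith [norm_nonneg x, norm_nonneg B]

end WAux


namespace WAux

open Filter

variable {r : ℝ}

lemma wiener_poisson {T : ℕ → ℕ → (H →L[ℂ] H)} {c : ℝ} (hc : 0 ≤ c)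
    (hT : ∀ k j, ‖T k j‖ ≤ c) (hr : r ∈ Set.Ico (0:ℝ) 1) :
    WienerMat (poissonMat T r) := by
  have hentry : ∀ k j : ℕ, ‖poissonMat T r k j‖ ≤ r ^ ((j:ℤ)-(k:ℤ)).natAbs * c := by
    intro k j
    unfold poissonMat
    rw [norm_smul, Real.norm_eq_abs, abs_of_nonneg (pow_nonneg hr.1 _)]
    exact mul_le_mul_of_nonneg_left (hT k j) (pow_nonneg hr.1 _)
  have hub : ∀ l : ℤ, ∀ ρ ∈ {ρ : ℝ | ∃ k j : ℕ, (j:ℤ) = (k:ℤ) + l ∧ ρ = ‖poissonMat T r k j‖},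
      ρ ≤ r ^ l.natAbs * c := by
    rintro l ρ ⟨k, j, hkj, rfl⟩
    have he : ((j:ℤ)-(k:ℤ)).natAbs = l.natAbs := by omega
    calc ‖poissonMat T r k j‖ ≤ r ^ ((j:ℤ)-(k:ℤ)).natAbs * c := hentry k j
    _ = r ^ l.natAbs * c := by rw [he]
  have hmem : ∀ l : ℤ, ‖poissonMat T r ((-l).toNat) (l.toNat)‖
      ∈ {ρ : ℝ | ∃ k j : ℕ, (j:ℤ) = (k:ℤ) + l ∧ ρ = ‖poissonMat T r k j‖} :=
    fun l => ⟨(-l).toNat, l.toNat, by omega, rfl⟩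
  have hbdd : ∀ l : ℤ, BddAbove {ρ : ℝ | ∃ k j : ℕ, (j:ℤ) = (k:ℤ) + l ∧ ρ = ‖poissonMat T r k j‖} :=
    fun l => ⟨r ^ l.natAbs * c, fun ρ hρ => hub l ρ hρ⟩
  refine ⟨hbdd, ?_⟩
  have hgeo : Summable (fun l : ℤ => r ^ l.natAbs * c) := by
    apply Summable.mul_right
    apply Summable.of_nat_of_neg
    · simpa using summable_geometric_of_lt_one hr.1 hr.2
    · simpa using summable_geometric_of_lt_one hr.1 hr.2
  refine Summable.of_nonneg_of_le (fun l => ?_) (fun l => ?_) hgeo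
  · exact le_trans (norm_nonneg _) (le_csSup (hbdd l) (hmem l))
  · exact csSup_le ⟨_, hmem l⟩ (hub l)

lemma poly_close {S : ℕ → ℕ → (H →L[ℂ] H)} {B : ellTwo H →L[ℂ] ellTwo H} {N : ℕ} {M : ℝ}
    (hband : ∀ k j : ℕ, (N : ℤ) < |(j : ℤ) - (k : ℤ)| → S k j = 0)
    (hM : ∀ k j, ‖S k j‖ ≤ M) (hM0 : 0 ≤ M) (hB : Represents S B)
    (hr : r ∈ Set.Ico (0:ℝ) 1) :
    ∃ C, Represents (poissonMat S r) C ∧ ‖C - B‖ ≤ (2 * N + 1) * ((1 - r ^ N) * M) := by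
  have hone : ∀ e : ℕ, r ^ e ≤ 1 := fun e => pow_le_one₀ hr.1 hr.2.le
  have hpM : ∀ k j, ‖poissonMat S r k j‖ ≤ M := by
    intro k j
    unfold poissonMat
    rw [norm_smul, Real.norm_eq_abs, abs_of_nonneg (pow_nonneg hr.1 _)]
    calc r ^ ((j:ℤ)-(k:ℤ)).natAbs * ‖S k j‖ ≤ 1 * M :=
          mul_le_mul (hone _) (hM k j) (norm_nonneg _) zero_le_one
    _ = M := one_mul M
  have hpband : ∀ k j : ℕ, (N : ℤ) < |(j : ℤ) - (k : ℤ)| → poissonMat S r k j = 0 := by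
    intro k j h; unfold poissonMat; rw [hband k j h, smul_zero]
  set C := opOf (poissonMat S r) hpM hM0 N with hCdef
  have hCrep : Represents (poissonMat S r) C := opOf_represents _ hpM hM0 N hpband
  have hDM0 : 0 ≤ (1 - r ^ N) * M := mul_nonneg (by linarith [hone N]) hM0
  have hDb : ∀ k j, ‖poissonMat S r k j - S k j‖ ≤ (1 - r ^ N) * M := by
    intro k j
    by_cases hbd : ((j:ℤ)-(k:ℤ)).natAbs ≤ N
    · unfold poissonMat
      rw [show (r ^ ((j:ℤ)-(k:ℤ)).natAbs) • S k j - S k j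
          = (r ^ ((j:ℤ)-(k:ℤ)).natAbs - 1) • S k j from by rw [sub_smul, one_smul]]
      rw [norm_smul, Real.norm_eq_abs, abs_of_nonpos (by linarith [hone ((j:ℤ)-(k:ℤ)).natAbs])]
      have hre : r ^ N ≤ r ^ ((j:ℤ)-(k:ℤ)).natAbs := pow_le_pow_of_le_one hr.1 hr.2.le hbd
      refine mul_le_mul (by linarith) (hM k j) (norm_nonneg _) (by linarith [hone N])
    · have hz : S k j = 0 := hband k j (by rw [Int.abs_eq_natAbs]; omega)
      have hz2 : poissonMat S r k j = 0 := by unfold poissonMat; rw [hz, smul_zero]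
      rw [hz, hz2, sub_zero, norm_zero]
      exact hDM0
  have hDband : ∀ k j : ℕ, (N : ℤ) < |(j : ℤ) - (k : ℤ)| →
      poissonMat S r k j - S k j = 0 := by
    intro k j h; rw [hband k j h, hpband k j h, sub_zero]
  set D := opOf (fun k j => poissonMat S r k j - S k j) hDb hDM0 N with hDdef
  have hDrep : Represents (fun k j => poissonMat S r k j - S k j) D :=
    opOf_represents _ hDb hDM0 N hDband
  have hCB : C - B = D := represents_unique (represents_sub hCrep hB) hDrep
  refine ⟨C, hCrep, ?_⟩
  rw [hCB]
  exact opOf_norm_le _ hDb hDM0 N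

lemma tendsto_coord {u : ℕ → ellTwo H} {w : ellTwo H}
    (h : Tendsto u atTop (nhds w)) (k : ℕ) :
    Tendsto (fun n => (u n : ∀ _ : ℕ, H) k) atTop (nhds ((w : ∀ _ : ℕ, H) k)) := by
  rw [tendsto_iff_norm_sub_tendsto_zero] at h ⊢
  refine squeeze_zero (fun n => norm_nonneg _) (fun n => ?_) h
  rw [show (u n : ∀ _ : ℕ, H) k - (w : ∀ _ : ℕ, H) k = ((u n - w : ellTwo H) : ∀ _ : ℕ, H) k
    from by rw [lp.coeFn_sub]; rfl]
  exact lp.norm_apply_le_norm (by norm_num) (u n - w) k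

lemma tendsto_apply {Q : ℕ → (ellTwo H →L[ℂ] ellTwo H)} {P : ellTwo H →L[ℂ] ellTwo H}
    (h : Tendsto Q atTop (nhds P)) (v : ellTwo H) :
    Tendsto (fun n => Q n v) atTop (nhds (P v)) := by
  rw [tendsto_iff_norm_sub_tendsto_zero] at h ⊢
  have h2 : Tendsto (fun n => ‖Q n - P‖ * ‖v‖) atTop (nhds 0) := by
    have := h.mul_const ‖v‖; rwa [zero_mul] at this
  refine squeeze_zero (fun n => norm_nonneg _) (fun n => ?_) h2
  rw [show Q n v - P v = (Q n - P) v from rfl]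
  exact (Q n - P).le_opNorm v

end WAux

open Filter in
/-- the Wiener class `𝒜(ℓ²(H))` is dense in `𝒞(ℓ²(H))`; indeed, for
`A ∈ 𝒞(ℓ²(H))` the Poisson means `P_r(A)` lie in `𝒜(ℓ²(H))` and converge to `A` in
operator norm as `r → 1⁻`. -/
theorem wiener_dense_in_continuousClass (T : ℕ → ℕ → (H →L[ℂ] H))
    (A : ellTwo H →L[ℂ] ellTwo H) (hA : Represents T A) (hC : ContinuousClass A) :
    A ∈ closure {B : ellTwo H →L[ℂ] ellTwo H |
        ∃ S : ℕ → ℕ → (H →L[ℂ] H), WienerMat S ∧ Represents S B} ∧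
    (∀ r : ℝ, r ∈ Set.Ico (0 : ℝ) 1 → WienerMat (poissonMat T r)) ∧
    ∃ P : ℝ → (ellTwo H →L[ℂ] ellTwo H),
      (∀ r ∈ Set.Ico (0 : ℝ) 1, Represents (poissonMat T r) (P r)) ∧
      Filter.Tendsto P (nhdsWithin 1 (Set.Ico (0 : ℝ) 1)) (nhds A) := by
  classical
  have part2 : ∀ r : ℝ, r ∈ Set.Ico (0:ℝ) 1 → WienerMat (poissonMat T r) := fun r hr =>
    WAux.wiener_poisson (norm_nonneg A) (WAux.norm_entry_le hA) hr
  have hC' : A ∈ closure {B : ellTwo H →L[ℂ] ellTwo H | ∃ T, PolyMat T ∧ Represents T B} := hC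
  obtain ⟨Bs, hBmem, hBlim⟩ := mem_closure_iff_seq_limit.1 hC'
  simp only [Set.mem_setOf_eq] at hBmem
  choose Sm hSpoly hSrep using hBmem
  choose N hNband using fun n => (hSpoly n).1
  choose M0 hM0 using fun n => (hSpoly n).2
  set M : ℕ → ℝ := fun n => max (M0 n) 0 with hMdef
  have hMb : ∀ n k j, ‖Sm n k j‖ ≤ M n := fun n k j => le_trans (hM0 n k j) (le_max_left _ _)
  have hM0' : ∀ n, 0 ≤ M n := fun n => le_max_right _ _
  have key : ∀ r ∈ Set.Ico (0:ℝ) 1, ∃ P : ellTwo H →L[ℂ] ellTwo H,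
      Represents (poissonMat T r) P ∧
      ∀ n, ‖P - A‖ ≤ 2 * ‖Bs n - A‖ + (2 * (N n) + 1) * ((1 - r ^ (N n)) * (M n)) := by
    intro r hr
    have hQex : ∀ n, ∃ Q, Represents (poissonMat (Sm n) r) Q ∧
        ‖Q - Bs n‖ ≤ (2 * (N n) + 1) * ((1 - r ^ (N n)) * (M n)) := fun n =>
      WAux.poly_close (hNband n) (hMb n) (hM0' n) (hSrep n) hr
    choose Q hQrep hQclose using hQex
    have hQdiff : ∀ m n, ‖Q m - Q n‖ ≤ ‖Bs m - Bs n‖ := by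
      intro m n
      have h1 : Represents (fun k j => Sm m k j - Sm n k j) (Bs m - Bs n) :=
        WAux.represents_sub (hSrep m) (hSrep n)
      have heq : poissonMat (fun k j => Sm m k j - Sm n k j) r
          = fun k j => poissonMat (Sm m) r k j - poissonMat (Sm n) r k j := by
        funext k j; unfold poissonMat; rw [smul_sub]
      have h2 : Represents (poissonMat (fun k j => Sm m k j - Sm n k j) r) (Q m - Q n) := by
        rw [heq]; exact WAux.represents_sub (hQrep m) (hQrep n)
      exact WAux.contraction hr h1 h2
    have hQcauchy : CauchySeq Q := by
      rw [Metric.cauchySeq_iff]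
      have hBc : CauchySeq Bs := hBlim.cauchySeq
      rw [Metric.cauchySeq_iff] at hBc
      intro ε hε
      obtain ⟨K, hK⟩ := hBc ε hε
      refine ⟨K, fun m hm n hn => lt_of_le_of_lt ?_ (hK m hm n hn)⟩
      rw [dist_eq_norm, dist_eq_norm]
      exact hQdiff m n
    obtain ⟨P, hP⟩ := cauchySeq_tendsto_of_complete hQcauchy
    refine ⟨P, ?_, ?_⟩
    · intro j a k
      have h1 : Tendsto (fun n => ((Q n (lp.single 2 j a)) : ∀ _ : ℕ, H) k) atTop
          (nhds ((P (lp.single 2 j a) : ∀ _ : ℕ, H) k)) :=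
        WAux.tendsto_coord (WAux.tendsto_apply hP _) k
      have h2 : Tendsto (fun n => ((Bs n (lp.single 2 j a)) : ∀ _ : ℕ, H) k) atTop
          (nhds ((A (lp.single 2 j a) : ∀ _ : ℕ, H) k)) :=
        WAux.tendsto_coord (WAux.tendsto_apply hBlim _) k
      have h3 : ∀ n, ((Q n (lp.single 2 j a)) : ∀ _ : ℕ, H) k
          = (r ^ ((j:ℤ)-(k:ℤ)).natAbs) • (((Bs n (lp.single 2 j a)) : ∀ _ : ℕ, H) k) := by
        intro n
        rw [hQrep n j a k, hSrep n j a k]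
        rfl
      have h4 : Tendsto (fun n => (r ^ ((j:ℤ)-(k:ℤ)).natAbs) •
          (((Bs n (lp.single 2 j a)) : ∀ _ : ℕ, H) k)) atTop
          (nhds ((r ^ ((j:ℤ)-(k:ℤ)).natAbs) • ((A (lp.single 2 j a) : ∀ _ : ℕ, H) k))) :=
        h2.const_smul _
      rw [show (fun n => (r ^ ((j:ℤ)-(k:ℤ)).natAbs) •
          (((Bs n (lp.single 2 j a)) : ∀ _ : ℕ, H) k))
        = (fun n => ((Q n (lp.single 2 j a)) : ∀ _ : ℕ, H) k) from funext fun n => (h3 n).symm]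
        at h4
      have h5 := tendsto_nhds_unique h1 h4
      rw [h5, hA j a k]
      rfl
    · intro n
      have hPQ : ‖P - Q n‖ ≤ ‖Bs n - A‖ := by
        have l1 : Tendsto (fun m => ‖Q m - Q n‖) atTop (nhds ‖P - Q n‖) :=
          ((hP.sub_const (Q n)).norm)
        have l2 : Tendsto (fun m => ‖Bs m - Bs n‖) atTop (nhds ‖A - Bs n‖) :=
          ((hBlim.sub_const (Bs n)).norm)
        have := le_of_tendsto_of_tendsto' l1 l2 (fun m => hQdiff m n)
        rwa [norm_sub_rev A] at this
      have htot : ‖P - A‖ ≤ ‖P - Q n‖ + ‖Q n - Bs n‖ + ‖Bs n - A‖ := by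
        have h6 : P - A = (P - Q n) + ((Q n - Bs n) + (Bs n - A)) := by abel
        rw [h6]
        exact le_trans (norm_add_le _ _) (by linarith [norm_add_le (Q n - Bs n) (Bs n - A)])
      have := hQclose n
      linarith
  set Pf : ℝ → (ellTwo H →L[ℂ] ellTwo H) :=
    fun r => if h : r ∈ Set.Ico (0:ℝ) 1 then (key r h).choose else A with hPfdef
  have hPfrep : ∀ r ∈ Set.Ico (0:ℝ) 1, Represents (poissonMat T r) (Pf r) := by
    intro r hr
    simp only [hPfdef, dif_pos hr]
    exact (key r hr).choose_spec.1
  have hPfclose : ∀ r, ∀ hr : r ∈ Set.Ico (0:ℝ) 1, ∀ n,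
      ‖Pf r - A‖ ≤ 2 * ‖Bs n - A‖ + (2 * (N n) + 1) * ((1 - r ^ (N n)) * (M n)) := by
    intro r hr n
    simp only [hPfdef, dif_pos hr]
    exact (key r hr).choose_spec.2 n
  have hPtend : Tendsto Pf (nhdsWithin 1 (Set.Ico (0:ℝ) 1)) (nhds A) := by
    rw [Metric.tendsto_nhds]
    intro ε hε
    obtain ⟨n, hn⟩ : ∃ n, ‖Bs n - A‖ < ε / 8 := by
      rw [Metric.tendsto_atTop] at hBlim
      obtain ⟨K, hK⟩ := hBlim (ε / 8) (by positivity)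
      exact ⟨K, by rw [← dist_eq_norm]; exact hK K le_rfl⟩
    have hcont : Tendsto (fun s : ℝ => (2 * ((N n : ℝ)) + 1) * ((1 - s ^ (N n)) * (M n)))
        (nhdsWithin 1 (Set.Ico (0:ℝ) 1)) (nhds 0) := by
      have hc : Continuous fun s : ℝ => (2 * ((N n : ℝ)) + 1) * ((1 - s ^ (N n)) * (M n)) :=
        continuous_const.mul ((continuous_const.sub (continuous_pow _)).mul continuous_const)
      have h0 : (2 * ((N n : ℝ)) + 1) * ((1 - (1:ℝ) ^ (N n)) * (M n)) = 0 := by simp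
      have := (hc.tendsto 1).mono_left (nhdsWithin_le_nhds (s := Set.Ico (0:ℝ) 1))
      rwa [h0] at this
    have hev1 := hcont.eventually_lt_const (show (0:ℝ) < ε/2 by positivity)
    filter_upwards [hev1, self_mem_nhdsWithin] with r h1 h2
    rw [dist_eq_norm]
    have h3 := hPfclose r h2 n
    linarith
  have hne : (nhdsWithin (1:ℝ) (Set.Ico 0 1)).NeBot := by
    refine mem_closure_iff_nhdsWithin_neBot.1 ?_
    rw [closure_Ico (by norm_num : (0:ℝ) ≠ 1)]
    exact ⟨zero_le_one, le_refl 1⟩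
  refine ⟨mem_closure_of_tendsto hPtend ?_, part2, Pf, hPfrep, hPtend⟩
  filter_upwards [self_mem_nhdsWithin] with r hr
  exact ⟨poissonMat T r, part2 r hr, hPfrep r hr⟩
end
end
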